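/- arXiv:2111.07066 — 5 statements merged into one kernel-verified Lean document; each statement's English description precedes it below -/
import Mathlib

section
/- Let G be a compactly generated t.d.l.c. group acting on a leafless tree T. Then the action is arc-geometric if and only if G has compact open arc stabilisers and preserves no proper subtree of T. Moreover, if the action is arc-geometric, then there exists a connected locally finite graph Γ with vertex set the set AT of arcs of T, on which G acts geometrically with respect to the graph metric, such that for every edge {a,b} of Γ either b is the reversal of a or o(a) = o(b). -/
open scoped Pointwise

section Prelim

variable (G : Type*) [Group G] [TopologicalSpace G]

/-- A topological group is compactly generated if it is generated by a compact subset. -/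
def CompactlyGeneratedGrp : Prop := ∃ S : Set G, IsCompact S ∧ Subgroup.closure S = ⊤

/-- G has no nontrivial compact normal subgroup. -/
def NoCompactNormal : Prop :=
  ∀ N : Subgroup G, N.Normal → IsCompact (N : Set G) → N = ⊥

variable {G}

/-- (K,U) is a TMS pair of G. -/
def IsTMSPair (K U : Subgroup G) : Prop :=
  IsCompact (U : Set G) ∧ IsOpen (U : Set G) ∧
  (∀ N : Subgroup G, N.Normal → IsCompact (N : Set G) → ∀ h : G,
    IsCompact (closure {g : G | (∀ k ∈ K, g * k * g⁻¹ ∈ (U : Set G) * (N : Set G)) ∧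
      ¬ ∀ k ∈ K, g * k * g⁻¹ ∈ (fun x => h * x * h⁻¹) '' (U : Set G)})) ∧
  (¬ IsCompact (closure {g : G | ∀ k ∈ K, g * k * g⁻¹ ∈ (U : Set G)})) ∧
  (∀ N : Subgroup G, N.Normal → IsCompact (N : Set G) → N.relIndex K = 0)

/-- K is a TMS subgroup of G. -/
def IsTMSSubgroup (K : Subgroup G) : Prop := ∃ U : Subgroup G, IsTMSPair K U

/-- g belongs to the quasi-centre of G, i.e. has open centraliser. -/
def InQuasiCentre (g : G) : Prop :=
  IsOpen ((Subgroup.centralizer {g} : Subgroup G) : Set G)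

/-- A subgroup is locally normal if its normaliser is open. -/
def IsLocallyNormal (H : Subgroup G) : Prop := IsOpen ((Subgroup.normalizer (H : Set G) : Subgroup G) : Set G)

variable (G)

/-- G is [A]-semisimple: trivial quasi-centre and no nontrivial abelian locally normal
subgroup. -/
def ASemisimple : Prop :=
  (∀ g : G, InQuasiCentre g → g = 1) ∧
  (∀ H : Subgroup G, IsLocallyNormal H → (∀ a ∈ H, ∀ b ∈ H, a * b = b * a) → H = ⊥)

variable {G}

/-- A compact open subgroup U is of finite quotient type if for each n ≥ 1 it has only
finitely many open normal subgroups of index n. -/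
def FiniteQuotientType (U : Subgroup G) : Prop :=
  ∀ n : ℕ, 0 < n →
    {N : Subgroup G | N ≤ U ∧ IsOpen (N : Set G) ∧ (∀ u ∈ U, ∀ x ∈ N, u * x * u⁻¹ ∈ N) ∧
      N.relIndex U = n}.Finite

variable (G)

/-- G is locally of finite quotient type. -/
def LocallyFiniteQuotientType : Prop :=
  ∀ U : Subgroup G, IsCompact (U : Set G) → IsOpen (U : Set G) → FiniteQuotientType U

variable {G}

/-- K is a local direct factor of G: a closed subgroup such that some open subgroup of G
splits as a topological direct product K × L. -/
def LocalDirectFactor (K : Subgroup G) : Prop :=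
  IsClosed (K : Set G) ∧
  ∃ L O : Subgroup G, IsClosed (L : Set G) ∧ IsOpen (O : Set G) ∧ K ≤ O ∧ L ≤ O ∧
    K ⊓ L = ⊥ ∧ (∀ k ∈ K, ∀ l ∈ L, k * l = l * k) ∧ (K : Set G) * (L : Set G) = (O : Set G)

end Prelim
section Graphs

open Set

variable {V : Type*} {T : SimpleGraph V}

/-- A subset of the vertices of a graph is bounded if it has finite diameter. -/
def BddSet (T : SimpleGraph V) (A : Set V) : Prop :=
  ∃ n : ℕ, ∀ w ∈ A, ∀ w' ∈ A, T.dist w w' ≤ n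

/-- The set of points outside A at distance at most d from A. -/
def sepSet (T : SimpleGraph V) (A : Set V) (d : ℕ) : Set V :=
  {p | p ∉ A ∧ ∃ q ∈ A, T.dist p q ≤ d}

/-- A is almost separated if δ_d A is bounded for every d. -/
def AlmostSep (T : SimpleGraph V) (A : Set V) : Prop := ∀ d : ℕ, BddSet T (sepSet T A d)

/-- An end of a graph: an ultrafilter on the Boolean algebra of almost separated sets
vanishing on the ideal of bounded sets, encoded by the collection of almost separated
sets it contains. -/
structure GraphEnd {V : Type*} (T : SimpleGraph V) where
  sets : Set (Set V)
  almostSep' : ∀ A ∈ sets, AlmostSep T A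
  not_bdd' : ∀ A ∈ sets, ¬ BddSet T A
  inter_mem' : ∀ A ∈ sets, ∀ B ∈ sets, A ∩ B ∈ sets
  mono' : ∀ A ∈ sets, ∀ B : Set V, AlmostSep T B → BddSet T (A \ B) → B ∈ sets
  total' : ∀ A : Set V, AlmostSep T A → A ∈ sets ∨ Aᶜ ∈ sets

/-- The Stone topology on the space of ends of a graph. -/
instance : TopologicalSpace (GraphEnd T) :=
  TopologicalSpace.generateFrom {S | ∃ A : Set V, S = {ξ : GraphEnd T | A ∈ ξ.sets}}

section MapLemmas

variable {e : V ≃ V}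

lemma bddSet_image (hd : ∀ u v, T.dist (e u) (e v) = T.dist u v)
    {A : Set V} (h : BddSet T A) : BddSet T (e '' A) := by
  obtain ⟨n, hn⟩ := h
  refine ⟨n, ?_⟩
  rintro w ⟨a, ha, rfl⟩ w' ⟨b, hb, rfl⟩
  rw [hd]; exact hn a ha b hb

lemma dist_symm_eq (hd : ∀ u v, T.dist (e u) (e v) = T.dist u v) :
    ∀ u v, T.dist (e.symm u) (e.symm v) = T.dist u v := by
  intro u v
  rw [← hd (e.symm u) (e.symm v), Equiv.apply_symm_apply, Equiv.apply_symm_apply]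

lemma sepSet_image (hd : ∀ u v, T.dist (e u) (e v) = T.dist u v) (A : Set V) (d : ℕ) :
    sepSet T (e '' A) d = e '' sepSet T A d := by
  ext p
  constructor
  · rintro ⟨hp, q, ⟨a, ha, rfl⟩, hq⟩
    refine ⟨e.symm p, ⟨fun hmem => hp ⟨e.symm p, hmem, e.apply_symm_apply p⟩, a, ha, ?_⟩,
      e.apply_symm_apply p⟩
    rw [← hd (e.symm p) a, e.apply_symm_apply]
    exact hq
  · rintro ⟨p, ⟨hp, q, hq, hpq⟩, rfl⟩
    refine ⟨fun hmem => ?_, ⟨e q, ⟨q, hq, rfl⟩, by rw [hd]; exact hpq⟩⟩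
    obtain ⟨a, ha, hae⟩ := hmem
    exact hp (by rwa [← e.injective hae])

lemma almostSep_image (hd : ∀ u v, T.dist (e u) (e v) = T.dist u v)
    {A : Set V} (h : AlmostSep T A) : AlmostSep T (e '' A) := by
  intro d
  rw [sepSet_image hd]
  exact bddSet_image hd (h d)

/-- The image of an end under a distance-preserving bijection of a graph. -/
def GraphEnd.mapEquiv (e : V ≃ V) (hd : ∀ u v, T.dist (e u) (e v) = T.dist u v)
    (ξ : GraphEnd T) : GraphEnd T where
  sets := (Set.image e) '' ξ.sets
  almostSep' := by
    rintro A ⟨B, hB, rfl⟩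
    exact almostSep_image hd (ξ.almostSep' B hB)
  not_bdd' := by
    rintro A ⟨B, hB, rfl⟩ hbdd
    refine ξ.not_bdd' B hB ?_
    have h2 := bddSet_image (e := e.symm) (dist_symm_eq hd) hbdd
    rwa [Equiv.symm_image_image] at h2
  inter_mem' := by
    rintro A ⟨B1, h1, rfl⟩ A' ⟨B2, h2, rfl⟩
    exact ⟨B1 ∩ B2, ξ.inter_mem' B1 h1 B2 h2, Set.image_inter e.injective⟩
  mono' := by
    rintro A ⟨B, hB, rfl⟩ C hC hbdd
    refine ⟨e.symm '' C, ?_, by rw [Equiv.image_symm_image]⟩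
    refine ξ.mono' B hB _ (almostSep_image (dist_symm_eq hd) hC) ?_
    have heq : B \ e.symm '' C = e.symm '' (e '' B \ C) := by
      rw [Set.image_diff e.symm.injective, Equiv.symm_image_image]
    rw [heq]
    exact bddSet_image (dist_symm_eq hd) hbdd
  total' := by
    intro A hA
    rcases ξ.total' (e.symm '' A) (almostSep_image (dist_symm_eq hd) hA) with h | h
    · exact Or.inl ⟨e.symm '' A, h, by rw [Equiv.image_symm_image]⟩
    · refine Or.inr ⟨(e.symm '' A)ᶜ, h, ?_⟩
      rw [← Set.image_compl_eq e.symm.bijective, Equiv.image_symm_image]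

end MapLemmas

section Actions

variable {G : Type*} [Group G]

/-- An action of a group on a graph by automorphisms, given by a homomorphism to the
permutations of the vertices preserving adjacency. -/
def GraphAction (T : SimpleGraph V) (φ : G →* Equiv.Perm V) : Prop :=
  ∀ (g : G) (u v : V), T.Adj u v → T.Adj (φ g u) (φ g v)

variable {φ : G →* Equiv.Perm V}

lemma GraphAction.adj_iff (hφ : GraphAction T φ) (g : G) {u v : V} :
    T.Adj (φ g u) (φ g v) ↔ T.Adj u v := by
  refine ⟨fun h => ?_, hφ g u v⟩
  have h2 := hφ g⁻¹ _ _ h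
  rwa [map_inv, Equiv.Perm.inv_def, Equiv.symm_apply_apply, Equiv.symm_apply_apply] at h2

/-- The graph isomorphism induced by a group element. -/
def GraphAction.iso (hφ : GraphAction T φ) (g : G) : T ≃g T :=
  { toEquiv := φ g, map_rel_iff' := fun {_ _} => hφ.adj_iff g }

lemma iso_dist_le (f : T ≃g T) (u v : V) : T.dist (f u) (f v) ≤ T.dist u v := by
  by_cases h : T.Reachable u v
  · obtain ⟨p, hp⟩ := h.exists_walk_length_eq_dist
    calc T.dist (f u) (f v) ≤ (p.map f.toHom).length := SimpleGraph.dist_le _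
    _ = p.length := by simp
    _ = T.dist u v := hp
  · rw [SimpleGraph.dist_eq_zero_of_not_reachable h,
      SimpleGraph.dist_eq_zero_of_not_reachable (fun hr => h (SimpleGraph.Iso.reachable_iff.mp hr))]

lemma GraphAction.dist_eq (hφ : GraphAction T φ) (g : G) (u v : V) :
    T.dist (φ g u) (φ g v) = T.dist u v := by
  refine le_antisymm (iso_dist_le (hφ.iso g) u v) ?_
  have h2 := iso_dist_le (hφ.iso g⁻¹) (φ g u) (φ g v)
  have he : ∀ w, (hφ.iso g⁻¹) (φ g w) = w := by
    intro w
    show φ g⁻¹ (φ g w) = w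
    rw [map_inv, Equiv.Perm.inv_def, Equiv.symm_apply_apply]
  rwa [he u, he v] at h2

/-- The action of a group element on the space of ends of a graph. -/
def endAct (φ : G →* Equiv.Perm V) (hφ : GraphAction T φ) (g : G) (ξ : GraphEnd T) :
    GraphEnd T :=
  GraphEnd.mapEquiv (φ g) (hφ.dist_eq g) ξ

/-- The set of elements acting trivially on the space of ends. -/
def endKernel (φ : G →* Equiv.Perm V) (hφ : GraphAction T φ) : Set G :=
  {g : G | ∀ ξ : GraphEnd T, endAct φ hφ g ξ = ξ}

/-- The rigid stabiliser of a subset of the space of ends: the pointwise fixator of its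
complement. -/
def ristEnds (φ : G →* Equiv.Perm V) (hφ : GraphAction T φ) (Y : Set (GraphEnd T)) : Set G :=
  {g : G | ∀ ξ : GraphEnd T, ξ ∉ Y → endAct φ hφ g ξ = ξ}

/-- The action on the space of ends is faithful. -/
def FaithfulOnEnds (φ : G →* Equiv.Perm V) (hφ : GraphAction T φ) : Prop :=
  ∀ g : G, (∀ ξ : GraphEnd T, endAct φ hφ g ξ = ξ) → g = 1

/-- The action on the space of ends is nondiscretely micro-supported: the rigid stabiliser
of every nonempty open set acts nontrivially, and the kernel of its action is not open
in it. -/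
def NondiscMicroSupportedOnEnds [TopologicalSpace G] (φ : G →* Equiv.Perm V)
    (hφ : GraphAction T φ) : Prop :=
  ∀ Y : Set (GraphEnd T), IsOpen Y → Y.Nonempty →
    (∃ g ∈ ristEnds φ hφ Y, ∃ ξ : GraphEnd T, endAct φ hφ g ξ ≠ ξ) ∧
    ¬ ∃ W : Set G, IsOpen W ∧
        endKernel φ hφ ∩ ristEnds φ hφ Y = W ∩ ristEnds φ hφ Y

/-- The action on the space of ends is extremely proximal: every compact proper subspace
is compressible. -/
def ExtremelyProximalOnEnds (φ : G →* Equiv.Perm V) (hφ : GraphAction T φ) : Prop :=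
  ∀ Y : Set (GraphEnd T), IsCompact Y → Y ≠ Set.univ →
    ∀ Z : Set (GraphEnd T), IsOpen Z → Z.Nonempty →
      ∃ g : G, endAct φ hφ g '' Y ⊆ Z

/-- A Cayley--Abels graph for G: connected, locally finite, vertex-transitive with compact
open vertex stabilisers. -/
def IsCayleyAbels [TopologicalSpace G] (T : SimpleGraph V) (φ : G →* Equiv.Perm V) : Prop :=
  GraphAction T φ ∧ T.Connected ∧ (∀ v : V, (T.neighborSet v).Finite) ∧
  (∀ u v : V, ∃ g : G, φ g u = v) ∧
  (∀ v : V, IsCompact {g : G | φ g v = v} ∧ IsOpen {g : G | φ g v = v})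

end Actions

/-- The half-tree associated to an arc (ordered pair of adjacent vertices). -/
def halfTree (T : SimpleGraph V) (p : V × V) : Set V :=
  {v : V | T.dist p.2 v < T.dist p.1 v}

/-- A geometric end: an end containing an infinite strictly descending sequence of
half-trees. -/
def IsGeometricEnd {T : SimpleGraph V} (ξ : GraphEnd T) : Prop :=
  ∃ f : ℕ → V × V, (∀ n, T.Adj (f n).1 (f n).2) ∧
    (∀ n, halfTree T (f (n + 1)) ⊆ halfTree T (f n) ∧
      halfTree T (f (n + 1)) ≠ halfTree T (f n)) ∧
    (∀ n, halfTree T (f n) ∈ ξ.sets)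

/-- A tree is leafless if every vertex has degree at least two. -/
def Leafless (T : SimpleGraph V) : Prop := ∀ v : V, (T.neighborSet v).Nontrivial

/-- The vertex set of a subtree: a nonempty convex set of vertices. -/
def IsSubtreeSet (T : SimpleGraph V) (S : Set V) : Prop :=
  S.Nonempty ∧ ∀ u ∈ S, ∀ v ∈ S, ∀ w : V, T.dist u w + T.dist w v = T.dist u v → w ∈ S

section TopActions

variable {G : Type*} [Group G] [TopologicalSpace G] {φ : G →* Equiv.Perm V}

/-- The action preserves no proper subtree. -/
def NoInvariantProperSubtree (T : SimpleGraph V) (φ : G →* Equiv.Perm V) : Prop :=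
  ∀ S : Set V, IsSubtreeSet T S → (∀ (g : G), ∀ v ∈ S, φ g v ∈ S) → S = Set.univ

/-- Arc stabilisers are compact open. -/
def CompactOpenArcStabs (T : SimpleGraph V) (φ : G →* Equiv.Perm V) : Prop :=
  ∀ p : V × V, T.Adj p.1 p.2 →
    IsCompact {g : G | φ g p.1 = p.1 ∧ φ g p.2 = p.2} ∧
    IsOpen {g : G | φ g p.1 = p.1 ∧ φ g p.2 = p.2}

/-- G has finitely many orbits of arcs. -/
def FinManyArcOrbits (T : SimpleGraph V) (φ : G →* Equiv.Perm V) : Prop :=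
  ∃ s : Set (V × V), s.Finite ∧
    ∀ p : V × V, T.Adj p.1 p.2 → ∃ q ∈ s, ∃ g : G, φ g q.1 = p.1 ∧ φ g q.2 = p.2

/-- The action on a leafless tree is arc-geometric: compact open arc stabilisers and
finitely many orbits of arcs. -/
def ArcGeometric (T : SimpleGraph V) (φ : G →* Equiv.Perm V) : Prop :=
  CompactOpenArcStabs T φ ∧ FinManyArcOrbits T φ

end TopActions

/-- A scale group: a compactly generated t.d.l.c. group admitting a faithful
vertex-transitive action on a locally finite leafless tree with compact open vertex
stabilisers, fixing exactly one end. -/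
def IsScaleGroup (G : Type u) [Group G] [TopologicalSpace G] : Prop :=
  ∃ (V : Type u) (T : SimpleGraph V) (φ : G →* Equiv.Perm V) (hφ : GraphAction T φ),
    T.IsTree ∧ Leafless T ∧ (∀ v : V, (T.neighborSet v).Finite) ∧
    Function.Injective φ ∧ (∀ u v : V, ∃ g : G, φ g u = v) ∧
    (∀ v : V, IsCompact {g : G | φ g v = v} ∧ IsOpen {g : G | φ g v = v}) ∧
    ∃! ξ : GraphEnd T, IsGeometricEnd ξ ∧ ∀ g : G, endAct φ hφ g ξ = ξ

end Graphs

/-- The type of arcs of a graph. -/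
def ArcType {V : Type*} (T : SimpleGraph V) : Type _ := {p : V × V // T.Adj p.1 p.2}

/-- The induced action of a group element on the arcs of a graph. -/
def arcMap {V : Type*} {T : SimpleGraph V} {G : Type*} [Group G]
    {φ : G →* Equiv.Perm V} (hφ : GraphAction T φ) (g : G) (a : ArcType T) : ArcType T :=
  ⟨(φ g a.1.1, φ g a.1.2), hφ g a.1.1 a.1.2 a.2⟩

section TreeAux

set_option linter.unusedSectionVars false
set_option linter.unusedVariables false

open SimpleGraph

variable {V : Type*} [DecidableEq V] {T : SimpleGraph V}

lemma tree_path_eq (ht : T.IsTree) {u v : V} {p q : T.Walk u v} (hp : p.IsPath)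
    (hq : q.IsPath) : p = q :=
  (ht.existsUnique_path u v).unique hp hq

lemma tree_path_length (ht : T.IsTree) {u v : V} {p : T.Walk u v} (hp : p.IsPath) :
    p.length = T.dist u v := by
  obtain ⟨w, hw⟩ := ht.isConnected.exists_walk_length_eq_dist u v
  have h1 : p = w.bypass := tree_path_eq ht hp w.bypass_isPath
  refine le_antisymm ?_ (SimpleGraph.dist_le p)
  calc p.length = w.bypass.length := by rw [h1]
    _ ≤ w.length := w.length_bypass_le
    _ = T.dist u v := hw

lemma tree_exists_path (ht : T.IsTree) (u v : V) : ∃ p : T.Walk u v, p.IsPath := by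
  obtain ⟨w⟩ := ht.isConnected.preconnected u v
  exact ⟨w.bypass, w.bypass_isPath⟩

lemma tree_dist_split (ht : T.IsTree) {u v x : V} {p : T.Walk u v} (hp : p.IsPath)
    (hx : x ∈ p.support) : T.dist u x + T.dist x v = T.dist u v := by
  classical
  have h1 := tree_path_length ht (hp.takeUntil hx)
  have h2 := tree_path_length ht (hp.dropUntil hx)
  have h3 := congrArg SimpleGraph.Walk.length (p.take_spec hx)
  rw [SimpleGraph.Walk.length_append] at h3
  have h4 := tree_path_length ht hp
  omega

lemma tree_adj_dist (ht : T.IsTree) {u v : V} (h : T.Adj u v) (s : V) :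
    T.dist u s = T.dist v s + 1 ∨ T.dist v s = T.dist u s + 1 := by
  classical
  obtain ⟨p, hp⟩ := tree_exists_path ht v s
  by_cases hu : u ∈ p.support
  · right
    have h1 := tree_path_length ht (hp.takeUntil hu)
    have h2 := tree_path_length ht (hp.dropUntil hu)
    have h3 := congrArg SimpleGraph.Walk.length (p.take_spec hu)
    rw [SimpleGraph.Walk.length_append] at h3
    have h4 := tree_path_length ht hp
    have h5 : T.dist v u = 1 := SimpleGraph.dist_eq_one_iff_adj.mpr h.symm
    omega
  · left
    have hcons : (SimpleGraph.Walk.cons h p).IsPath := hp.cons hu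
    have h1 := tree_path_length ht hcons
    have h2 := tree_path_length ht hp
    rw [SimpleGraph.Walk.length_cons] at h1
    omega

lemma tree_append_isPath (ht : T.IsTree) {u w v : V} {p1 : T.Walk u w} {p2 : T.Walk w v}
    (hp1 : p1.IsPath) (hp2 : p2.IsPath)
    (hsum : T.dist u w + T.dist w v = T.dist u v) : (p1.append p2).IsPath := by
  rw [SimpleGraph.Walk.isPath_def, SimpleGraph.Walk.support_append]
  refine List.Nodup.append hp1.support_nodup (hp2.support_nodup.tail) ?_
  intro x hx1 hx2
  have hx2' : x ∈ p2.support := List.tail_subset _ hx2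
  have hxw : x ≠ w := by
    intro hxw
    subst hxw
    have := hp2.support_nodup
    rw [p2.support_eq_cons] at this
    exact (List.nodup_cons.mp this).1 hx2
  have e1 := tree_dist_split ht hp1 hx1
  have e2 := tree_dist_split ht hp2 hx2'
  have e3 : T.dist u v ≤ T.dist u x + T.dist x v :=
    ht.isConnected.dist_triangle
  have e4 : T.dist u w + T.dist w v = T.dist u v := hsum
  have e6 : T.dist x w = T.dist w x := SimpleGraph.dist_comm ..
  have e7 : T.dist x w = 0 := by omega
  exact hxw (ht.isConnected.dist_eq_zero_iff.mp e7)

lemma tree_mem_path_of_dist (ht : T.IsTree) {u v w : V} {p : T.Walk u v} (hp : p.IsPath)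
    (hsum : T.dist u w + T.dist w v = T.dist u v) : w ∈ p.support := by
  obtain ⟨p1, hp1⟩ := tree_exists_path ht u w
  obtain ⟨p2, hp2⟩ := tree_exists_path ht w v
  have hap : (p1.append p2).IsPath := tree_append_isPath ht hp1 hp2 hsum
  have heq : p = p1.append p2 := tree_path_eq ht hp hap
  rw [heq, SimpleGraph.Walk.mem_support_append_iff]
  exact Or.inl p1.end_mem_support

lemma tree_mem_walk_of_dist (ht : T.IsTree) {u v w : V} (wk : T.Walk u v)
    (hsum : T.dist u w + T.dist w v = T.dist u v) : w ∈ wk.support :=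
  wk.support_bypass_subset (tree_mem_path_of_dist ht wk.bypass_isPath hsum)

lemma tree_edge_mem_walk (ht : T.IsTree) {x y : V} (h : T.Adj x y) (w : T.Walk x y) :
    s(x, y) ∈ w.edges := by
  have hsingle : (SimpleGraph.Walk.cons h SimpleGraph.Walk.nil).IsPath := by
    simp [SimpleGraph.Walk.isPath_def, h.ne]
  have hb : w.bypass = SimpleGraph.Walk.cons h SimpleGraph.Walk.nil :=
    tree_path_eq ht w.bypass_isPath hsingle
  apply w.edges_bypass_subset
  rw [hb]
  simp

lemma tree_neighbor_toward_unique (ht : T.IsTree) {v x w1 w2 : V} (h1 : T.Adj v w1)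
    (h2 : T.Adj v w2) {p : T.Walk v x} (hp : p.IsPath) (hm1 : w1 ∈ p.support)
    (hm2 : w2 ∈ p.support) : w1 = w2 := by
  cases p with
  | nil =>
    rw [SimpleGraph.Walk.mem_support_nil_iff] at hm1 hm2
    rw [hm1, hm2]
  | @cons _ z _ hadj p' =>
    obtain ⟨hp', hv⟩ := (SimpleGraph.Walk.cons_isPath_iff _ _).mp hp
    have key : ∀ w : V, T.Adj v w → w ∈ (SimpleGraph.Walk.cons hadj p').support → w = z := by
      intro w hw hmem
      rw [SimpleGraph.Walk.support_cons] at hmem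
      rcases List.mem_cons.mp hmem with hwv | hwp'
      · exact absurd hwv.symm hw.ne
      · have d1 : T.dist z w + T.dist w x = T.dist z x := tree_dist_split ht hp' hwp'
        have hmem2 : w ∈ (SimpleGraph.Walk.cons hadj p').support := by
          rw [SimpleGraph.Walk.support_cons]
          exact List.mem_cons_of_mem _ hwp'
        have d2 : T.dist v w + T.dist w x = T.dist v x := tree_dist_split ht hp hmem2
        have d3 : T.dist v w = 1 := SimpleGraph.dist_eq_one_iff_adj.mpr hw
        have d4 : T.dist v x = (SimpleGraph.Walk.cons hadj p').length :=
          (tree_path_length ht hp).symm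
        have d5 : T.dist z x = p'.length := (tree_path_length ht hp').symm
        rw [SimpleGraph.Walk.length_cons] at d4
        have d6 : T.dist z w = 0 := by omega
        exact (ht.isConnected.dist_eq_zero_iff.mp d6).symm
    rw [key w1 h1 hm1, key w2 h2 hm2]

lemma exists_escaping_neighbor (ht : T.IsTree) (hleaf : Leafless T) {S : Set V}
    (hconv : IsSubtreeSet T S) {v : V} (hv : v ∉ S) :
    ∃ w, T.Adj v w ∧ ∀ s ∈ S, T.dist w s = T.dist v s + 1 := by
  obtain ⟨w1, hw1, w2, hw2, hne⟩ := hleaf v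
  rw [SimpleGraph.mem_neighborSet] at hw1 hw2
  by_contra hcon
  push_neg at hcon
  obtain ⟨s1, hs1, hd1⟩ := hcon w1 hw1
  obtain ⟨s2, hs2, hd2⟩ := hcon w2 hw2
  have hv1 : T.dist v s1 = T.dist w1 s1 + 1 := (tree_adj_dist ht hw1 s1).resolve_right hd1
  have hv2 : T.dist v s2 = T.dist w2 s2 + 1 := (tree_adj_dist ht hw2 s2).resolve_right hd2
  obtain ⟨q1, hq1⟩ := tree_exists_path ht w1 s1
  obtain ⟨q2, hq2⟩ := tree_exists_path ht w2 s2
  have hvq1 : v ∉ q1.support := by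
    intro hmem
    have := tree_dist_split ht hq1 hmem
    omega
  have hvq2 : v ∉ q2.support := by
    intro hmem
    have := tree_dist_split ht hq2 hmem
    omega
  have hp1 : (SimpleGraph.Walk.cons hw1 q1).IsPath := hq1.cons hvq1
  have hp2 : (SimpleGraph.Walk.cons hw2 q2).IsPath := hq2.cons hvq2
  have hdisj : ∀ x, x ∈ (SimpleGraph.Walk.cons hw1 q1).support →
      x ∈ (SimpleGraph.Walk.cons hw2 q2).support → x = v := by
    intro x hx1 hx2
    by_contra hxv
    rw [SimpleGraph.Walk.support_cons, List.mem_cons] at hx1 hx2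
    rcases hx1 with h | hxq1
    · exact hxv h
    rcases hx2 with h | hxq2
    · exact hxv h
    have hb1 : (SimpleGraph.Walk.cons hw1 (q1.takeUntil x hxq1)).IsPath := by
      refine (hq1.takeUntil hxq1).cons ?_
      intro hc; exact hvq1 (q1.support_takeUntil_subset hxq1 hc)
    have hb2 : (SimpleGraph.Walk.cons hw2 (q2.takeUntil x hxq2)).IsPath := by
      refine (hq2.takeUntil hxq2).cons ?_
      intro hc; exact hvq2 (q2.support_takeUntil_subset hxq2 hc)
    have heqp : SimpleGraph.Walk.cons hw1 (q1.takeUntil x hxq1)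
        = SimpleGraph.Walk.cons hw2 (q2.takeUntil x hxq2) := tree_path_eq ht hb1 hb2
    have hm1 : w1 ∈ (SimpleGraph.Walk.cons hw1 (q1.takeUntil x hxq1)).support := by
      rw [SimpleGraph.Walk.support_cons]
      exact List.mem_cons_of_mem _ (SimpleGraph.Walk.start_mem_support _)
    have hm2 : w2 ∈ (SimpleGraph.Walk.cons hw1 (q1.takeUntil x hxq1)).support := by
      rw [heqp, SimpleGraph.Walk.support_cons]
      exact List.mem_cons_of_mem _ (SimpleGraph.Walk.start_mem_support _)
    exact hne (tree_neighbor_toward_unique ht hw1 hw2 hb1 hm1 hm2)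
  have happ : ((SimpleGraph.Walk.cons hw1 q1).reverse.append
      (SimpleGraph.Walk.cons hw2 q2)).IsPath := by
    rw [SimpleGraph.Walk.isPath_def, SimpleGraph.Walk.support_append,
      SimpleGraph.Walk.support_reverse]
    refine List.Nodup.append (by rw [List.nodup_reverse]; exact hp1.support_nodup)
      hp2.support_nodup.tail ?_
    intro x hx1 hx2
    have hx1' : x ∈ (SimpleGraph.Walk.cons hw1 q1).support := List.mem_reverse.mp hx1
    have hx2' : x ∈ (SimpleGraph.Walk.cons hw2 q2).support := List.tail_subset _ hx2
    have hxv := hdisj x hx1' hx2'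
    subst hxv
    have hnodup := hp2.support_nodup
    rw [(SimpleGraph.Walk.cons hw2 q2).support_eq_cons] at hnodup
    exact (List.nodup_cons.mp hnodup).1 hx2
  have hvmem : v ∈ ((SimpleGraph.Walk.cons hw1 q1).reverse.append
      (SimpleGraph.Walk.cons hw2 q2)).support := by
    rw [SimpleGraph.Walk.mem_support_append_iff]
    left
    rw [SimpleGraph.Walk.support_reverse, List.mem_reverse]
    exact SimpleGraph.Walk.start_mem_support _
  have hsplit := tree_dist_split ht happ hvmem
  exact hv (hconv.2 s1 hs1 s2 hs2 v hsplit)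

end TreeAux

section ActionTopAux

set_option linter.unusedSectionVars false

variable {V : Type*} {T : SimpleGraph V}
variable {G : Type*} [Group G] [TopologicalSpace G] [IsTopologicalGroup G] [T2Space G]
variable {φ : G →* Equiv.Perm V}

lemma mov_eq_image (p q : V × V) {g₀ : G} (hg₀ : φ g₀ p.1 = q.1 ∧ φ g₀ p.2 = q.2) :
    {g : G | φ g p.1 = q.1 ∧ φ g p.2 = q.2}
      = (fun h => g₀ * h) '' {g : G | φ g p.1 = p.1 ∧ φ g p.2 = p.2} := by
  ext g
  simp only [Set.mem_image, Set.mem_setOf_eq]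
  constructor
  · rintro ⟨h1, h2⟩
    refine ⟨g₀⁻¹ * g, ⟨?_, ?_⟩, by group⟩
    · rw [map_mul, Equiv.Perm.mul_apply, h1, map_inv, ← hg₀.1, Equiv.Perm.inv_def, Equiv.symm_apply_apply]
    · rw [map_mul, Equiv.Perm.mul_apply, h2, map_inv, ← hg₀.2, Equiv.Perm.inv_def, Equiv.symm_apply_apply]
  · rintro ⟨h, ⟨h1, h2⟩, rfl⟩
    constructor
    · rw [map_mul, Equiv.Perm.mul_apply, h1, hg₀.1]
    · rw [map_mul, Equiv.Perm.mul_apply, h2, hg₀.2]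

lemma mov_isOpen {p : V × V} (hp : IsOpen {g : G | φ g p.1 = p.1 ∧ φ g p.2 = p.2})
    (q : V × V) : IsOpen {g : G | φ g p.1 = q.1 ∧ φ g p.2 = q.2} := by
  rcases Set.eq_empty_or_nonempty {g : G | φ g p.1 = q.1 ∧ φ g p.2 = q.2} with he | hne
  · rw [he]; exact isOpen_empty
  · obtain ⟨g₀, hg₀⟩ := hne
    rw [mov_eq_image p q hg₀]
    exact (Homeomorph.mulLeft g₀).isOpenMap _ hp

lemma mov_isCompact {p : V × V} (hp : IsCompact {g : G | φ g p.1 = p.1 ∧ φ g p.2 = p.2})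
    (q : V × V) : IsCompact {g : G | φ g p.1 = q.1 ∧ φ g p.2 = q.2} := by
  rcases Set.eq_empty_or_nonempty {g : G | φ g p.1 = q.1 ∧ φ g p.2 = q.2} with he | hne
  · rw [he]; exact isCompact_empty
  · obtain ⟨g₀, hg₀⟩ := hne
    rw [mov_eq_image p q hg₀]
    exact hp.image (continuous_mul_left g₀)

lemma orbit_pair_finite {K : Set G} (hK : IsCompact K) (d : V × V)
    (hd : IsOpen {g : G | φ g d.1 = d.1 ∧ φ g d.2 = d.2}) :
    ((fun g => (φ g d.1, φ g d.2)) '' K).Finite := by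
  have hcover : K ⊆ ⋃ b : V × V, {g : G | φ g d.1 = b.1 ∧ φ g d.2 = b.2} := by
    intro g _
    exact Set.mem_iUnion.mpr ⟨(φ g d.1, φ g d.2), rfl, rfl⟩
  obtain ⟨t, ht⟩ := hK.elim_finite_subcover _ (fun b => mov_isOpen hd b) hcover
  refine Set.Finite.subset t.finite_toSet ?_
  rintro _ ⟨g, hg, rfl⟩
  obtain ⟨b, hbt, hb⟩ := Set.mem_iUnion₂.mp (ht hg)
  have hbe : (φ g d.1, φ g d.2) = b := Prod.ext hb.1 hb.2
  show ((φ g) d.1, (φ g) d.2) ∈ ↑t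
  rw [hbe]
  exact hbt

lemma forward_subtree (ht : T.IsTree) (hleaf : Leafless T) (hφ : GraphAction T φ)
    (hAG : ArcGeometric T φ) : NoInvariantProperSubtree T φ := by
  classical
  intro S hSub hInv
  by_contra hne
  have hex : ∃ v0, v0 ∉ S := by
    by_contra hall
    push_neg at hall
    exact hne (Set.eq_univ_iff_forall.mpr hall)
  obtain ⟨v0, hv0⟩ := hex
  obtain ⟨srep, hsfin, hsrep⟩ := hAG.2
  obtain ⟨s0, hs0⟩ := hSub.1
  obtain ⟨N, hN⟩ := (hsfin.image (fun q => T.dist q.1 s0)).bddAbove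
  have grow : ∀ n : ℕ, ∃ x, x ∉ S ∧ ∀ s ∈ S, n ≤ T.dist x s := by
    intro n
    induction n with
    | zero => exact ⟨v0, hv0, fun s _ => Nat.zero_le _⟩
    | succ n ih =>
      obtain ⟨x, hxS, hx⟩ := ih
      obtain ⟨w, hadj, hw⟩ := exists_escaping_neighbor ht hleaf hSub hxS
      refine ⟨w, ?_, ?_⟩
      · intro hwS
        have h1 := hw w hwS
        rw [SimpleGraph.dist_self] at h1
        omega
      · intro s hs
        have h1 := hw s hs
        have h2 := hx s hs
        omega
  obtain ⟨x, hxS, hx⟩ := grow (N + 1)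
  obtain ⟨y, hy, _, _, _⟩ := hleaf x
  rw [SimpleGraph.mem_neighborSet] at hy
  obtain ⟨q, hq, g, hg1, hg2⟩ := hsrep (x, y) hy
  have hg1' : φ g q.1 = x := hg1
  have hmem : φ g s0 ∈ S := hInv g s0 hs0
  have h1 : N + 1 ≤ T.dist x (φ g s0) := hx _ hmem
  have h2 : T.dist q.1 s0 ≤ N := hN (Set.mem_image_of_mem _ hq)
  rw [← hg1', hφ.dist_eq g q.1 s0] at h1
  omega

end ActionTopAux

section GoodWalkAux

set_option linter.unusedSectionVars false

open SimpleGraph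

variable {V : Type*} {T : SimpleGraph V}
variable {G : Type*} [Group G]

lemma perm_comp (φ : G →* Equiv.Perm V) (a b : G) (z : V) : φ a (φ b z) = φ (a * b) z := by
  rw [map_mul, Equiv.Perm.mul_apply]

lemma perm_one (φ : G →* Equiv.Perm V) (z : V) : φ (1 : G) z = z := by
  rw [map_one, Equiv.Perm.coe_one, id_eq]

lemma mem_support_of_mem_edges' {x y : V} {w : T.Walk x y} {e : Sym2 V}
    (he : e ∈ w.edges) {z : V} (hz : z ∈ e) : z ∈ w.support := by
  induction e using Sym2.ind with
  | _ a b =>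
    rcases Sym2.mem_iff.mp hz with rfl | rfl
    · exact w.fst_mem_support_of_mem_edges he
    · exact w.snd_mem_support_of_mem_edges he

/-- A walk all of whose vertices and edges lie in translates of M. -/
def GoodWalk (φ : G →* Equiv.Perm V) (M : Set V) {T : SimpleGraph V} {x y : V}
    (w : T.Walk x y) : Prop :=
  (∀ z ∈ w.support, ∃ g : G, φ g z ∈ M) ∧ ∀ e ∈ w.edges, ∃ g : G, ∀ z ∈ e, φ g z ∈ M

variable {φ : G →* Equiv.Perm V} {M : Set V}

lemma gw_append {x y z : V} {w1 : T.Walk x y} {w2 : T.Walk y z} (h1 : GoodWalk φ M w1)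
    (h2 : GoodWalk φ M w2) : GoodWalk φ M (w1.append w2) := by
  constructor
  · intro u hu
    rcases (SimpleGraph.Walk.mem_support_append_iff _ _).mp hu with h | h
    · exact h1.1 u h
    · exact h2.1 u h
  · intro e he
    rw [SimpleGraph.Walk.edges_append] at he
    rcases List.mem_append.mp he with h | h
    · exact h1.2 e h
    · exact h2.2 e h

lemma gw_reverse {x y : V} {w : T.Walk x y} (h : GoodWalk φ M w) :
    GoodWalk φ M w.reverse := by
  constructor
  · intro u hu
    rw [SimpleGraph.Walk.support_reverse, List.mem_reverse] at hu
    exact h.1 u hu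
  · intro e he
    rw [SimpleGraph.Walk.edges_reverse, List.mem_reverse] at he
    exact h.2 e he

lemma gw_copy {x y x' y' : V} {w : T.Walk x y} (h : GoodWalk φ M w) (hx : x = x')
    (hy : y = y') : GoodWalk φ M (w.copy hx hy) := by
  constructor
  · intro u hu
    rw [SimpleGraph.Walk.support_copy] at hu
    exact h.1 u hu
  · intro e he
    rw [SimpleGraph.Walk.edges_copy] at he
    exact h.2 e he

lemma gw_map (hφ : GraphAction T φ) (g : G) {x y : V} {w : T.Walk x y}
    (h : GoodWalk φ M w) : GoodWalk φ M (w.map (hφ.iso g).toHom) := by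
  constructor
  · intro z hz
    rw [SimpleGraph.Walk.support_map] at hz
    obtain ⟨z', hz', rfl⟩ := List.mem_map.mp hz
    obtain ⟨g', hg'⟩ := h.1 z' hz'
    refine ⟨g' * g⁻¹, ?_⟩
    show φ (g' * g⁻¹) (φ g z') ∈ M
    rw [perm_comp, inv_mul_cancel_right]
    exact hg'
  · intro e he
    rw [SimpleGraph.Walk.edges_map] at he
    obtain ⟨e', he', rfl⟩ := List.mem_map.mp he
    obtain ⟨g', hg'⟩ := h.2 e' he'
    refine ⟨g' * g⁻¹, ?_⟩
    intro z hz
    obtain ⟨z', hz', rfl⟩ := Sym2.mem_map.mp hz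
    show φ (g' * g⁻¹) (φ g z') ∈ M
    rw [perm_comp, inv_mul_cancel_right]
    exact hg' z' hz'

end GoodWalkAux

section BackwardAux

set_option linter.unusedSectionVars false

open SimpleGraph

variable {V : Type*} [DecidableEq V] {T : SimpleGraph V}
variable {G : Type*} [Group G] [TopologicalSpace G] [IsTopologicalGroup G] [T2Space G]
variable {φ : G →* Equiv.Perm V}

lemma backward_finorbits (hcg : CompactlyGeneratedGrp G) (ht : T.IsTree)
    (hleaf : Leafless T) (hφ : GraphAction T φ) (hstab : CompactOpenArcStabs T φ)
    (hmin : NoInvariantProperSubtree T φ) : FinManyArcOrbits T φ := by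
  classical
  have hVne : Nonempty V := ht.isConnected.nonempty
  obtain ⟨u0⟩ := hVne
  obtain ⟨v0, hv0, _, _, _⟩ := hleaf u0
  rw [SimpleGraph.mem_neighborSet] at hv0
  have hUco := hstab (u0, v0) hv0
  set Uset : Set G := {g : G | φ g u0 = u0 ∧ φ g v0 = v0} with hUsetdef
  have hUcomp : IsCompact Uset := hUco.1
  have hUopen : IsOpen Uset := hUco.2
  have h1U : (1 : G) ∈ Uset := ⟨perm_one φ u0, perm_one φ v0⟩
  obtain ⟨S, hScomp, hSgen⟩ := hcg
  have hcover : S ⊆ ⋃ g : G, (fun h => g * h) '' Uset := by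
    intro s _
    exact Set.mem_iUnion.mpr ⟨s, 1, h1U, mul_one s⟩
  obtain ⟨F, hF⟩ := hScomp.elim_finite_subcover _
    (fun g => (Homeomorph.mulLeft g).isOpenMap _ hUopen) hcover
  have hgen2 : Subgroup.closure ((↑F : Set G) ∪ Uset) = ⊤ := by
    refine top_unique ?_
    rw [← hSgen]
    rw [Subgroup.closure_le]
    intro s hs
    obtain ⟨g, hgF, h, hhU, heq⟩ := Set.mem_iUnion₂.mp (hF hs)
    rw [← heq]
    exact Subgroup.mul_mem _ (Subgroup.subset_closure (Or.inl hgF))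
      (Subgroup.subset_closure (Or.inr hhU))
  set wfun : ∀ f : G, T.Walk u0 (φ f u0) :=
    fun f => (ht.isConnected.preconnected u0 (φ f u0)).some with hwfundef
  set M : Set V := {u0} ∪ ⋃ f ∈ (↑F : Set G), ((wfun f).support.toFinset : Set V)
    with hMdef
  have hMfin : M.Finite :=
    (Set.finite_singleton u0).union
      (F.finite_toSet.biUnion fun f _ => (Finset.finite_toSet _))
  have hu0M : u0 ∈ M := Or.inl rfl
  have hsuppM : ∀ f ∈ F, ∀ z ∈ (wfun f).support, z ∈ M := by
    intro f hf z hz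
    exact Or.inr (Set.mem_biUnion hf (List.mem_toFinset.mpr hz))
  -- good walks from u0 to each orbit point of u0
  have hgood_orbit : ∀ g : G, ∃ w : T.Walk u0 (φ g u0), GoodWalk φ M w := by
    intro g
    have hg : g ∈ Subgroup.closure ((↑F : Set G) ∪ Uset) := by rw [hgen2]; trivial
    refine Subgroup.closure_induction ?_ ?_ ?_ ?_ hg
    · rintro x (hx | hx)
      · refine ⟨wfun x, ?_, ?_⟩
        · intro z hz
          exact ⟨1, by rw [perm_one]; exact hsuppM x hx z hz⟩
        · intro e he
          refine ⟨1, fun z hz => ?_⟩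
          rw [perm_one]
          exact hsuppM x hx z (mem_support_of_mem_edges' he hz)
      · refine ⟨SimpleGraph.Walk.nil.copy rfl hx.1.symm, ?_, ?_⟩
        · intro z hz
          rw [SimpleGraph.Walk.support_copy, SimpleGraph.Walk.support_nil,
            List.mem_singleton] at hz
          exact ⟨1, by rw [hz, perm_one]; exact hu0M⟩
        · intro e he
          rw [SimpleGraph.Walk.edges_copy, SimpleGraph.Walk.edges_nil] at he
          exact absurd he List.not_mem_nil
    · refine ⟨SimpleGraph.Walk.nil.copy rfl (perm_one φ u0).symm, ?_, ?_⟩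
      · intro z hz
        rw [SimpleGraph.Walk.support_copy, SimpleGraph.Walk.support_nil,
          List.mem_singleton] at hz
        exact ⟨1, by rw [hz, perm_one]; exact hu0M⟩
      · intro e he
        rw [SimpleGraph.Walk.edges_copy, SimpleGraph.Walk.edges_nil] at he
        exact absurd he List.not_mem_nil
    · rintro x y hx hy ⟨wx, hwx⟩ ⟨wy, hwy⟩
      have heq : φ x (φ y u0) = φ (x * y) u0 := perm_comp φ x y u0
      refine ⟨wx.append ((wy.map (hφ.iso x).toHom).copy rfl heq), ?_⟩
      exact gw_append hwx (gw_copy (gw_map hφ x hwy) rfl heq)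
    · rintro x hx ⟨wx, hwx⟩
      have heq1 : φ x⁻¹ (φ x u0) = u0 := by
        rw [perm_comp, inv_mul_cancel, perm_one]
      refine ⟨((wx.reverse.map (hφ.iso x⁻¹).toHom).copy heq1 rfl), ?_⟩
      exact gw_copy (gw_map hφ x⁻¹ (gw_reverse hwx)) heq1 rfl
  -- good walks from any point of T0 to u0
  have hgood_from : ∀ p : V, (∃ g : G, φ g p ∈ M) →
      ∃ w : T.Walk p u0, GoodWalk φ M w := by
    rintro p ⟨g, hg⟩
    rcases hg with hgl | hgr
    · -- φ g p = u0, so p = φ g⁻¹ u0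
      have hp : p = φ g⁻¹ u0 := by
        rw [← hgl, perm_comp, inv_mul_cancel, perm_one]
      obtain ⟨w, hw⟩ := hgood_orbit g⁻¹
      exact ⟨w.reverse.copy hp.symm rfl, gw_copy (gw_reverse hw) hp.symm rfl⟩
    · obtain ⟨f, hf, hmem⟩ := Set.mem_iUnion₂.mp hgr
      have hmem' : φ g p ∈ (wfun f).support := List.mem_toFinset.mp hmem
      -- walk within M from φ g p to u0
      have hw1 : GoodWalk φ M ((wfun f).takeUntil (φ g p) hmem').reverse := by
        refine gw_reverse ⟨?_, ?_⟩
        · intro z hz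
          refine ⟨1, ?_⟩
          rw [perm_one]
          exact hsuppM f hf z ((wfun f).support_takeUntil_subset hmem' hz)
        · intro e he
          refine ⟨1, fun z hz => ?_⟩
          rw [perm_one]
          exact hsuppM f hf z ((wfun f).support_takeUntil_subset hmem'
            (mem_support_of_mem_edges' he hz))
      -- map it by g⁻¹ : from p to φ g⁻¹ u0
      have hp : φ g⁻¹ (φ g p) = p := by rw [perm_comp, inv_mul_cancel, perm_one]
      obtain ⟨w2, hw2⟩ := hgood_orbit g⁻¹
      refine ⟨((((wfun f).takeUntil (φ g p) hmem').reverse.map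
        (hφ.iso g⁻¹).toHom).copy hp rfl).append w2.reverse, ?_⟩
      exact gw_append (gw_copy (gw_map hφ g⁻¹ hw1) hp rfl) (gw_reverse hw2)
  -- T0 is an invariant subtree, hence everything
  have hT0sub : IsSubtreeSet T {z | ∃ g : G, φ g z ∈ M} := by
    constructor
    · exact ⟨u0, 1, by rw [perm_one]; exact hu0M⟩
    · intro p hp q hq w hw
      obtain ⟨wp, hwp⟩ := hgood_from p hp
      obtain ⟨wq, hwq⟩ := hgood_from q hq
      have hcomb := gw_append hwp (gw_reverse hwq)
      have hmem := tree_mem_walk_of_dist ht (wp.append wq.reverse) hw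
      exact hcomb.1 w hmem
  have hT0inv : ∀ (g : G), ∀ z ∈ {z | ∃ g : G, φ g z ∈ M}, φ g z ∈
      {z | ∃ g : G, φ g z ∈ M} := by
    rintro g z ⟨g', hg'⟩
    refine ⟨g' * g⁻¹, ?_⟩
    rw [perm_comp, inv_mul_cancel_right]
    exact hg'
  have hT0univ := hmin _ hT0sub hT0inv
  -- conclude: every arc is a translate of an arc inside M
  refine ⟨(M ×ˢ M : Set (V × V)), hMfin.prod hMfin, ?_⟩
  intro p hpadj
  have hp1 : p.1 ∈ {z | ∃ g : G, φ g z ∈ M} := by rw [hT0univ]; trivial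
  have hp2 : p.2 ∈ {z | ∃ g : G, φ g z ∈ M} := by rw [hT0univ]; trivial
  obtain ⟨w1, hw1⟩ := hgood_from p.1 hp1
  obtain ⟨w2, hw2⟩ := hgood_from p.2 hp2
  have hedge : s(p.1, p.2) ∈ (w1.append w2.reverse).edges :=
    tree_edge_mem_walk ht hpadj (w1.append w2.reverse)
  obtain ⟨g, hg⟩ := (gw_append hw1 (gw_reverse hw2)).2 _ hedge
  refine ⟨(φ g p.1, φ g p.2), Set.mem_prod.mpr
    ⟨hg p.1 (Sym2.mem_mk_left _ _), hg p.2 (Sym2.mem_mk_right _ _)⟩, g⁻¹, ?_, ?_⟩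
  · show φ g⁻¹ (φ g p.1) = p.1
    rw [perm_comp, inv_mul_cancel, perm_one]
  · show φ g⁻¹ (φ g p.2) = p.2
    rw [perm_comp, inv_mul_cancel, perm_one]

end BackwardAux

section GammaAux

set_option linter.unusedSectionVars false

open SimpleGraph

variable {V : Type*} {T : SimpleGraph V}
variable {G : Type*} [Group G]
variable {φ : G →* Equiv.Perm V}

lemma arcMap_comp (hφ : GraphAction T φ) (a b : G) (x : ArcType T) :
    arcMap hφ a (arcMap hφ b x) = arcMap hφ (a * b) x := by
  apply Subtype.ext
  exact Prod.ext (perm_comp φ a b x.1.1) (perm_comp φ a b x.1.2)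

lemma arcMap_one (hφ : GraphAction T φ) (x : ArcType T) : arcMap hφ 1 x = x := by
  apply Subtype.ext
  exact Prod.ext (perm_one φ x.1.1) (perm_one φ x.1.2)

lemma arcMap_injective (hφ : GraphAction T φ) (g : G) :
    Function.Injective (arcMap hφ g) := by
  intro a b h
  have h2 := congrArg (arcMap hφ g⁻¹) h
  rwa [arcMap_comp, arcMap_comp, inv_mul_cancel, arcMap_one, arcMap_one] at h2

/-- Pairs of arcs sharing the same origin. -/
def SameOriginPair (q : ArcType T × ArcType T) : Prop := q.1.1.1 = q.2.1.1

/-- The graph on arcs generated by reversals and the G-translates of a set of pairs. -/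
def chainGraph (hφ : GraphAction T φ) (Q : Set (ArcType T × ArcType T)) :
    SimpleGraph (ArcType T) where
  Adj a b := a ≠ b ∧ ((b.1.1 = a.1.2 ∧ b.1.2 = a.1.1) ∨
    (∃ g : G, ∃ q ∈ Q, a = arcMap hφ g q.1 ∧ b = arcMap hφ g q.2) ∨
    (∃ g : G, ∃ q ∈ Q, b = arcMap hφ g q.1 ∧ a = arcMap hφ g q.2))
  symm := ⟨by
    rintro a b ⟨hne, h⟩
    refine ⟨hne.symm, ?_⟩
    rcases h with ⟨h1, h2⟩ | h | h
    · exact Or.inl ⟨h2.symm, h1.symm⟩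
    · exact Or.inr (Or.inr h)
    · exact Or.inr (Or.inl h)⟩
  loopless := ⟨fun a h => h.1 rfl⟩

lemma chainGraph_adj_map (hφ : GraphAction T φ) {Q : Set (ArcType T × ArcType T)}
    (g : G) {a b : ArcType T} (h : (chainGraph hφ Q).Adj a b) :
    (chainGraph hφ Q).Adj (arcMap hφ g a) (arcMap hφ g b) := by
  obtain ⟨hne, h⟩ := h
  refine ⟨fun hc => hne (arcMap_injective hφ g hc), ?_⟩
  rcases h with ⟨h1, h2⟩ | ⟨g', q, hq, ha, hb⟩ | ⟨g', q, hq, hb, ha⟩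
  · refine Or.inl ⟨?_, ?_⟩
    · show φ g b.1.1 = φ g a.1.2
      rw [h1]
    · show φ g b.1.2 = φ g a.1.1
      rw [h2]
  · exact Or.inr (Or.inl ⟨g * g', q, hq, by rw [ha, arcMap_comp], by rw [hb, arcMap_comp]⟩)
  · exact Or.inr (Or.inr ⟨g * g', q, hq, by rw [hb, arcMap_comp], by rw [ha, arcMap_comp]⟩)

lemma chainGraph_mono (hφ : GraphAction T φ) {Q Q' : Set (ArcType T × ArcType T)}
    (h : Q ⊆ Q') : chainGraph hφ Q ≤ chainGraph hφ Q' := by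
  intro a b hab
  obtain ⟨hne, hc⟩ := hab
  refine ⟨hne, ?_⟩
  rcases hc with h1 | ⟨g, q, hq, hh⟩ | ⟨g, q, hq, hh⟩
  · exact Or.inl h1
  · exact Or.inr (Or.inl ⟨g, q, h hq, hh⟩)
  · exact Or.inr (Or.inr ⟨g, q, h hq, hh⟩)

/-- The graph homomorphism of `chainGraph` induced by a group element. -/
def chainHom (hφ : GraphAction T φ) (Q : Set (ArcType T × ArcType T)) (g : G) :
    chainGraph hφ Q →g chainGraph hφ Q :=
  ⟨arcMap hφ g, fun h => chainGraph_adj_map hφ g h⟩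

/-- The permutation action of G on arcs as a monoid homomorphism. -/
def arcPerm (hφ : GraphAction T φ) : G →* Equiv.Perm (ArcType T) where
  toFun g := ⟨arcMap hφ g, arcMap hφ g⁻¹,
    fun a => by rw [arcMap_comp, inv_mul_cancel, arcMap_one],
    fun a => by rw [arcMap_comp, mul_inv_cancel, arcMap_one]⟩
  map_one' := Equiv.ext fun a => arcMap_one hφ a
  map_mul' g h := Equiv.ext fun a => (arcMap_comp hφ g h a).symm

lemma exists_chain (hφ : GraphAction T φ) {p c : V} (w : T.Walk p c) :
    ∀ (x : ArcType T), x.1.1 = p → ∀ (y : ArcType T), y.1.1 = c →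
    ∃ Q : Set (ArcType T × ArcType T), Q.Finite ∧ (∀ q ∈ Q, SameOriginPair q) ∧
      (chainGraph hφ Q).Reachable x y := by
  induction w with
  | nil =>
    intro x hx y hy
    by_cases hxy : x = y
    · subst hxy
      exact ⟨∅, Set.finite_empty, by simp, SimpleGraph.Reachable.refl x⟩
    · refine ⟨{(x, y)}, Set.finite_singleton _, ?_, ?_⟩
      · rintro q hq
        rw [Set.mem_singleton_iff] at hq
        subst hq
        exact hx.trans hy.symm
      · refine SimpleGraph.Adj.reachable ⟨hxy, Or.inr (Or.inl ⟨1, (x, y), rfl,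
          (arcMap_one hφ x).symm, (arcMap_one hφ y).symm⟩)⟩
  | @cons p z c hadj w' ih =>
    intro x hx y hy
    have hm : T.Adj z x.1.1 := by rw [hx]; exact hadj.symm
    set m : ArcType T := ⟨(z, x.1.1), hm⟩ with hmdef
    obtain ⟨Q', hf', hso', hr'⟩ := ih m rfl y hy
    by_cases hxrev : x.1.2 = z
    · have hadj_xm : (chainGraph hφ Q').Adj x m := by
        refine ⟨?_, Or.inl ⟨?_, ?_⟩⟩
        · intro hc
          have h1 : x.1.1 = z := by rw [hc]
          exact hadj.ne (hx ▸ h1)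
        · show z = x.1.2
          exact hxrev.symm
        · show x.1.1 = x.1.1
          rfl
      exact ⟨Q', hf', hso', hadj_xm.reachable.trans hr'⟩
    · have hrevadj : T.Adj x.1.1 z := by rw [hx]; exact hadj
      set revm : ArcType T := ⟨(x.1.1, z), hrevadj⟩ with hrevmdef
      have hxne : x ≠ revm := by
        intro hc
        exact hxrev (by rw [hc])
      have hadj1 : (chainGraph hφ (insert (x, revm) Q')).Adj x revm :=
        ⟨hxne, Or.inr (Or.inl ⟨1, (x, revm), Set.mem_insert _ _,
          (arcMap_one hφ x).symm, (arcMap_one hφ revm).symm⟩)⟩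
      have hadj2 : (chainGraph hφ (insert (x, revm) Q')).Adj revm m := by
        refine ⟨?_, Or.inl ⟨rfl, rfl⟩⟩
        intro hc
        have h1 : x.1.1 = z := congrArg (fun t : ArcType T => t.1.1) hc
        exact hadj.ne (hx ▸ h1)
      refine ⟨insert (x, revm) Q', hf'.insert _, ?_, ?_⟩
      · rintro q hq
        rcases Set.mem_insert_iff.mp hq with rfl | hq'
        · show x.1.1 = x.1.1
          rfl
        · exact hso' q hq'
      · exact hadj1.reachable.trans (hadj2.reachable.trans
          (hr'.mono (chainGraph_mono hφ (Set.subset_insert _ _))))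

lemma walk_first_step {W : Type*} {Γ : SimpleGraph W} {c a : W} (w : Γ.Walk c a) {n : ℕ}
    (hl : w.length = n + 1) : ∃ z, Γ.Adj c z ∧ Γ.dist z a ≤ n := by
  cases w with
  | nil => simp at hl
  | cons h w' =>
    refine ⟨_, h, ?_⟩
    have hle := SimpleGraph.dist_le w'
    rw [SimpleGraph.Walk.length_cons] at hl
    omega

lemma ball_finite {W : Type*} {Γ : SimpleGraph W} (hconn : Γ.Connected)
    (hlf : ∀ a : W, (Γ.neighborSet a).Finite) (a : W) :
    ∀ n : ℕ, {b : W | Γ.dist a b ≤ n}.Finite := by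
  intro n
  induction n with
  | zero =>
    refine Set.Finite.subset (Set.finite_singleton a) ?_
    intro b hb
    simp only [Set.mem_setOf_eq, Nat.le_zero] at hb
    rw [Set.mem_singleton_iff]
    exact (hconn.dist_eq_zero_iff.mp hb).symm
  | succ n ih =>
    refine Set.Finite.subset (ih.union (Set.Finite.biUnion ih (fun b _ => hlf b))) ?_
    intro c hc
    simp only [Set.mem_setOf_eq] at hc
    rcases Nat.lt_or_ge (Γ.dist a c) (n + 1) with h | h
    · exact Or.inl (Nat.lt_succ_iff.mp h)
    · have hd : Γ.dist a c = n + 1 := le_antisymm hc h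
      obtain ⟨w, hw⟩ := hconn.exists_walk_length_eq_dist a c
      have hlrev : w.reverse.length = n + 1 := by
        rw [SimpleGraph.Walk.length_reverse, hw, hd]
      obtain ⟨z, hz1, hz2⟩ := walk_first_step w.reverse hlrev
      have hzball : z ∈ {b | Γ.dist a b ≤ n} := by
        show Γ.dist a z ≤ n
        rwa [SimpleGraph.dist_comm]
      exact Or.inr (Set.mem_biUnion hzball hz1.symm)

end GammaAux

/-- Lemma 3.2: an action of a compactly generated t.d.l.c. group on a leafless tree is
arc-geometric iff it has compact open arc stabilisers and preserves no proper subtree;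
moreover an arc-geometric action yields a G-metric graph structure on the set of arcs in
which adjacent arcs are either mutually inverse or share their origin. -/
theorem arc_geometric_characterisation {G : Type*} [Group G] [TopologicalSpace G]
    [IsTopologicalGroup G] [LocallyCompactSpace G] [TotallyDisconnectedSpace G] [T2Space G]
    (hcg : CompactlyGeneratedGrp G)
    {V : Type*} (T : SimpleGraph V) (htree : T.IsTree) (hleafless : Leafless T)
    (φ : G →* Equiv.Perm V) (hφ : GraphAction T φ) :
    (ArcGeometric T φ ↔ (CompactOpenArcStabs T φ ∧ NoInvariantProperSubtree T φ)) ∧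
    (ArcGeometric T φ →
      ∃ Γ : SimpleGraph (ArcType T),
        Γ.Connected ∧ (∀ a : ArcType T, (Γ.neighborSet a).Finite) ∧
        (∀ (g : G) (a b : ArcType T), Γ.Adj a b → Γ.Adj (arcMap hφ g a) (arcMap hφ g b)) ∧
        (∀ (a : ArcType T) (n : ℕ),
          {g : G | Γ.dist a (arcMap hφ g a) ≤ n} ∈ nhds (1 : G) ∧
          IsCompact (closure {g : G | Γ.dist a (arcMap hφ g a) ≤ n})) ∧
        (∃ n : ℕ, ∀ a b : ArcType T, ∃ g : G, Γ.dist a (arcMap hφ g b) ≤ n) ∧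
        (∀ a b : ArcType T, Γ.Adj a b →
          (b.1.1 = a.1.2 ∧ b.1.2 = a.1.1) ∨ a.1.1 = b.1.1)) := by
  classical
  constructor
  · constructor
    · intro hAG
      exact ⟨hAG.1, forward_subtree htree hleafless hφ hAG⟩
    · rintro ⟨hstab, hmin⟩
      exact ⟨hstab, backward_finorbits hcg htree hleafless hφ hstab hmin⟩
  · rintro ⟨hstab, hforb⟩
    obtain ⟨u0⟩ := htree.isConnected.nonempty
    obtain ⟨v0, hv0, _, _, _⟩ := hleafless u0
    rw [SimpleGraph.mem_neighborSet] at hv0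
    set a0 : ArcType T := ⟨(u0, v0), hv0⟩ with ha0def
    have hUco := hstab (u0, v0) hv0
    set Uset : Set G := {g : G | φ g u0 = u0 ∧ φ g v0 = v0} with hUdef
    obtain ⟨S, hScomp, hSgen⟩ := hcg
    have h1U : (1 : G) ∈ Uset := ⟨perm_one φ u0, perm_one φ v0⟩
    have hcover : S ⊆ ⋃ g : G, (fun h => g * h) '' Uset := fun s _ =>
      Set.mem_iUnion.mpr ⟨s, 1, h1U, mul_one s⟩
    obtain ⟨F, hF⟩ := hScomp.elim_finite_subcover _
      (fun g => (Homeomorph.mulLeft g).isOpenMap _ hUco.2) hcover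
    have hgen2 : Subgroup.closure ((↑F : Set G) ∪ Uset) = ⊤ := by
      refine top_unique ?_
      rw [← hSgen, Subgroup.closure_le]
      intro s hs
      obtain ⟨g, hgF, h, hhU, heq⟩ := Set.mem_iUnion₂.mp (hF hs)
      rw [← heq]
      exact Subgroup.mul_mem _ (Subgroup.subset_closure (Or.inl hgF))
        (Subgroup.subset_closure (Or.inr hhU))
    -- orbit representatives as arcs
    obtain ⟨srep, hsfin, hsrep⟩ := hforb
    set A : Set (ArcType T) := {r : ArcType T | r.1 ∈ srep} with hAdef
    have hAfin : A.Finite :=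
      Set.Finite.preimage Subtype.val_injective.injOn hsfin
    have hrep_arc : ∀ x : ArcType T, ∃ r ∈ A, ∃ g : G, arcMap hφ g r = x := by
      intro x
      obtain ⟨q, hq, g, h1, h2⟩ := hsrep x.1 x.2
      have hqadj : T.Adj q.1 q.2 := by
        have hx2 : T.Adj x.1.1 x.1.2 := x.2
        rw [← h1, ← h2] at hx2
        exact (hφ.adj_iff g).mp hx2
      refine ⟨⟨q, hqadj⟩, hq, g, ?_⟩
      exact Subtype.ext (Prod.ext h1 h2)
    -- chains between arbitrary arcs
    have hchain : ∀ xy : ArcType T × ArcType T,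
        ∃ Q : Set (ArcType T × ArcType T), Q.Finite ∧
        (∀ q ∈ Q, SameOriginPair q) ∧ (chainGraph hφ Q).Reachable xy.1 xy.2 := by
      intro xy
      obtain ⟨w⟩ := htree.isConnected.preconnected xy.1.1.1 xy.2.1.1
      exact exists_chain hφ w xy.1 rfl xy.2 rfl
    choose Qf hQf1 hQf2 hQf3 using hchain
    set Q0 : Set (ArcType T × ArcType T) :=
      (⋃ r ∈ A, Qf (a0, r)) ∪ ⋃ f ∈ (↑F : Set G), Qf (a0, arcMap hφ f a0) with hQ0def
    have hQ0fin : Q0.Finite := (hAfin.biUnion (fun r _ => hQf1 _)).union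
      (F.finite_toSet.biUnion (fun f _ => hQf1 _))
    have hQ0so : ∀ q ∈ Q0, SameOriginPair q := by
      rintro q (hq | hq)
      · obtain ⟨r, hr, hqr⟩ := Set.mem_iUnion₂.mp hq
        exact hQf2 _ q hqr
      · obtain ⟨f, hf, hqf⟩ := Set.mem_iUnion₂.mp hq
        exact hQf2 _ q hqf
    set Γ : SimpleGraph (ArcType T) := chainGraph hφ Q0 with hΓdef
    have hsubA : ∀ r ∈ A, Qf (a0, r) ⊆ Q0 := by
      intro r hr q hq
      exact Set.mem_union_left _ (Set.mem_biUnion hr hq)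
    have hsubF : ∀ f ∈ F, Qf (a0, arcMap hφ f a0) ⊆ Q0 := by
      intro f hf q hq
      exact Set.mem_union_right _ (Set.mem_biUnion hf hq)
    -- connectivity
    have hreach_orbit : ∀ g : G, Γ.Reachable a0 (arcMap hφ g a0) := by
      intro g
      have hg : g ∈ Subgroup.closure ((↑F : Set G) ∪ Uset) := by rw [hgen2]; trivial
      refine Subgroup.closure_induction ?_ ?_ ?_ ?_ hg
      · rintro x (hx | hx)
        · exact (hQf3 (a0, arcMap hφ x a0)).mono (chainGraph_mono hφ (hsubF x hx))
        · have hfix : arcMap hφ x a0 = a0 := Subtype.ext (Prod.ext hx.1 hx.2)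
          rw [hfix]
      · rw [arcMap_one hφ]
      · intro x y hx hy rx ry
        have rymap : Γ.Reachable (arcMap hφ x a0) (arcMap hφ x (arcMap hφ y a0)) :=
          ry.map (chainHom hφ Q0 x)
        rw [arcMap_comp] at rymap
        exact rx.trans rymap
      · intro x hx rx
        have rmap : Γ.Reachable (arcMap hφ x⁻¹ a0) (arcMap hφ x⁻¹ (arcMap hφ x a0)) :=
          rx.map (chainHom hφ Q0 x⁻¹)
        rw [arcMap_comp, inv_mul_cancel, arcMap_one] at rmap
        exact rmap.symm
    have hconnΓ : Γ.Connected := by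
      rw [SimpleGraph.connected_iff_exists_forall_reachable]
      refine ⟨a0, fun x => ?_⟩
      obtain ⟨r, hr, g, hrg⟩ := hrep_arc x
      have h1 : Γ.Reachable a0 r := (hQf3 (a0, r)).mono (chainGraph_mono hφ (hsubA r hr))
      have h2 : Γ.Reachable (arcMap hφ g a0) (arcMap hφ g r) := h1.map (chainHom hφ Q0 g)
      rw [hrg] at h2
      exact (hreach_orbit g).trans h2
    -- Γ action and distance invariance
    have hψact : GraphAction Γ (arcPerm hφ) := fun g a b h => chainGraph_adj_map hφ g h
    -- local finiteness
    have htarget_fin : ∀ c d x : ArcType T,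
        {b : ArcType T | ∃ g : G, arcMap hφ g c = x ∧ arcMap hφ g d = b}.Finite := by
      intro c d x
      rcases Set.eq_empty_or_nonempty {g : G | arcMap hφ g c = x} with he | ⟨g₀, hg₀⟩
      · refine Set.Finite.subset Set.finite_empty ?_
        rintro b ⟨g, hg1, _⟩
        exact absurd (Set.eq_empty_iff_forall_notMem.mp he g) (fun hcon => hcon hg1)
      · have hg₀' : arcMap hφ g₀ c = x := hg₀
        have hKcomp : IsCompact {g : G | φ g c.1.1 = c.1.1 ∧ φ g c.1.2 = c.1.2} :=
          (hstab c.1 c.2).1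
        have hdopen : IsOpen {g : G | φ g d.1.1 = d.1.1 ∧ φ g d.1.2 = d.1.2} :=
          (hstab d.1 d.2).2
        have horb := orbit_pair_finite hKcomp d.1 hdopen
        have hsub : Subtype.val ''
            {b : ArcType T | ∃ g : G, arcMap hφ g c = x ∧ arcMap hφ g d = b}
            ⊆ (fun pr : V × V => (φ g₀ pr.1, φ g₀ pr.2)) ''
              ((fun g => (φ g d.1.1, φ g d.1.2)) ''
                {g : G | φ g c.1.1 = c.1.1 ∧ φ g c.1.2 = c.1.2}) := by
          rintro _ ⟨b, ⟨g, hg1, hg2⟩, rfl⟩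
          have hKmem : arcMap hφ (g₀⁻¹ * g) c = c := by
            rw [← arcMap_comp, hg1, ← hg₀', arcMap_comp, inv_mul_cancel, arcMap_one]
          refine ⟨(φ (g₀⁻¹ * g) d.1.1, φ (g₀⁻¹ * g) d.1.2),
            ⟨g₀⁻¹ * g, ⟨?_, ?_⟩, rfl⟩, ?_⟩
          · exact congrArg (fun t : ArcType T => t.1.1) hKmem
          · exact congrArg (fun t : ArcType T => t.1.2) hKmem
          · rw [← hg2]
            show (φ g₀ (φ (g₀⁻¹ * g) d.1.1), φ g₀ (φ (g₀⁻¹ * g) d.1.2))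
              = (φ g d.1.1, φ g d.1.2)
            rw [perm_comp, perm_comp, mul_inv_cancel_left]
        have hfin2 : (Subtype.val ''
            {b : ArcType T | ∃ g : G, arcMap hφ g c = x ∧ arcMap hφ g d = b}).Finite :=
          Set.Finite.subset (horb.image _) hsub
        exact Set.Finite.of_finite_image hfin2
          Subtype.val_injective.injOn
    have hlf : ∀ a : ArcType T, (Γ.neighborSet a).Finite := by
      intro a
      have hsubnb : Γ.neighborSet a ⊆ {b : ArcType T | b.1 = (a.1.2, a.1.1)} ∪
          ⋃ q ∈ Q0, ({b | ∃ g : G, arcMap hφ g q.1 = a ∧ arcMap hφ g q.2 = b} ∪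
            {b | ∃ g : G, arcMap hφ g q.2 = a ∧ arcMap hφ g q.1 = b}) := by
        intro b hb
        obtain ⟨hne, hcase⟩ := hb
        rcases hcase with h | ⟨g, q, hq, ha, hb'⟩ | ⟨g, q, hq, hb', ha⟩
        · exact Or.inl (Prod.ext h.1 h.2)
        · exact Or.inr (Set.mem_biUnion hq (Or.inl ⟨g, ha.symm, hb'.symm⟩))
        · exact Or.inr (Set.mem_biUnion hq (Or.inr ⟨g, ha.symm, hb'.symm⟩))
      refine Set.Finite.subset (Set.Finite.union ?_
        (hQ0fin.biUnion (fun q _ => Set.Finite.union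
          (htarget_fin q.1 q.2 a) (htarget_fin q.2 q.1 a)))) hsubnb
      refine Set.Finite.of_finite_image
        (Set.Finite.subset (Set.finite_singleton (a.1.2, a.1.1)) ?_)
        Subtype.val_injective.injOn
      rintro _ ⟨b, hb, rfl⟩
      exact hb
    -- compactness of move sets
    have hmove_cpt : ∀ a b : ArcType T, IsCompact {g : G | arcMap hφ g a = b} := by
      intro a b
      have heq : {g : G | arcMap hφ g a = b}
          = {g : G | φ g a.1.1 = b.1.1 ∧ φ g a.1.2 = b.1.2} := by
        ext g
        constructor
        · intro hg
          exact ⟨congrArg (fun t : ArcType T => t.1.1) hg,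
            congrArg (fun t : ArcType T => t.1.2) hg⟩
        · rintro ⟨h1, h2⟩
          exact Subtype.ext (Prod.ext h1 h2)
      rw [heq]
      exact mov_isCompact (hstab a.1 a.2).1 b.1
    have hstabΓ : ∀ a : ArcType T, IsOpen {g : G | arcMap hφ g a = a} := by
      intro a
      have heq : {g : G | arcMap hφ g a = a}
          = {g : G | φ g a.1.1 = a.1.1 ∧ φ g a.1.2 = a.1.2} := by
        ext g
        constructor
        · intro hg
          exact ⟨congrArg (fun t : ArcType T => t.1.1) hg,
            congrArg (fun t : ArcType T => t.1.2) hg⟩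
        · rintro ⟨h1, h2⟩
          exact Subtype.ext (Prod.ext h1 h2)
      rw [heq]
      exact (hstab a.1 a.2).2
    -- assemble
    refine ⟨Γ, hconnΓ, hlf, fun g a b hab => chainGraph_adj_map hφ g hab, ?_, ?_, ?_⟩
    · intro a n
      constructor
      · refine Filter.mem_of_superset ((hstabΓ a).mem_nhds (arcMap_one hφ a)) ?_
        intro g hg
        show Γ.dist a (arcMap hφ g a) ≤ n
        rw [show arcMap hφ g a = a from hg, SimpleGraph.dist_self]
        exact Nat.zero_le n
      · have hsub : {g : G | Γ.dist a (arcMap hφ g a) ≤ n} ⊆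
            ⋃ b ∈ {b : ArcType T | Γ.dist a b ≤ n}, {g : G | arcMap hφ g a = b} := by
          intro g hg
          exact Set.mem_biUnion hg rfl
        have hcpt : IsCompact (⋃ b ∈ {b : ArcType T | Γ.dist a b ≤ n},
            {g : G | arcMap hφ g a = b}) :=
          (ball_finite hconnΓ hlf a n).isCompact_biUnion (fun b _ => hmove_cpt a b)
        exact IsCompact.of_isClosed_subset hcpt isClosed_closure
          (closure_minimal hsub hcpt.isClosed)
    · obtain ⟨n, hn⟩ := ((hAfin.prod hAfin).image (fun pr => Γ.dist pr.1 pr.2)).bddAbove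
      refine ⟨n, fun a b => ?_⟩
      obtain ⟨r, hr, g, hrg⟩ := hrep_arc a
      obtain ⟨r', hr', g', hrg'⟩ := hrep_arc b
      refine ⟨g * g'⁻¹, ?_⟩
      have h1 : arcMap hφ (g * g'⁻¹) b = arcMap hφ g r' := by
        rw [← hrg', arcMap_comp, inv_mul_cancel_right]
      have h2 : Γ.dist (arcMap hφ g r) (arcMap hφ g r') = Γ.dist r r' :=
        hψact.dist_eq g r r'
      rw [h1, ← hrg, h2]
      have hmemprod : (r, r') ∈ A ×ˢ A := Set.mem_prod.mpr ⟨hr, hr'⟩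
      exact hn (Set.mem_image_of_mem (fun pr => Γ.dist pr.1 pr.2) hmemprod)
    · intro a b hab
      obtain ⟨hne, hcase⟩ := hab
      rcases hcase with h | ⟨g, q, hq, ha, hb⟩ | ⟨g, q, hq, hb, ha⟩
      · exact Or.inl h
      · right
        have hso := hQ0so q hq
        rw [ha, hb]
        show φ g q.1.1.1 = φ g q.2.1.1
        rw [hso]
      · right
        have hso := hQ0so q hq
        rw [ha, hb]
        show φ g q.2.1.1 = φ g q.1.1.1
        rw [hso]
end

section
/- Let G be a t.d.l.c. group and suppose that some compact open subgroup U of G is of finite quotient type. Then for every compact open subgroup V of G and every natural number n, there are only finitely many open subgroups of V of index n. In particular, G is locally of finite quotient type. -/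
open scoped Pointwise

section MyAux
variable {G : Type*} [Group G] [TopologicalSpace G] [IsTopologicalGroup G]

lemma myaux_relIndex_ne_zero {A B : Subgroup G} (hA : IsOpen (A : Set G))
    (hBc : IsCompact (B : Set G)) : A.relIndex B ≠ 0 := by
  haveI : CompactSpace B := isCompact_iff_compactSpace.mp hBc
  haveI : Finite (B ⧸ A.subgroupOf B) :=
    Subgroup.quotient_finite_of_isOpen _ (Subgroup.subgroupOf_isOpen B A hA)
  exact Nat.card_ne_zero.mpr ⟨inferInstance, inferInstance⟩

end MyAux

lemma myaux_sub {H : Type*} [Group H] {K A B : Subgroup H} (hKB : K ≤ B)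
    (h : (QuotientGroup.mk '' (A : Set H) : Set (H ⧸ K)) ⊆ QuotientGroup.mk '' (B : Set H)) :
    A ≤ B := by
  intro x hx
  obtain ⟨y, hy, hxy⟩ := h ⟨x, hx, rfl⟩
  have hk : y⁻¹ * x ∈ K := QuotientGroup.eq.mp hxy
  have := B.mul_mem hy (hKB hk)
  simpa using this

lemma myaux_interm {H : Type*} [Group H] {K V : Subgroup H} (h : K.relIndex V ≠ 0) :
    {W : Subgroup H | K ≤ W ∧ W ≤ V}.Finite := by
  haveI : Finite (V ⧸ K.subgroupOf V) := Nat.finite_of_card_ne_zero h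
  rw [← Set.finite_coe_iff]
  refine Finite.of_injective
    (fun W : {W : Subgroup H | K ≤ W ∧ W ≤ V} =>
      (QuotientGroup.mk '' ((W.1.subgroupOf V : Subgroup V) : Set V) :
        Set (V ⧸ K.subgroupOf V))) ?_
  rintro ⟨W₁, hK₁, hV₁⟩ ⟨W₂, hK₂, hV₂⟩ h12
  simp only [Set.mem_setOf_eq] at *
  have hle : ∀ {A B : Subgroup H}, K ≤ B →
      (QuotientGroup.mk '' ((A.subgroupOf V : Subgroup V) : Set V) :
        Set (V ⧸ K.subgroupOf V)) ⊆ QuotientGroup.mk '' ((B.subgroupOf V : Subgroup V) : Set V) →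
      A.subgroupOf V ≤ B.subgroupOf V := by
    intro A B hKB hsub
    exact myaux_sub (Subgroup.comap_mono hKB) hsub
  have heq : W₁.subgroupOf V = W₂.subgroupOf V :=
    le_antisymm (hle hK₂ (le_of_eq h12)) (hle hK₁ (le_of_eq h12.symm))
  have m1 := Subgroup.subgroupOf_map_subtype W₁ V
  rw [heq, Subgroup.subgroupOf_map_subtype, inf_of_le_left hV₁, inf_of_le_left hV₂] at m1
  exact Subtype.ext m1.symm

lemma myaux_core {G : Type*} [Group G] [TopologicalSpace G] [IsTopologicalGroup G]
    {U W : Subgroup G} (hUc : IsCompact (U : Set G)) (hUo : IsOpen (U : Set G))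
    (hWU : W ≤ U) (hWo : IsOpen (W : Set G)) {n : ℕ} (hn : W.relIndex U = n) (hn0 : 0 < n) :
    ∃ N : Subgroup G, N ≤ W ∧ N ≤ U ∧ IsOpen (N : Set G) ∧
      (∀ u ∈ U, ∀ x ∈ N, u * x * u⁻¹ ∈ N) ∧ N.relIndex U ≠ 0 ∧
      N.relIndex U ≤ Nat.factorial n := by
  haveI : CompactSpace U := isCompact_iff_compactSpace.mp hUc
  set W' := W.subgroupOf U with hW'def
  have hW'o : IsOpen (W' : Set U) := Subgroup.subgroupOf_isOpen U W hWo
  have hW'c : IsClosed (W' : Set U) := Subgroup.isClosed_of_isOpen _ hW'o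
  have hW'idx : W'.index = n := hn
  haveI : W'.FiniteIndex := ⟨by omega⟩
  set N' := W'.normalCore with hN'def
  haveI : N'.FiniteIndex := Subgroup.finiteIndex_normalCore W'
  have hN'c : IsClosed (N' : Set U) := Subgroup.normalCore_isClosed W' hW'c
  have hN'o : IsOpen (N' : Set U) := Subgroup.isOpen_of_isClosed_of_finiteIndex N' hN'c
  haveI : Finite (↥U ⧸ W') := Nat.finite_of_card_ne_zero (by
    show W'.index ≠ 0; omega)
  haveI := Fintype.ofFinite (↥U ⧸ W')
  classical
  have hdvd : N'.index ∣ Nat.factorial n := by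
    rw [hN'def, Subgroup.normalCore_eq_ker, Subgroup.index_ker]
    have h1 : Nat.card (MulAction.toPermHom ↥U (↥U ⧸ W')).range ∣
        Nat.card (Equiv.Perm (↥U ⧸ W')) := Subgroup.card_subgroup_dvd_card _
    have h2 : Nat.card (Equiv.Perm (↥U ⧸ W')) = Nat.factorial n := by
      have hcard : Nat.card (↥U ⧸ W') = n := hW'idx
      rw [Nat.card_eq_fintype_card, Fintype.card_perm, ← Nat.card_eq_fintype_card, hcard]
    rwa [h2] at h1
  have hrel : (N'.map U.subtype).relIndex U = N'.index := by
    rw [Subgroup.relIndex]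
    congr 1
    exact Subgroup.comap_map_eq_self_of_injective U.subtype_injective N'
  refine ⟨N'.map U.subtype, ?_, ?_, ?_, ?_, ?_, ?_⟩
  · calc N'.map U.subtype ≤ W'.map U.subtype := Subgroup.map_mono (Subgroup.normalCore_le W')
      _ = W ⊓ U := Subgroup.subgroupOf_map_subtype W U
      _ ≤ W := inf_le_left
  · exact Subgroup.map_subtype_le N'
  · have : ((N'.map U.subtype : Subgroup G) : Set G) = Subtype.val '' (N' : Set U) := rfl
    rw [this]
    exact hUo.isOpenMap_subtype_val _ hN'o
  · rintro u hu x hx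
    rw [Subgroup.mem_map] at hx ⊢
    obtain ⟨y, hy, rfl⟩ := hx
    exact ⟨⟨u, hu⟩ * y * ⟨u, hu⟩⁻¹, Subgroup.Normal.conj_mem inferInstance y hy ⟨u, hu⟩, rfl⟩
  · rw [hrel]; exact Subgroup.FiniteIndex.index_ne_zero
  · rw [hrel]; exact Nat.le_of_dvd (Nat.factorial_pos n) hdvd

lemma myaux_stepU {G : Type*} [Group G] [TopologicalSpace G] [IsTopologicalGroup G]
    {U : Subgroup G} (hUc : IsCompact (U : Set G)) (hUo : IsOpen (U : Set G))
    (hU : FiniteQuotientType U) (n : ℕ) (hn : 0 < n) :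
    {W : Subgroup G | W ≤ U ∧ IsOpen (W : Set G) ∧ W.relIndex U = n}.Finite := by
  have hT : {N : Subgroup G | N ≤ U ∧ IsOpen (N : Set G) ∧
      (∀ u ∈ U, ∀ x ∈ N, u * x * u⁻¹ ∈ N) ∧ N.relIndex U ≠ 0 ∧
      N.relIndex U ≤ Nat.factorial n}.Finite := by
    have hsub : {N : Subgroup G | N ≤ U ∧ IsOpen (N : Set G) ∧
        (∀ u ∈ U, ∀ x ∈ N, u * x * u⁻¹ ∈ N) ∧ N.relIndex U ≠ 0 ∧
        N.relIndex U ≤ Nat.factorial n} ⊆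
        ⋃ m ∈ Finset.Icc 1 (Nat.factorial n),
          {N : Subgroup G | N ≤ U ∧ IsOpen (N : Set G) ∧
            (∀ u ∈ U, ∀ x ∈ N, u * x * u⁻¹ ∈ N) ∧ N.relIndex U = m} := by
      rintro N ⟨h1, h2, h3, h4, h5⟩
      exact Set.mem_biUnion (Finset.mem_Icc.mpr ⟨by omega, h5⟩) ⟨h1, h2, h3, rfl⟩
    exact Set.Finite.subset
      (Set.Finite.biUnion (Finset.Icc 1 (Nat.factorial n)).finite_toSet
        (fun m hm => hU m (by simp only [Finset.coe_Icc, Set.mem_Icc] at hm; omega))) hsub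
  refine Set.Finite.subset (Set.Finite.biUnion hT
    (fun N hN => myaux_interm hN.2.2.2.1)) ?_
  rintro W ⟨h1, h2, h3⟩
  obtain ⟨N, hNW, hNU, hNo, hconj, hne, hle⟩ := myaux_core hUc hUo h1 h2 h3 hn
  exact Set.mem_biUnion (⟨hNU, hNo, hconj, hne, hle⟩ :
    N ∈ {N : Subgroup G | N ≤ U ∧ IsOpen (N : Set G) ∧
      (∀ u ∈ U, ∀ x ∈ N, u * x * u⁻¹ ∈ N) ∧ N.relIndex U ≠ 0 ∧
      N.relIndex U ≤ Nat.factorial n}) ⟨hNW, h1⟩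


/-- Lemma 2.4: if some compact open subgroup of a t.d.l.c. group is of finite quotient
type, then every compact open subgroup has only finitely many open subgroups of each
finite index; in particular the group is locally of finite quotient type. -/
theorem fqt_local {G : Type*} [Group G] [TopologicalSpace G] [IsTopologicalGroup G]
    [LocallyCompactSpace G] [TotallyDisconnectedSpace G] [T2Space G]
    (U : Subgroup G) (hUc : IsCompact (U : Set G)) (hUo : IsOpen (U : Set G))
    (hU : FiniteQuotientType U) :
    (∀ V : Subgroup G, IsCompact (V : Set G) → IsOpen (V : Set G) → ∀ n : ℕ, 0 < n →
      {W : Subgroup G | W ≤ V ∧ IsOpen (W : Set G) ∧ W.relIndex V = n}.Finite) ∧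
    LocallyFiniteQuotientType G := by
  have main : ∀ V : Subgroup G, IsCompact (V : Set G) → IsOpen (V : Set G) → ∀ n : ℕ, 0 < n →
      {W : Subgroup G | W ≤ V ∧ IsOpen (W : Set G) ∧ W.relIndex V = n}.Finite := by
    intro V hVc hVo n hn
    set D := U ⊓ V with hDdef
    have hDset : ((D : Subgroup G) : Set G) = (U : Set G) ∩ (V : Set G) := rfl
    have hDo : IsOpen (D : Set G) := by rw [hDset]; exact hUo.inter hVo
    have hDc : IsCompact (D : Set G) := by
      rw [hDset]
      exact hUc.inter_right (Subgroup.isClosed_of_isOpen V hVo)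
    have hm : D.relIndex U ≠ 0 := myaux_relIndex_ne_zero hDo hUc
    -- step for D
    have stepD : ∀ k : ℕ, 0 < k →
        {W : Subgroup G | W ≤ D ∧ IsOpen (W : Set G) ∧ W.relIndex D = k}.Finite := by
      intro k hk
      refine Set.Finite.subset (myaux_stepU hUc hUo hU (k * D.relIndex U)
        (by positivity)) ?_
      rintro W ⟨h1, h2, h3⟩
      refine ⟨h1.trans inf_le_left, h2, ?_⟩
      rw [← Subgroup.relIndex_mul_relIndex W D U h1 inf_le_left, h3]
    -- finite family of candidate cores
    have hS : (⋃ k ∈ Finset.Icc 1 n,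
        {K : Subgroup G | K ≤ D ∧ IsOpen (K : Set G) ∧ K.relIndex D = k}).Finite :=
      Set.Finite.biUnion (Finset.Icc 1 n).finite_toSet
        (fun k hk => stepD k (by simp only [Finset.coe_Icc, Set.mem_Icc] at hk; omega))
    have hfin : (⋃ K ∈ (⋃ k ∈ Finset.Icc 1 n,
        {K : Subgroup G | K ≤ D ∧ IsOpen (K : Set G) ∧ K.relIndex D = k}),
        {W : Subgroup G | K ≤ W ∧ W ≤ V}).Finite := by
      refine Set.Finite.biUnion hS fun K hK => ?_
      simp only [Set.mem_iUnion, Set.mem_setOf_eq] at hK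
      obtain ⟨k, hk, hKD, hKo, hKrel⟩ := hK
      exact myaux_interm (K := K) (V := V) (myaux_relIndex_ne_zero hKo hVc)
    refine Set.Finite.subset hfin ?_
    · rintro W ⟨h1, h2, h3⟩
      set K := W ⊓ D with hKdef
      have hKo : IsOpen (K : Set G) := h2.inter hDo
      have hKD : K ≤ D := inf_le_right
      have hKrel : K.relIndex D = W.relIndex D := Subgroup.inf_relIndex_right W D
      have hkne : K.relIndex D ≠ 0 := myaux_relIndex_ne_zero hKo hDc
      have hkle : K.relIndex D ≤ n := by
        rw [hKrel, ← h3]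
        exact Subgroup.relIndex_le_of_le_right inf_le_right (by rw [h3]; omega)
      refine Set.mem_biUnion ?_ (⟨inf_le_left, h1⟩ : K ≤ W ∧ W ≤ V)
      simp only [Set.mem_iUnion, Set.mem_setOf_eq]
      exact ⟨K.relIndex D, Finset.mem_Icc.mpr ⟨by omega, hkle⟩, hKD, hKo, rfl⟩
  refine ⟨main, fun V hVc hVo n hn => Set.Finite.subset (main V hVc hVo n hn) ?_⟩
  rintro N ⟨h1, h2, _h3, h4⟩
  exact ⟨h1, h2, h4⟩
end

section
/- Let G be a nontrivial compactly generated t.d.l.c. group that is locally of finite quotient type, with QZ(G) = {1}, and such that ⋂_{g ∈ G} gOg^{-1} = {1} for some compact open subgroup O of G. Then every compact open subgroup U of G has only finitely many direct factors, i.e. only finitely many closed subgroups K for which there exists a closed subgroup L with U = K × L as a topological group. -/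
open scoped Pointwise

set_option linter.unusedSectionVars false
set_option maxHeartbeats 1000000

namespace DFA

variable {G : Type*} [Group G] [TopologicalSpace G] [IsTopologicalGroup G] [T2Space G]

def IsFP (V A B : Subgroup G) : Prop :=
  IsClosed (A : Set G) ∧ IsClosed (B : Set G) ∧ A ⊓ B = ⊥ ∧
    (∀ a ∈ A, ∀ b ∈ B, a * b = b * a) ∧ (A : Set G) * (B : Set G) = (V : Set G)

def Fac (V : Subgroup G) : Set (Subgroup G) := {A | ∃ B, IsFP V A B}

theorem IsFP.closedA {V A B : Subgroup G} (h : IsFP V A B) : IsClosed (A : Set G) := h.1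
theorem IsFP.closedB {V A B : Subgroup G} (h : IsFP V A B) : IsClosed (B : Set G) := h.2.1
theorem IsFP.inf {V A B : Subgroup G} (h : IsFP V A B) : A ⊓ B = ⊥ := h.2.2.1
theorem IsFP.comm {V A B : Subgroup G} (h : IsFP V A B) :
    ∀ a ∈ A, ∀ b ∈ B, a * b = b * a := h.2.2.2.1
theorem IsFP.prod {V A B : Subgroup G} (h : IsFP V A B) :
    (A : Set G) * (B : Set G) = (V : Set G) := h.2.2.2.2
theorem IsFP.leA {V A B : Subgroup G} (h : IsFP V A B) : A ≤ V := by
  intro a ha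
  have : a ∈ (A : Set G) * (B : Set G) := ⟨a, ha, 1, B.one_mem, mul_one a⟩
  rw [h.prod] at this; exact this
theorem IsFP.leB {V A B : Subgroup G} (h : IsFP V A B) : B ≤ V := by
  intro b hb
  have : b ∈ (A : Set G) * (B : Set G) := ⟨1, A.one_mem, b, hb, one_mul b⟩
  rw [h.prod] at this; exact this
theorem set_mul_comm {A B : Subgroup G} (h : ∀ a ∈ A, ∀ b ∈ B, a * b = b * a) :
    (A : Set G) * (B : Set G) = (B : Set G) * (A : Set G) := by
  ext x
  constructor
  · rintro ⟨a, ha, b, hb, rfl⟩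
    exact ⟨b, hb, a, ha, (h a ha b hb).symm⟩
  · rintro ⟨b, hb, a, ha, rfl⟩
    exact ⟨a, ha, b, hb, h a ha b hb⟩
theorem IsFP.symm {V A B : Subgroup G} (h : IsFP V A B) : IsFP V B A :=
  ⟨h.closedB, h.closedA, by rw [inf_comm]; exact h.inf,
   fun b hb a ha => (h.comm a ha b hb).symm,
   by rw [← h.prod]; exact (set_mul_comm h.comm).symm⟩
theorem IsFP.unique {V A B : Subgroup G} (h : IsFP V A B) {a₁ b₁ a₂ b₂ : G}
    (ha₁ : a₁ ∈ A) (hb₁ : b₁ ∈ B) (ha₂ : a₂ ∈ A) (hb₂ : b₂ ∈ B)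
    (he : a₁ * b₁ = a₂ * b₂) : a₁ = a₂ ∧ b₁ = b₂ := by
  have key : a₂⁻¹ * a₁ = b₂ * b₁⁻¹ := by
    calc a₂⁻¹ * a₁ = a₂⁻¹ * (a₁ * b₁) * b₁⁻¹ := by group
    _ = a₂⁻¹ * (a₂ * b₂) * b₁⁻¹ := by rw [he]
    _ = b₂ * b₁⁻¹ := by group
  have hm : a₂⁻¹ * a₁ ∈ A ⊓ B :=
    ⟨A.mul_mem (A.inv_mem ha₂) ha₁, key ▸ B.mul_mem hb₂ (B.inv_mem hb₁)⟩
  rw [h.inf, Subgroup.mem_bot] at hm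
  exact ⟨(inv_mul_eq_one.mp hm).symm,
    (mul_inv_eq_one.mp (key ▸ hm : b₂ * b₁⁻¹ = 1)).symm⟩
theorem IsFP.conj_mem {V A B : Subgroup G} (h : IsFP V A B) {v a : G}
    (hv : v ∈ V) (ha : a ∈ A) : v * a * v⁻¹ ∈ A := by
  have hv' : v ∈ (A : Set G) * (B : Set G) := by rw [h.prod]; exact hv
  obtain ⟨x, hx, y, hy, rfl⟩ := hv'
  have hya : y * a * y⁻¹ = a := by
    have hc : a * y = y * a := h.comm a ha y hy
    rw [← hc]; group
  have : x * y * a * (x * y)⁻¹ = x * (y * a * y⁻¹) * x⁻¹ := by group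
  rw [this, hya]
  exact A.mul_mem (A.mul_mem hx ha) (A.inv_mem hx)
theorem exists_cmul (A B : Subgroup G) (h : ∀ a ∈ A, ∀ b ∈ B, a * b = b * a) :
    ∃ P : Subgroup G, (P : Set G) = (A : Set G) * (B : Set G) := by
  refine ⟨⟨⟨⟨(A : Set G) * (B : Set G), ?_⟩, ?_⟩, ?_⟩, rfl⟩
  · rintro x y ⟨a, ha, b, hb, rfl⟩ ⟨c, hc, d, hd, rfl⟩
    refine ⟨a * c, A.mul_mem ha hc, b * d, B.mul_mem hb hd, ?_⟩
    have hbc : Commute b c := (h c hc b hb).symm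
    exact (hbc.mul_mul_mul_comm a d).symm
  · exact ⟨1, A.one_mem, 1, B.one_mem, one_mul 1⟩
  · rintro x ⟨a, ha, b, hb, rfl⟩
    refine ⟨a⁻¹, A.inv_mem ha, b⁻¹, B.inv_mem hb, ?_⟩
    have hc : Commute a b := h a ha b hb
    have h2 : a⁻¹ * b⁻¹ = b⁻¹ * a⁻¹ := (hc.inv_left.inv_right).eq
    show a⁻¹ * b⁻¹ = (a * b)⁻¹
    rw [mul_inv_rev, h2]

/- ################ NEW PART ################ -/

section Split

variable {U : Subgroup G}

/-- triviality of the centre of a factor, from centre-triviality of the ambient `U` -/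
theorem central_eq_one (hZ1 : ∀ z ∈ U, (∀ u ∈ U, z * u = u * z) → z = 1)
    {V C A B : Subgroup G} (hVC : IsFP U V C) (h : IsFP V A B) {z : G} (hz : z ∈ A)
    (hcm : ∀ a ∈ A, z * a = a * z) : z = 1 := by
  have hzV : ∀ v ∈ V, z * v = v * z := by
    intro v hv
    have hv' : v ∈ (A : Set G) * (B : Set G) := by rw [h.prod]; exact hv
    obtain ⟨a, ha, b, hb, rfl⟩ := hv'
    have h1 : z * a = a * z := hcm a ha
    have h2 : z * b = b * z := h.comm z hz b hb
    calc z * (a * b) = (z * a) * b := by group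
    _ = a * (z * b) := by rw [h1]; group
    _ = (a * b) * z := by rw [h2]; group
  apply hZ1 z (hVC.leA (h.leA hz))
  intro u hu
  have hu' : u ∈ (V : Set G) * (C : Set G) := by rw [hVC.prod]; exact hu
  obtain ⟨v, hv, c, hc, rfl⟩ := hu'
  have h1 : z * v = v * z := hzV v hv
  have h2 : z * c = c * z := hVC.comm z (h.leA hz) c hc
  calc z * (v * c) = (z * v) * c := by group
  _ = v * (z * c) := by rw [h1]; group
  _ = (v * c) * z := by rw [h2]; group

/-- an element of `V` commuting with the factor `A` lies in the complement `B`. -/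
theorem mem_of_commutes (hZ1 : ∀ z ∈ U, (∀ u ∈ U, z * u = u * z) → z = 1)
    {V C A B : Subgroup G} (hVC : IsFP U V C) (h : IsFP V A B) {c : G} (hc : c ∈ V)
    (hcm : ∀ a ∈ A, c * a = a * c) : c ∈ B := by
  have hc' : c ∈ (A : Set G) * (B : Set G) := by rw [h.prod]; exact hc
  obtain ⟨a, ha, b, hb, rfl⟩ := hc'
  have ha1 : a = 1 := by
    apply central_eq_one hZ1 hVC h ha
    intro a' ha'
    have h1 : (a * b) * a' = a' * (a * b) := hcm a' ha'
    have h2 : b * a' = a' * b := (h.comm a' ha' b hb).symm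
    have : a * (b * a') = a' * (a * b) := by rw [← mul_assoc]; exact h1
    rw [h2] at this
    -- a * (a' * b) = a' * (a * b)
    have h3 : a * a' * b = a' * a * b := by
      calc a * a' * b = a * (a' * b) := by group
      _ = a' * (a * b) := this
      _ = a' * a * b := by group
    exact mul_right_cancel h3
  simpa [ha1] using hb

/-- splitting of a factor along another factor pair. -/
theorem split (hZ1 : ∀ z ∈ U, (∀ u ∈ U, z * u = u * z) → z = 1)
    {V C K L K' L' : Subgroup G} (hVC : IsFP U V C)
    (h1 : IsFP V K L) (h2 : IsFP V K' L') :
    (K : Set G) = ((K ⊓ K' : Subgroup G) : Set G) * ((K ⊓ L' : Subgroup G) : Set G) := by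
  ext x
  constructor
  · intro hx
    have hxV : x ∈ (K' : Set G) * (L' : Set G) := by rw [h2.prod]; exact h1.leA hx
    obtain ⟨x₁, hx₁, x₂, hx₂, he'⟩ := hxV
    have he : x₁ * x₂ = x := he'
    have hcomm1 : ∀ l ∈ L, l * x₁ = x₁ * l := by
      intro l hl
      have hxl : l * x * l⁻¹ = x := by
        have := h1.comm x hx l hl
        rw [← this]; group
      have m1 : l * x₁ * l⁻¹ ∈ K' := h2.conj_mem (h1.leB hl) hx₁
      have m2 : l * x₂ * l⁻¹ ∈ L' := (h2.symm).conj_mem (h1.leB hl) hx₂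
      have heq : (l * x₁ * l⁻¹) * (l * x₂ * l⁻¹) = x₁ * x₂ := by
        have : (l * x₁ * l⁻¹) * (l * x₂ * l⁻¹) = l * (x₁ * x₂) * l⁻¹ := by group
        rw [this, he, hxl]
      have := (h2.unique m1 m2 hx₁ hx₂ heq).1
      calc l * x₁ = (l * x₁ * l⁻¹) * l := by group
      _ = x₁ * l := by rw [this]
    have hx₁K : x₁ ∈ K := by
      refine mem_of_commutes hZ1 hVC h1.symm (h2.leA hx₁) ?_
      intro l hl; exact (hcomm1 l hl).symm
    have hx₂K : x₂ ∈ K := by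
      have : x₂ = x₁⁻¹ * x := by rw [← he]; group
      rw [this]; exact K.mul_mem (K.inv_mem hx₁K) hx
    exact ⟨x₁, ⟨hx₁K, hx₁⟩, x₂, ⟨hx₂K, hx₂⟩, he⟩
  · rintro ⟨y, hy, z, hz, rfl⟩
    exact K.mul_mem hy.1 hz.1


/-- restriction of a factor to another factor. -/
theorem restrict (hZ1 : ∀ z ∈ U, (∀ u ∈ U, z * u = u * z) → z = 1)
    {V C K L b bc : Subgroup G} (hVC : IsFP U V C)
    (hKL : IsFP V K L) (hbb : IsFP V b bc) :
    IsFP b (K ⊓ b) (L ⊓ b) := by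
  refine ⟨?_, ?_, ?_, ?_, ?_⟩
  · rw [Subgroup.coe_inf]; exact hKL.closedA.inter hbb.closedA
  · rw [Subgroup.coe_inf]; exact hKL.closedB.inter hbb.closedA
  · rw [eq_bot_iff]
    intro x hx
    have : x ∈ K ⊓ L := ⟨hx.1.1, hx.2.1⟩
    rw [hKL.inf] at this; exact this
  · intro a ha c hc
    exact hKL.comm a ha.1 c hc.1
  · have hsplit := split hZ1 hVC hbb hKL
    rw [show b ⊓ K = K ⊓ b from inf_comm .. , show b ⊓ L = L ⊓ b from inf_comm ..] at hsplit
    exact hsplit.symm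

/-- the complementary factor to a piece `K ⊓ L'`. -/
theorem newpair (hZ1 : ∀ z ∈ U, (∀ u ∈ U, z * u = u * z) → z = 1)
    (hUc : IsCompact (U : Set G)) {V C K L K' L' : Subgroup G} (hVC : IsFP U V C)
    (h1 : IsFP V K L) (h2 : IsFP V K' L') :
    ∃ bc : Subgroup G, IsFP V (K ⊓ L') bc ∧ K' ≤ bc := by
  have hcomm : ∀ a ∈ K ⊓ K', ∀ l ∈ L, a * l = l * a :=
    fun a ha l hl => h1.comm a ha.1 l hl
  obtain ⟨bc, hbc⟩ := exists_cmul (K ⊓ K') L hcomm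
  have hKU : K ≤ U := fun x hx => hVC.leA (h1.leA hx)
  have hLU : L ≤ U := fun x hx => hVC.leA (h1.leB hx)
  have hKKc : IsCompact ((K ⊓ K' : Subgroup G) : Set G) := by
    refine hUc.of_isClosed_subset ?_ ?_
    · rw [Subgroup.coe_inf]; exact h1.closedA.inter h2.closedA
    · intro x hx; exact hKU hx.1
  have hLc : IsCompact ((L : Subgroup G) : Set G) :=
    hUc.of_isClosed_subset h1.closedB (fun x hx => hLU hx)
  have hbcclosed : IsClosed (bc : Set G) := by
    rw [hbc]; exact (hKKc.mul hLc).isClosed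
  have hsplitK := split hZ1 hVC h1 h2
  refine ⟨bc, ⟨?_, hbcclosed, ?_, ?_, ?_⟩, ?_⟩
  · rw [Subgroup.coe_inf]; exact h1.closedA.inter h2.closedB
  · -- (K ⊓ L') ⊓ bc = ⊥
    rw [eq_bot_iff]
    intro x hx
    have hxbc : x ∈ (((K ⊓ K') : Subgroup G) : Set G) * (L : Set G) := by
      rw [← hbc]; exact hx.2
    obtain ⟨y, hy, l, hl, he'⟩ := hxbc
    have he : y * l = x := he'
    have hlKL : l ∈ K ⊓ L := by
      constructor
      · have : l = y⁻¹ * x := by rw [← he]; group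
        rw [this]; exact K.mul_mem (K.inv_mem hy.1) hx.1.1
      · exact hl
    rw [h1.inf, Subgroup.mem_bot] at hlKL
    rw [hlKL, mul_one] at he
    subst he
    have : y ∈ K' ⊓ L' := ⟨hy.2, hx.1.2⟩
    rw [h2.inf] at this
    exact this
  · -- commuting
    intro a ha z hz
    have hz' : z ∈ (((K ⊓ K') : Subgroup G) : Set G) * (L : Set G) := by
      rw [← hbc]; exact hz
    obtain ⟨y, hy, l, hl, he'⟩ := hz'
    have he : y * l = z := he'
    have h1c : a * y = y * a := (h2.comm y hy.2 a ha.2).symm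
    have h2c : a * l = l * a := h1.comm a ha.1 l hl
    rw [← he]
    calc a * (y * l) = (a * y) * l := by group
    _ = y * (a * l) := by rw [h1c]; group
    _ = (y * l) * a := by rw [h2c]; group
  · -- product
    rw [hbc]
    have hre : ((K ⊓ L' : Subgroup G) : Set G) * (((K ⊓ K') : Subgroup G) : Set G)
        = (((K ⊓ K') : Subgroup G) : Set G) * ((K ⊓ L' : Subgroup G) : Set G) := by
      refine set_mul_comm ?_
      intro u hu w hw
      exact (h2.comm w hw.2 u hu.2).symm
    calc ((K ⊓ L' : Subgroup G) : Set G) *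
          ((((K ⊓ K') : Subgroup G) : Set G) * (L : Set G))
        = (((K ⊓ L' : Subgroup G) : Set G) * (((K ⊓ K') : Subgroup G) : Set G))
            * (L : Set G) := by rw [mul_assoc]
    _ = ((((K ⊓ K') : Subgroup G) : Set G) * ((K ⊓ L' : Subgroup G) : Set G))
            * (L : Set G) := by rw [hre]
    _ = (K : Set G) * (L : Set G) := by rw [← hsplitK]
    _ = (V : Set G) := h1.prod
  · -- K' ≤ bc
    intro x hx
    have hsplitK' := split hZ1 hVC h2 h1
    have hx' : x ∈ ((K' ⊓ K : Subgroup G) : Set G) * ((K' ⊓ L : Subgroup G) : Set G) := by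
      rw [← hsplitK']; exact hx
    obtain ⟨y, hy, z, hz, he'⟩ := hx'
    have he : y * z = x := he'
    show x ∈ (bc : Set G)
    rw [hbc, ← he]
    exact Set.mul_mem_mul (⟨hy.2, hy.1⟩ : y ∈ K ⊓ K') hz.2

/-- composition of factor pairs. -/
theorem compose (hUc : IsCompact (U : Set G)) {V C A B : Subgroup G}
    (hVC : IsFP U V C) (h : IsFP V A B)
    {P : Subgroup G} (hP : (P : Set G) = (B : Set G) * (C : Set G)) : IsFP U A P := by
  have hBU : B ≤ U := fun x hx => hVC.leA (h.leB hx)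
  have hCU : C ≤ U := fun x hx => hVC.leB hx
  have hBc : IsCompact (B : Set G) := hUc.of_isClosed_subset h.closedB (fun x hx => hBU hx)
  have hCc : IsCompact (C : Set G) := hUc.of_isClosed_subset hVC.closedB (fun x hx => hCU hx)
  refine ⟨h.closedA, by rw [hP]; exact (hBc.mul hCc).isClosed, ?_, ?_, ?_⟩
  · rw [eq_bot_iff]
    intro x hx
    have hx2 : x ∈ (B : Set G) * (C : Set G) := by rw [← hP]; exact hx.2
    obtain ⟨y, hy, c, hc, he'⟩ := hx2
    have he : y * c = x := he'
    have hcVC : c ∈ V ⊓ C := by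
      constructor
      · have : c = y⁻¹ * x := by rw [← he]; group
        rw [this]; exact V.mul_mem (V.inv_mem (h.leB hy)) (h.leA hx.1)
      · exact hc
    rw [hVC.inf, Subgroup.mem_bot] at hcVC
    rw [hcVC, mul_one] at he
    subst he
    have : y ∈ A ⊓ B := ⟨hx.1, hy⟩
    rw [h.inf] at this
    exact this
  · intro a ha p hp
    have hp2 : p ∈ (B : Set G) * (C : Set G) := by rw [← hP]; exact hp
    obtain ⟨y, hy, c, hc, he'⟩ := hp2
    have he : y * c = p := he'
    have h1c : a * y = y * a := h.comm a ha y hy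
    have h2c : a * c = c * a := hVC.comm a (h.leA ha) c hc
    rw [← he]
    calc a * (y * c) = (a * y) * c := by group
    _ = y * (a * c) := by rw [h1c]; group
    _ = (y * c) * a := by rw [h2c]; group
  · rw [hP, ← mul_assoc, h.prod, hVC.prod]

theorem eq_of_inf_bot (hZ1 : ∀ z ∈ U, (∀ u ∈ U, z * u = u * z) → z = 1)
    {V C K L K' L' : Subgroup G} (hVC : IsFP U V C)
    (h1 : IsFP V K L) (h2 : IsFP V K' L')
    (hb : K ⊓ L' = ⊥) (hc : K' ⊓ L = ⊥) : K = K' := by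
  have e1 : (K : Set G) = ((K ⊓ K' : Subgroup G) : Set G) := by
    rw [split hZ1 hVC h1 h2, hb, Subgroup.coe_bot]
    simp
  have e2 : (K' : Set G) = ((K' ⊓ K : Subgroup G) : Set G) := by
    rw [split hZ1 hVC h2 h1, hc, Subgroup.coe_bot]
    simp
  have l1 : K ≤ K' := by
    intro x hx
    have : x ∈ ((K ⊓ K' : Subgroup G) : Set G) := e1 ▸ hx
    exact this.2
  have l2 : K' ≤ K := by
    intro x hx
    have : x ∈ ((K' ⊓ K : Subgroup G) : Set G) := e2 ▸ hx
    exact this.2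
  exact le_antisymm l1 l2


/-- if both factor algebras below `b` and `bc` are finite then `Fac V` is finite. -/
theorem fac_dichotomy (hZ1 : ∀ z ∈ U, (∀ u ∈ U, z * u = u * z) → z = 1)
    {V C b bc : Subgroup G} (hVC : IsFP U V C) (hbb : IsFP V b bc)
    (hinf : (Fac V).Infinite) : (Fac b).Infinite ∨ (Fac bc).Infinite := by
  by_contra hcon
  push_neg at hcon
  apply hinf
  have hinj : Set.InjOn (fun K => ((K ⊓ b : Subgroup G), (K ⊓ bc : Subgroup G))) (Fac V) := by
    rintro K₁ hK₁ K₂ hK₂ heq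
    obtain ⟨L₁, hL₁⟩ := hK₁
    obtain ⟨L₂, hL₂⟩ := hK₂
    have e1 := split hZ1 hVC hL₁ hbb
    have e2 := split hZ1 hVC hL₂ hbb
    have h1 : (K₁ ⊓ b : Subgroup G) = K₂ ⊓ b := congrArg Prod.fst heq
    have h2 : (K₁ ⊓ bc : Subgroup G) = K₂ ⊓ bc := congrArg Prod.snd heq
    apply SetLike.coe_injective
    rw [e1, e2, h1, h2]
  have himg : (fun K => ((K ⊓ b : Subgroup G), (K ⊓ bc : Subgroup G))) '' (Fac V)
      ⊆ (Fac b) ×ˢ (Fac bc) := by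
    rintro p ⟨K, hK, rfl⟩
    obtain ⟨L, hL⟩ := hK
    constructor
    · exact ⟨L ⊓ b, restrict hZ1 hVC hL hbb⟩
    · exact ⟨L ⊓ bc, restrict hZ1 hVC hL hbb.symm⟩
  exact Set.Finite.of_finite_image ((hcon.1.prod hcon.2).subset himg) hinj

/-- core of the inductive step. -/
theorem step_core (hZ1 : ∀ z ∈ U, (∀ u ∈ U, z * u = u * z) → z = 1)
    (hUc : IsCompact (U : Set G)) {V C K L K' L' : Subgroup G}
    (hVC : IsFP U V C) (h1 : IsFP V K L) (h2 : IsFP V K' L')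
    (hbne : K ⊓ L' ≠ ⊥) (hK'ne : K' ≠ ⊥) (hinf : (Fac V).Infinite) :
    ∃ M' L' V' C' : Subgroup G, IsFP U M' L' ∧ IsFP U V' C' ∧ M' ≠ ⊥ ∧
      (Fac V').Infinite ∧ V' ≤ L' ∧ C ≤ L' ∧ M' ≤ C' ∧ C ≤ C' ∧ V' ≤ V ∧ M' ≤ V := by
  obtain ⟨bc, hfpb, hK'le⟩ := newpair hZ1 hUc hVC h1 h2
  have hbV : (K ⊓ L' : Subgroup G) ≤ V := fun x hx => h1.leA hx.1
  have hbcV : bc ≤ V := hfpb.leB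
  have hbcne : bc ≠ ⊥ := by
    intro hbot
    apply hK'ne
    rw [eq_bot_iff]; rw [hbot] at hK'le; exact hK'le
  rcases fac_dichotomy hZ1 hVC hfpb hinf with hFb | hFbc
  · -- Fac (K ⊓ L') infinite : M' := bc
    have hcomm1 : ∀ x ∈ (K ⊓ L' : Subgroup G), ∀ c ∈ C, x * c = c * x :=
      fun x hx c hc => hVC.comm x (hbV hx) c hc
    have hcomm2 : ∀ x ∈ bc, ∀ c ∈ C, x * c = c * x :=
      fun x hx c hc => hVC.comm x (hbcV hx) c hc
    obtain ⟨Lout, hLout⟩ := exists_cmul (K ⊓ L') C hcomm1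
    obtain ⟨Cout, hCout⟩ := exists_cmul bc C hcomm2
    refine ⟨bc, Lout, K ⊓ L', Cout, ?_, ?_, hbcne, hFb, ?_, ?_, ?_, ?_, hbV, hbcV⟩
    · exact compose hUc hVC hfpb.symm hLout
    · exact compose hUc hVC hfpb hCout
    · intro x hx
      show x ∈ (Lout : Set G)
      rw [hLout]; exact ⟨x, hx, 1, C.one_mem, mul_one x⟩
    · intro c hc
      show c ∈ (Lout : Set G)
      rw [hLout]; exact ⟨1, Subgroup.one_mem _, c, hc, one_mul c⟩
    · intro x hx
      show x ∈ (Cout : Set G)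
      rw [hCout]; exact ⟨x, hx, 1, C.one_mem, mul_one x⟩
    · intro c hc
      show c ∈ (Cout : Set G)
      rw [hCout]; exact ⟨1, Subgroup.one_mem _, c, hc, one_mul c⟩
  · -- Fac bc infinite : M' := K ⊓ L'
    have hcomm1 : ∀ x ∈ (K ⊓ L' : Subgroup G), ∀ c ∈ C, x * c = c * x :=
      fun x hx c hc => hVC.comm x (hbV hx) c hc
    have hcomm2 : ∀ x ∈ bc, ∀ c ∈ C, x * c = c * x :=
      fun x hx c hc => hVC.comm x (hbcV hx) c hc
    obtain ⟨Lout, hLout⟩ := exists_cmul bc C hcomm2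
    obtain ⟨Cout, hCout⟩ := exists_cmul (K ⊓ L') C hcomm1
    refine ⟨K ⊓ L', Lout, bc, Cout, ?_, ?_, hbne, hFbc, ?_, ?_, ?_, ?_, hbcV, hbV⟩
    · exact compose hUc hVC hfpb hLout
    · exact compose hUc hVC hfpb.symm hCout
    · intro x hx
      show x ∈ (Lout : Set G)
      rw [hLout]; exact ⟨x, hx, 1, C.one_mem, mul_one x⟩
    · intro c hc
      show c ∈ (Lout : Set G)
      rw [hLout]; exact ⟨1, Subgroup.one_mem _, c, hc, one_mul c⟩
    · intro x hx
      show x ∈ (Cout : Set G)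
      rw [hCout]; exact ⟨x, hx, 1, C.one_mem, mul_one x⟩
    · intro c hc
      show c ∈ (Cout : Set G)
      rw [hCout]; exact ⟨1, Subgroup.one_mem _, c, hc, one_mul c⟩

/-- the inductive step. -/
theorem stepLemma (hZ1 : ∀ z ∈ U, (∀ u ∈ U, z * u = u * z) → z = 1)
    (hUc : IsCompact (U : Set G)) {V C : Subgroup G}
    (hVC : IsFP U V C) (hinf : (Fac V).Infinite) :
    ∃ M' L' V' C' : Subgroup G, IsFP U M' L' ∧ IsFP U V' C' ∧ M' ≠ ⊥ ∧
      (Fac V').Infinite ∧ V' ≤ L' ∧ C ≤ L' ∧ M' ≤ C' ∧ C ≤ C' ∧ V' ≤ V ∧ M' ≤ V := by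
  obtain ⟨K, hK⟩ := (hinf.diff (Set.finite_singleton ⊥)).nonempty
  obtain ⟨K', hK'⟩ := (hinf.diff ((Set.finite_singleton ⊥).insert K)).nonempty
  obtain ⟨L, hL⟩ := hK.1
  obtain ⟨L', hL'⟩ := hK'.1
  have hKne : K ≠ ⊥ := by simpa using hK.2
  have hKK' : K' ≠ K ∧ K' ≠ ⊥ := by
    constructor
    · intro h; exact hK'.2 (by simp [h])
    · intro h; exact hK'.2 (by simp [h])
  by_cases hb : K ⊓ L' = ⊥
  · have hc : K' ⊓ L ≠ ⊥ := by
      intro hc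
      exact hKK'.1 (eq_of_inf_bot hZ1 hVC hL hL' hb hc).symm
    exact step_core hZ1 hUc hVC hL' hL hc hKne hinf
  · exact step_core hZ1 hUc hVC hL hL' hb hKK'.2 hinf


/-- key extraction: an infinite factor set yields an infinite family of nontrivial
factors, pairwise contained in each other's complements. -/
theorem exists_seq (hZ1 : ∀ z ∈ U, (∀ u ∈ U, z * u = u * z) → z = 1)
    (hUc : IsCompact (U : Set G)) (hinfU : (Fac U).Infinite) :
    ∃ Mf Lf : ℕ → Subgroup G, (∀ i, IsFP U (Mf i) (Lf i)) ∧ (∀ i, Mf i ≠ ⊥) ∧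
      (∀ i k, i ≠ k → Mf k ≤ Lf i) := by
  classical
  have hbase : IsFP U U ⊥ := by
    refine ⟨hUc.isClosed, by rw [Subgroup.coe_bot]; exact isClosed_singleton,
      inf_bot_eq U, ?_, ?_⟩
    · intro a _ b hb
      rw [Subgroup.mem_bot] at hb; subst hb; simp
    · rw [Subgroup.coe_bot, Set.mul_singleton]
      simp
  let Λ := {p : Subgroup G × Subgroup G // IsFP U p.1 p.2 ∧ (Fac p.1).Infinite}
  have hstep : ∀ p : Λ, ∃ q : Λ × (Subgroup G × Subgroup G),
      IsFP U q.2.1 q.2.2 ∧ q.2.1 ≠ ⊥ ∧ q.1.1.1 ≤ q.2.2 ∧ p.1.2 ≤ q.2.2 ∧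
        q.2.1 ≤ q.1.1.2 ∧ p.1.2 ≤ q.1.1.2 ∧ q.1.1.1 ≤ p.1.1 ∧ q.2.1 ≤ p.1.1 := by
    rintro ⟨⟨V, C⟩, hVC, hinf⟩
    obtain ⟨M', L', V', C', c1, c2, c3, c4, c5, c6, c7, c8, c9, c10⟩ :=
      stepLemma hZ1 hUc hVC hinf
    exact ⟨⟨⟨(V', C'), c2, c4⟩, (M', L')⟩, c1, c3, c5, c6, c7, c8, c9, c10⟩
  choose g hg using hstep
  let f : ℕ → Λ := fun n =>
    Nat.rec (motive := fun _ => Λ) ⟨(U, ⊥), hbase, hinfU⟩ (fun _ ih => (g ih).1) n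
  have hfs : ∀ n, f (n + 1) = (g (f n)).1 := fun n => rfl
  have hVmono : ∀ m n, m ≤ n → (f n).1.1 ≤ (f m).1.1 := by
    intro m n hmn
    induction n, hmn using Nat.le_induction with
    | base => exact le_refl _
    | succ n hmn ih =>
      refine le_trans ?_ ih
      rw [hfs n]
      exact (hg (f n)).2.2.2.2.2.2.1
  have hCmono : ∀ m n, m ≤ n → (f m).1.2 ≤ (f n).1.2 := by
    intro m n hmn
    induction n, hmn using Nat.le_induction with
    | base => exact le_refl _
    | succ n hmn ih =>
      refine le_trans ih ?_
      rw [hfs n]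
      exact (hg (f n)).2.2.2.2.2.1
  refine ⟨fun n => (g (f n)).2.1, fun n => (g (f n)).2.2, fun i => (hg (f i)).1,
    fun i => (hg (f i)).2.1, ?_⟩
  intro i k hik
  rcases lt_or_gt_of_ne hik with h | h
  · -- i < k : Mf k ≤ V_k ≤ V_{i+1} ≤ Lf i
    have s1 : (g (f k)).2.1 ≤ (f k).1.1 := (hg (f k)).2.2.2.2.2.2.2
    have s2 : (f k).1.1 ≤ (f (i + 1)).1.1 := hVmono (i + 1) k (Nat.succ_le_of_lt h)
    have s3 : (f (i + 1)).1.1 ≤ (g (f i)).2.2 := by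
      rw [hfs i]
      exact (hg (f i)).2.2.1
    exact le_trans (le_trans s1 s2) s3
  · -- k < i : Mf k ≤ C_{k+1} ≤ C_i ≤ Lf i
    have s1 : (g (f k)).2.1 ≤ (f (k + 1)).1.2 := by
      rw [hfs k]
      exact (hg (f k)).2.2.2.2.1
    have s2 : (f (k + 1)).1.2 ≤ (f i).1.2 := hCmono (k + 1) i (Nat.succ_le_of_lt h)
    have s3 : (f i).1.2 ≤ (g (f i)).2.2 := (hg (f i)).2.2.2.1
    exact le_trans (le_trans s1 s2) s3

end Split

end DFA

namespace DFB

variable {G : Type*} [Group G] [TopologicalSpace G] [IsTopologicalGroup G] [T2Space G]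

/-- a compact set is covered by finitely many cosets of an open subgroup,
with representatives from a given subgroup containing the compact set. -/
theorem exists_cover {U A : Subgroup G} (hUc : IsCompact (U : Set G))
    (hA : IsOpen (A : Set G)) :
    ∃ t : Set G, t.Finite ∧ t ⊆ (U : Set G) ∧
      (U : Set G) ⊆ ⋃ g ∈ t, g • (A : Set G) := by
  have hcov : (U : Set G) ⊆ ⋃ g ∈ (U : Set G), g • (A : Set G) := by
    intro x hx
    exact Set.mem_biUnion hx ⟨1, A.one_mem, mul_one x⟩
  obtain ⟨t, hsub, hfin, hcov'⟩ := hUc.elim_finite_subcover_image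
    (fun g _ => hA.smul g) hcov
  exact ⟨t, hfin, hsub, hcov'⟩

/-- an open subgroup of a compact subgroup has finite relative index. -/
theorem relindex_ne_zero_of_open {U A : Subgroup G} (hUc : IsCompact (U : Set G))
    (hA : IsOpen (A : Set G)) (hAU : A ≤ U) : A.relIndex U ≠ 0 := by
  obtain ⟨t, hfin, hsub, hcov⟩ := exists_cover hUc hA
  haveI : Finite ↥t := hfin.to_subtype
  have hfinq : Finite (↥U ⧸ A.subgroupOf U) := by
    have hex : ∀ q : ↥U ⧸ A.subgroupOf U, ∃ g ∈ t, ((Quotient.out q : ↥U) : G) ∈ g • (A : Set G) := by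
      intro q
      have h0 := hcov (Quotient.out q : ↥U).2
      rw [Set.mem_iUnion₂] at h0
      obtain ⟨g, hg, hx⟩ := h0
      exact ⟨g, hg, hx⟩
    have hinj : Function.Injective
        (fun q : ↥U ⧸ A.subgroupOf U => (⟨(hex q).choose, (hex q).choose_spec.1⟩ : ↥t)) := by
      intro q₁ q₂ he
      have h1 := (hex q₁).choose_spec.2
      have h2 := (hex q₂).choose_spec.2
      have hgg : (hex q₁).choose = (hex q₂).choose := congrArg Subtype.val he
      rw [hgg] at h1
      obtain ⟨a₁, ha₁, he₁⟩ := h1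
      obtain ⟨a₂, ha₂, he₂⟩ := h2
      have he₁' : (hex q₂).choose * a₁ = ((Quotient.out q₁ : ↥U) : G) := he₁
      have he₂' : (hex q₂).choose * a₂ = ((Quotient.out q₂ : ↥U) : G) := he₂
      have e1 : a₁ = ((hex q₂).choose)⁻¹ * ((Quotient.out q₁ : ↥U) : G) :=
        eq_inv_mul_iff_mul_eq.mpr he₁'
      have e2 : a₂ = ((hex q₂).choose)⁻¹ * ((Quotient.out q₂ : ↥U) : G) :=
        eq_inv_mul_iff_mul_eq.mpr he₂'
      have key : ((Quotient.out q₁ : ↥U) : G)⁻¹ * ((Quotient.out q₂ : ↥U) : G) ∈ A := by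
        have hval : ((Quotient.out q₁ : ↥U) : G)⁻¹ * ((Quotient.out q₂ : ↥U) : G)
            = a₁⁻¹ * a₂ := by rw [e1, e2]; group
        rw [hval]
        exact A.mul_mem (A.inv_mem ha₁) ha₂
      calc q₁ = QuotientGroup.mk (Quotient.out q₁) := (QuotientGroup.out_eq' q₁).symm
      _ = QuotientGroup.mk (Quotient.out q₂) := by
          rw [QuotientGroup.eq]
          rw [Subgroup.mem_subgroupOf]
          exact key
      _ = q₂ := QuotientGroup.out_eq' q₂
    exact Finite.of_injective _ hinj
  exact Subgroup.index_ne_zero_of_finite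

/-- a closed subgroup of finite relative index in an open subgroup is open. -/
theorem isOpen_of_closed_of_relindex {U A : Subgroup G} (hUo : IsOpen (U : Set G))
    (hAc : IsClosed (A : Set G)) (hAU : A ≤ U) (hne : A.relIndex U ≠ 0) :
    IsOpen (A : Set G) := by
  haveI hfinq : Finite (↥U ⧸ A.subgroupOf U) := by
    have : Nat.card (↥U ⧸ A.subgroupOf U) ≠ 0 := by
      rwa [← Subgroup.index_eq_card]
    exact (Nat.card_ne_zero.mp this).2
  classical
  have key : (A : Set G) = (U : Set G) \
      (⋃ c : {c : ↥U ⧸ A.subgroupOf U // c ≠ QuotientGroup.mk 1},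
        ((Quotient.out (c : ↥U ⧸ A.subgroupOf U) : ↥U) : G) • (A : Set G)) := by
    ext x
    constructor
    · intro hx
      refine ⟨hAU hx, ?_⟩
      intro hmem
      rw [Set.mem_iUnion] at hmem
      obtain ⟨⟨c, hc⟩, hxc⟩ := hmem
      obtain ⟨a, ha, hea⟩ := hxc
      apply hc
      have hea' : ((Quotient.out c : ↥U) : G) * a = x := hea
      have houtA : ((Quotient.out c : ↥U) : G) ∈ A := by
        have hh : ((Quotient.out c : ↥U) : G) = x * a⁻¹ := by rw [← hea']; group
        rw [hh]
        exact A.mul_mem hx (A.inv_mem ha)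
      calc c = QuotientGroup.mk (Quotient.out c) := (QuotientGroup.out_eq' c).symm
      _ = QuotientGroup.mk 1 := by
          rw [QuotientGroup.eq, Subgroup.mem_subgroupOf]
          simpa using A.inv_mem houtA
    · rintro ⟨hxU, hnot⟩
      by_contra hxA
      apply hnot
      rw [Set.mem_iUnion]
      set c : ↥U ⧸ A.subgroupOf U := QuotientGroup.mk ⟨x, hxU⟩ with hc
      have hcne : c ≠ QuotientGroup.mk 1 := by
        intro hceq
        apply hxA
        rw [hc, QuotientGroup.eq, Subgroup.mem_subgroupOf] at hceq
        simpa using A.inv_mem hceq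
      refine ⟨⟨c, hcne⟩, ?_⟩
      have : QuotientGroup.mk (Quotient.out c) = c := QuotientGroup.out_eq' c
      rw [hc] at this
      rw [QuotientGroup.eq, Subgroup.mem_subgroupOf] at this
      refine ⟨((Quotient.out c : ↥U) : G)⁻¹ * x, this, ?_⟩
      show ((Quotient.out c : ↥U) : G) * (((Quotient.out c : ↥U) : G)⁻¹ * x) = x
      group
  rw [key]
  have hclosed : IsClosed (⋃ c : {c : ↥U ⧸ A.subgroupOf U // c ≠ QuotientGroup.mk 1},
      ((Quotient.out (c : ↥U ⧸ A.subgroupOf U) : ↥U) : G) • (A : Set G)) := by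
    exact isClosed_iUnion_of_finite (fun c => hAc.smul _)
  rw [Set.diff_eq]
  exact hUo.inter hclosed.isOpen_compl

/-- quotient comparison for a subgroup of `U`. -/
theorem quot_inj_of_le {U M : Subgroup G} (hMU : M ≤ U) (W : Subgroup G) :
    ∃ f : (↥M ⧸ (W ⊓ M).subgroupOf M) → (↥U ⧸ W.subgroupOf U), Function.Injective f := by
  classical
  have hcompat : ∀ a b : ↥M, (QuotientGroup.leftRel ((W ⊓ M).subgroupOf M)) a b →
      (QuotientGroup.mk (⟨(a : G), hMU a.2⟩ : ↥U) : ↥U ⧸ W.subgroupOf U)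
        = QuotientGroup.mk ⟨(b : G), hMU b.2⟩ := by
    intro a b hab
    rw [QuotientGroup.leftRel_apply] at hab
    rw [QuotientGroup.eq, Subgroup.mem_subgroupOf]
    rw [Subgroup.mem_subgroupOf] at hab
    exact hab.1
  refine ⟨Quotient.lift _ hcompat, ?_⟩
  intro q₁ q₂
  induction q₁ using Quotient.inductionOn with
  | h a =>
    induction q₂ using Quotient.inductionOn with
    | h b =>
      intro he
      have he' : (QuotientGroup.mk (⟨(a : G), hMU a.2⟩ : ↥U) : ↥U ⧸ W.subgroupOf U)
          = QuotientGroup.mk ⟨(b : G), hMU b.2⟩ := he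
      rw [QuotientGroup.eq, Subgroup.mem_subgroupOf] at he'
      show QuotientGroup.mk a = QuotientGroup.mk b
      rw [QuotientGroup.eq, Subgroup.mem_subgroupOf]
      exact ⟨he', (a⁻¹ * b : ↥M).2⟩

end DFB


namespace DFC

open DFA DFB

variable {G : Type*} [Group G] [TopologicalSpace G] [IsTopologicalGroup G] [T2Space G]

theorem exists_D {U M L : Subgroup G} (hUc : IsCompact (U : Set G))
    (hML : DFA.IsFP U M L) {P : Subgroup G} (hPM : P ≤ M) (hPc : IsClosed (P : Set G))
    (hPnorm : ∀ m ∈ M, ∀ x ∈ P, m * x * m⁻¹ ∈ P) :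
    ∃ D : Subgroup G, IsClosed (D : Set G) ∧ D ≤ U ∧ L ≤ D ∧
      (∀ u ∈ U, ∀ x ∈ D, u * x * u⁻¹ ∈ D) ∧ D ⊓ M = P ∧
      ∃ f : (↥U ⧸ D.subgroupOf U) → (↥M ⧸ P.subgroupOf M), Function.Injective f := by
  classical
  have hMU : M ≤ U := hML.leA
  have hLU : L ≤ U := hML.leB
  have hcomm : ∀ p ∈ P, ∀ l ∈ L, p * l = l * p := fun p hp l hl => hML.comm p (hPM hp) l hl
  have hMLc : ∀ {m l : G}, m ∈ M → l ∈ L → Commute m l := fun hm hl => hML.comm _ hm _ hl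
  obtain ⟨D, hD⟩ := DFA.exists_cmul P L hcomm
  have hPcomp : IsCompact (P : Set G) := hUc.of_isClosed_subset hPc (fun x hx => hMU (hPM hx))
  have hLcomp : IsCompact (L : Set G) :=
    hUc.of_isClosed_subset hML.closedB (fun x hx => hLU hx)
  have hDc : IsClosed (D : Set G) := by rw [hD]; exact (hPcomp.mul hLcomp).isClosed
  have hDU : D ≤ U := by
    intro x hx
    have hx2 : x ∈ (P : Set G) * (L : Set G) := by rw [← hD]; exact hx
    obtain ⟨p, hp, l, hl, he⟩ := hx2
    have he' : p * l = x := he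
    rw [← he']; exact U.mul_mem (hMU (hPM hp)) (hLU hl)
  have hLD : L ≤ D := by
    intro l hl
    show l ∈ (D : Set G)
    rw [hD]; exact ⟨1, P.one_mem, l, hl, one_mul l⟩
  have hnorm : ∀ u ∈ U, ∀ x ∈ D, u * x * u⁻¹ ∈ D := by
    intro u hu x hx
    have hu2 : u ∈ (M : Set G) * (L : Set G) := by rw [hML.prod]; exact hu
    obtain ⟨m, hm, l, hl, heu⟩ := hu2
    have heu' : m * l = u := heu
    have hx2 : x ∈ (P : Set G) * (L : Set G) := by rw [← hD]; exact hx
    obtain ⟨p, hp, l', hl', hex⟩ := hx2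
    have hex' : p * l' = x := hex
    have hL' : l * l' * l⁻¹ ∈ L := L.mul_mem (L.mul_mem hl hl') (L.inv_mem hl)
    have c2 : m * (l * l' * l⁻¹) * m⁻¹ = l * l' * l⁻¹ := by
      have hcm := hML.comm m hm (l * l' * l⁻¹) hL'
      rw [hcm]; group
    have c1' : l * p * l⁻¹ = p := by
      have hcp := hcomm p hp l hl
      rw [← hcp]; group
    have hcalc : u * x * u⁻¹ = (m * p * m⁻¹) * (l * l' * l⁻¹) := by
      calc u * x * u⁻¹ = (m * l) * (p * l') * (m * l)⁻¹ := by rw [heu', hex']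
      _ = m * (l * p * l⁻¹) * (l * l' * l⁻¹) * m⁻¹ := by group
      _ = m * p * (l * l' * l⁻¹) * m⁻¹ := by rw [c1']
      _ = (m * p * m⁻¹) * (m * (l * l' * l⁻¹) * m⁻¹) := by group
      _ = (m * p * m⁻¹) * (l * l' * l⁻¹) := by rw [c2]
    show u * x * u⁻¹ ∈ (D : Set G)
    rw [hD, hcalc]
    exact Set.mul_mem_mul (hPnorm m hm p hp) hL'
  have hDM : D ⊓ M = P := by
    apply le_antisymm
    · intro x hx
      have hx2 : x ∈ (P : Set G) * (L : Set G) := by rw [← hD]; exact hx.1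
      obtain ⟨p, hp, l', hl', he⟩ := hx2
      have he' : p * l' = x := he
      have hl'M : l' ∈ M ⊓ L := by
        constructor
        · have hh : l' = p⁻¹ * x := by rw [← he']; group
          rw [hh]; exact M.mul_mem (M.inv_mem (hPM hp)) hx.2
        · exact hl'
      rw [hML.inf, Subgroup.mem_bot] at hl'M
      rw [hl'M, mul_one] at he'
      rw [← he']; exact hp
    · intro p hp
      refine ⟨?_, hPM hp⟩
      show p ∈ (D : Set G)
      rw [hD]; exact ⟨p, hp, 1, L.one_mem, mul_one p⟩
  -- decomposition choice
  have hdec : ∀ u : ↥U, ∃ m l : G, m ∈ M ∧ l ∈ L ∧ (u : G) = m * l := by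
    intro u
    have : (u : G) ∈ (M : Set G) * (L : Set G) := by rw [hML.prod]; exact u.2
    obtain ⟨m, hm, l, hl, he⟩ := this
    exact ⟨m, l, hm, hl, (he : m * l = (u : G)).symm⟩
  choose dm dl hdm hdl hde using hdec
  have hmain : ∀ a b : ↥U, (((a⁻¹ * b : ↥U) : G) ∈ D) ↔ ((dm a)⁻¹ * dm b ∈ P) := by
    intro a b
    have hcoe : ((a⁻¹ * b : ↥U) : G) = (a : G)⁻¹ * (b : G) := by
      simp
    constructor
    · intro hab
      rw [hcoe] at hab
      have hab2 : (a : G)⁻¹ * (b : G) ∈ (P : Set G) * (L : Set G) := by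
        rw [← hD]; exact hab
      obtain ⟨p, hp, l, hl, he⟩ := hab2
      have he' : p * l = (a : G)⁻¹ * (b : G) := he
      have hb2 : (b : G) = (dm a * p) * (dl a * l) := by
        have hcpl : dl a * p = p * dl a := (hML.comm p (hPM hp) (dl a) (hdl a)).symm
        calc (b : G) = (a : G) * ((a : G)⁻¹ * (b : G)) := by group
        _ = (a : G) * (p * l) := by rw [← he']
        _ = (dm a * dl a) * (p * l) := by rw [← hde a]
        _ = dm a * (dl a * p) * l := by group
        _ = dm a * (p * dl a) * l := by rw [hcpl]
        _ = (dm a * p) * (dl a * l) := by group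
      have huniq := hML.unique (hdm b) (hdl b) (M.mul_mem (hdm a) (hPM hp))
        (L.mul_mem (hdl a) hl) (by rw [← hde b, hb2])
      have : (dm a)⁻¹ * dm b = p := by rw [huniq.1]; group
      rw [this]; exact hp
    · intro hP'
      rw [hcoe]
      have hcp : ((dm a)⁻¹ * dm b) * (dl a)⁻¹ = (dl a)⁻¹ * ((dm a)⁻¹ * dm b) := by
        have hc : Commute ((dm a)⁻¹ * dm b) (dl a) :=
          Commute.mul_left ((hMLc (hdm a) (hdl a)).inv_left)
            (hMLc (hdm b) (hdl a))
        exact (hc.inv_right).eq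
      have hcalc : (a : G)⁻¹ * (b : G)
          = ((dm a)⁻¹ * dm b) * ((dl a)⁻¹ * dl b) := by
        calc (a : G)⁻¹ * (b : G) = (dm a * dl a)⁻¹ * (dm b * dl b) := by
              rw [← hde a, ← hde b]
        _ = (dl a)⁻¹ * ((dm a)⁻¹ * dm b) * dl b := by group
        _ = ((dm a)⁻¹ * dm b) * (dl a)⁻¹ * dl b := by rw [← hcp]
        _ = ((dm a)⁻¹ * dm b) * ((dl a)⁻¹ * dl b) := by group
      show (a : G)⁻¹ * (b : G) ∈ (D : Set G)
      rw [hD, hcalc]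
      exact Set.mul_mem_mul hP' (L.mul_mem (L.inv_mem (hdl a)) (hdl b))
  -- the injection
  have hcompat : ∀ a b : ↥U, (QuotientGroup.leftRel (D.subgroupOf U)) a b →
      (QuotientGroup.mk (⟨dm a, hdm a⟩ : ↥M) : ↥M ⧸ P.subgroupOf M)
        = QuotientGroup.mk ⟨dm b, hdm b⟩ := by
    intro a b hab
    rw [QuotientGroup.leftRel_apply, Subgroup.mem_subgroupOf] at hab
    rw [QuotientGroup.eq, Subgroup.mem_subgroupOf]
    have := (hmain a b).mp hab
    simpa using this
  refine ⟨D, hDc, hDU, hLD, hnorm, hDM, Quotient.lift _ hcompat, ?_⟩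
  intro q₁ q₂
  induction q₁ using Quotient.inductionOn with
  | h a =>
    induction q₂ using Quotient.inductionOn with
    | h b =>
      intro he
      have he' : (QuotientGroup.mk (⟨dm a, hdm a⟩ : ↥M) : ↥M ⧸ P.subgroupOf M)
          = QuotientGroup.mk ⟨dm b, hdm b⟩ := he
      rw [QuotientGroup.eq, Subgroup.mem_subgroupOf] at he'
      show QuotientGroup.mk a = QuotientGroup.mk b
      rw [QuotientGroup.eq, Subgroup.mem_subgroupOf]
      apply (hmain a b).mpr
      simpa using he'

end DFC

namespace DFD

open DFA DFB DFC

variable {G : Type*} [Group G] [TopologicalSpace G] [IsTopologicalGroup G] [T2Space G]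

theorem stab_closed (O : Subgroup G) (hOc : IsCompact (O : Set G)) (q : G ⧸ O) :
    IsClosed ((MulAction.stabilizer G q : Subgroup G) : Set G) := by
  obtain ⟨y, rfl⟩ := QuotientGroup.mk_surjective q
  have hset : ((MulAction.stabilizer G (QuotientGroup.mk y : G ⧸ O) : Subgroup G) : Set G)
      = (fun x : G => y⁻¹ * x⁻¹ * y) ⁻¹' (O : Set G) := by
    ext x
    rw [SetLike.mem_coe, MulAction.mem_stabilizer_iff]
    rw [show x • (QuotientGroup.mk y : G ⧸ O) = QuotientGroup.mk (x * y) from rfl]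
    rw [QuotientGroup.eq]
    rw [show (x * y)⁻¹ * y = y⁻¹ * x⁻¹ * y by group]
    rfl
  rw [hset]
  exact hOc.isClosed.preimage
    ((continuous_const.mul continuous_inv).mul continuous_const)

theorem exists_W (O U : Subgroup G) (hUc : IsCompact (U : Set G)) (hUo : IsOpen (U : Set G))
    (hOc : IsCompact (O : Set G)) (hOo : IsOpen (O : Set G)) :
    ∃ W : Subgroup G, IsOpen (W : Set G) ∧ IsClosed (W : Set G) ∧ W ≤ O ∧ W ≤ U ∧
      (∀ u ∈ U, ∀ x ∈ W, u * x * u⁻¹ ∈ W) := by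
  classical
  set A₀ : Subgroup G := O ⊓ U with hA₀def
  have hA₀o : IsOpen (A₀ : Set G) := by
    rw [hA₀def, Subgroup.coe_inf]; exact hOo.inter hUo
  have hA₀c : IsClosed (A₀ : Set G) := by
    rw [hA₀def, Subgroup.coe_inf]; exact hOc.isClosed.inter hUc.isClosed
  have hmul : ∀ x y : G, (∀ u ∈ U, u⁻¹ * x * u ∈ A₀) → (∀ u ∈ U, u⁻¹ * y * u ∈ A₀) →
      ∀ u ∈ U, u⁻¹ * (x * y) * u ∈ A₀ := by
    intro x y hx hy u hu
    have h : u⁻¹ * (x * y) * u = (u⁻¹ * x * u) * (u⁻¹ * y * u) := by group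
    rw [h]
    exact A₀.mul_mem (hx u hu) (hy u hu)
  have hone : ∀ u ∈ U, u⁻¹ * (1 : G) * u ∈ A₀ := by
    intro u hu; simpa using A₀.one_mem
  have hinv : ∀ x : G, (∀ u ∈ U, u⁻¹ * x * u ∈ A₀) → ∀ u ∈ U, u⁻¹ * x⁻¹ * u ∈ A₀ := by
    intro x hx u hu
    have h : u⁻¹ * x⁻¹ * u = (u⁻¹ * x * u)⁻¹ := by group
    rw [h]
    exact A₀.inv_mem (hx u hu)
  refine ⟨⟨⟨⟨{x : G | ∀ u ∈ U, u⁻¹ * x * u ∈ A₀},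
    fun {a b} ha hb => hmul a b ha hb⟩, hone⟩,
    fun {a} ha => hinv a ha⟩, ?_, ?_, ?_, ?_, ?_⟩
  · -- open
    obtain ⟨t, hfin, hsub, hcov⟩ := DFB.exists_cover (U := U) (A := A₀) hUc hA₀o
    show IsOpen {x : G | ∀ u ∈ U, u⁻¹ * x * u ∈ A₀}
    have hWeq : {x : G | ∀ u ∈ U, u⁻¹ * x * u ∈ A₀}
        = ⋂ u ∈ t, (fun x : G => u⁻¹ * x * u) ⁻¹' (A₀ : Set G) := by
      ext x
      simp only [Set.mem_iInter, Set.mem_preimage, Set.mem_setOf_eq]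
      constructor
      · intro h u hu
        exact h u (hsub hu)
      · intro h u hu
        obtain ⟨u₀, hu₀, hmem⟩ := Set.mem_iUnion₂.mp (hcov hu)
        obtain ⟨a, ha, he⟩ := hmem
        have he' : u₀ * a = u := he
        have key : u⁻¹ * x * u = a⁻¹ * (u₀⁻¹ * x * u₀) * a := by rw [← he']; group
        rw [key]
        exact A₀.mul_mem (A₀.mul_mem (A₀.inv_mem ha) (h u₀ hu₀)) ha
    rw [hWeq]
    exact hfin.isOpen_biInter (fun u _ =>
      hA₀o.preimage ((continuous_const.mul continuous_id).mul continuous_const))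
  · -- closed
    show IsClosed {x : G | ∀ u ∈ U, u⁻¹ * x * u ∈ A₀}
    have hWeq : {x : G | ∀ u ∈ U, u⁻¹ * x * u ∈ A₀}
        = ⋂ u ∈ (U : Set G), (fun x : G => u⁻¹ * x * u) ⁻¹' (A₀ : Set G) := by
      ext x
      simp only [Set.mem_iInter, Set.mem_preimage, Set.mem_setOf_eq]
      rfl
    rw [hWeq]
    exact isClosed_biInter (fun u _ =>
      hA₀c.preimage ((continuous_const.mul continuous_id).mul continuous_const))
  · -- ≤ O
    intro x hx
    have hx' : ∀ u ∈ U, u⁻¹ * x * u ∈ A₀ := hx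
    have := hx' 1 U.one_mem
    simp only [inv_one, one_mul, mul_one] at this
    rw [hA₀def] at this
    exact this.1
  · -- ≤ U
    intro x hx
    have hx' : ∀ u ∈ U, u⁻¹ * x * u ∈ A₀ := hx
    have := hx' 1 U.one_mem
    simp only [inv_one, one_mul, mul_one] at this
    rw [hA₀def] at this
    exact this.2
  · -- U-normality
    intro u hu x hx
    have hx' : ∀ w ∈ U, w⁻¹ * x * w ∈ A₀ := hx
    show ∀ w ∈ U, w⁻¹ * (u * x * u⁻¹) * w ∈ A₀
    intro w hw
    have key : w⁻¹ * (u * x * u⁻¹) * w = (u⁻¹ * w)⁻¹ * x * (u⁻¹ * w) := by group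
    rw [key]
    exact hx' (u⁻¹ * w) (U.mul_mem (U.inv_mem hu) hw)

theorem relindex_facts {U D : Subgroup G} {α : Type*} [Finite α]
    (f : (↥U ⧸ D.subgroupOf U) → α) (hf : Function.Injective f) :
    D.relIndex U ≠ 0 ∧ D.relIndex U ≤ Nat.card α := by
  haveI hq : Finite (↥U ⧸ D.subgroupOf U) := Finite.of_injective f hf
  haveI : Nonempty (↥U ⧸ D.subgroupOf U) := ⟨QuotientGroup.mk 1⟩
  constructor
  · show (D.subgroupOf U).index ≠ 0
    rw [Subgroup.index_eq_card]
    exact Nat.card_pos.ne'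
  · show (D.subgroupOf U).index ≤ _
    rw [Subgroup.index_eq_card]
    exact Nat.card_le_card_of_injective f hf

end DFD

namespace DFE

open DFA DFB DFC DFD

variable {G : Type*} [Group G] [TopologicalSpace G] [IsTopologicalGroup G] [T2Space G]

theorem key {O U M L : Subgroup G} (hUc : IsCompact (U : Set G))
    (hOc : IsCompact (O : Set G))
    (hML : DFA.IsFP U M L) (hMO : M ≤ O) (hMne : M ≠ ⊥)
    (hcore : ∀ x : G, (∀ g : G, g⁻¹ * x * g ∈ O) → x = 1)
    {F' T : Set G} (hTdef : T = (O : Set G) ∪ F')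
    (hTexh : ∀ g : G, ∃ n : ℕ, g ∈ T ^ n)
    {R : Finset G}
    (hR : ∀ f ∈ F', (O : Set G) * {f} * (O : Set G) ⊆ ⋃ r ∈ R, r • (O : Set G)) :
    ∃ P : Subgroup G, P ≤ M ∧ IsClosed (P : Set G) ∧
      (∀ m ∈ M, ∀ x ∈ P, m * x * m⁻¹ ∈ P) ∧ P ≠ M ∧
      Finite (↥M ⧸ P.subgroupOf M) ∧
      Nat.card (↥M ⧸ P.subgroupOf M) ≤ (R.card + 1) ^ (R.card + 1) := by
  classical
  -- an escaping pair exists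
  have hesc : ∃ n : ℕ, ∃ g ∈ T ^ n, ∃ m ∈ M, g⁻¹ * m * g ∉ O := by
    have hex1 : ∃ m₀ ∈ M, m₀ ≠ (1 : G) := by
      by_contra h
      push_neg at h
      apply hMne
      rw [eq_bot_iff]
      intro x hx
      rw [Subgroup.mem_bot]
      exact h x hx
    obtain ⟨m₀, hm₀M, hm₀⟩ := hex1
    have h2 : ¬ ∀ g : G, g⁻¹ * m₀ * g ∈ O := fun h => hm₀ (hcore m₀ h)
    push_neg at h2
    obtain ⟨g, hg⟩ := h2
    obtain ⟨n, hn⟩ := hTexh g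
    exact ⟨n, g, hn, m₀, hm₀M, hg⟩
  set n := Nat.find hesc with hn
  obtain ⟨g, hgT, m₀, hm₀M, hm₀esc⟩ := Nat.find_spec hesc
  rw [← hn] at hgT
  have hnpos : n ≠ 0 := by
    intro h0
    rw [h0, pow_zero, Set.mem_one] at hgT
    subst hgT
    apply hm₀esc
    simpa using hMO hm₀M
  obtain ⟨k, hk⟩ := Nat.exists_eq_succ_of_ne_zero hnpos
  rw [hk, pow_succ] at hgT
  obtain ⟨p, hp, t, ht, hgpt'⟩ := hgT
  have hgpt : p * t = g := hgpt'
  have hmin : ∀ m ∈ M, p⁻¹ * m * p ∈ O := by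
    have hlt : k < n := by rw [hk]; exact Nat.lt_succ_self k
    have hmin' := Nat.find_min hesc hlt
    push_neg at hmin'
    exact hmin' p hp
  have htF : t ∈ F' := by
    rw [hTdef] at ht
    rcases ht with htO | htF
    · exfalso
      apply hm₀esc
      have hcomp : g⁻¹ * m₀ * g = t⁻¹ * (p⁻¹ * m₀ * p) * t := by rw [← hgpt]; group
      rw [hcomp]
      exact O.mul_mem (O.mul_mem (O.inv_mem htO) (hmin m₀ hm₀M)) htO
    · exact htF
  -- the finite invariant vertex set
  set Y : Set G := (fun y => p * y) '' ((O : Set G) * F' * (O : Set G)) with hY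
  set Z : Set (G ⧸ O) := QuotientGroup.mk '' Y with hZ
  have hZsub : Z ⊆ (fun r => (QuotientGroup.mk (p * r) : G ⧸ O)) '' (R : Set G) := by
    rintro z ⟨y, ⟨x, hx, rfl⟩, rfl⟩
    obtain ⟨w, hw, o₂, ho₂, hxe⟩ := hx
    obtain ⟨o₁, ho₁, f, hf, hwe⟩ := hw
    have hwe' : o₁ * f = w := hwe
    have hxe' : w * o₂ = x := hxe
    have hxOfO : x ∈ (O : Set G) * {f} * (O : Set G) := by
      rw [← hxe', ← hwe']
      exact Set.mul_mem_mul (Set.mul_mem_mul ho₁ rfl) ho₂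
    have hcover := hR f hf hxOfO
    rw [Set.mem_iUnion₂] at hcover
    obtain ⟨r, hr, hxr⟩ := hcover
    obtain ⟨o, ho, hoe⟩ := hxr
    have hoe' : r * o = x := hoe
    refine ⟨r, hr, ?_⟩
    show (QuotientGroup.mk (p * r) : G ⧸ O) = QuotientGroup.mk (p * x)
    have hpx : p * x = (p * r) * o := by rw [← hoe']; group
    rw [hpx]
    exact (QuotientGroup.mk_mul_of_mem (p * r) ho).symm
  have hZfin : Z.Finite := (R.finite_toSet.image _).subset hZsub
  haveI hZfinite : Finite ↥Z := hZfin.to_subtype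
  have hZcard : Nat.card ↥Z ≤ R.card := by
    rw [Nat.card_coe_set_eq]
    calc Z.ncard ≤ ((fun r => (QuotientGroup.mk (p * r) : G ⧸ O)) '' (R : Set G)).ncard :=
      Set.ncard_le_ncard hZsub (R.finite_toSet.image _)
    _ ≤ (R : Set G).ncard := Set.ncard_image_le R.finite_toSet
    _ = R.card := Set.ncard_coe_finset R
  -- invariance of Y and Z under M
  have hMY : ∀ m ∈ M, ∀ y ∈ Y, m * y ∈ Y := by
    rintro m hm y ⟨x, hx, rfl⟩
    refine ⟨(p⁻¹ * m * p) * x, ?_, ?_⟩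
    · obtain ⟨w, hw, o₂, ho₂, hxe⟩ := hx
      obtain ⟨o₁, ho₁, f, hf, hwe⟩ := hw
      have hxe' : w * o₂ = x := hxe
      have hwe' : o₁ * f = w := hwe
      have hre : (p⁻¹ * m * p) * x = (((p⁻¹ * m * p) * o₁) * f) * o₂ := by
        rw [← hxe', ← hwe']; group
      rw [hre]
      exact Set.mul_mem_mul (Set.mul_mem_mul (O.mul_mem (hmin m hm) ho₁) hf) ho₂
    · show p * ((p⁻¹ * m * p) * x) = m * ((fun y => p * y) x)
      show p * ((p⁻¹ * m * p) * x) = m * (p * x)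
      group
  have hZinv : ∀ m ∈ M, ∀ z ∈ Z, m • z ∈ Z := by
    rintro m hm z ⟨y, hy, rfl⟩
    exact ⟨m * y, hMY m hm y hy, rfl⟩
  -- the kernel P
  set P : Subgroup G := M ⊓ (⨅ z : ↥Z, MulAction.stabilizer G (z : G ⧸ O)) with hP
  have hPmem : ∀ x : G, x ∈ P ↔ x ∈ M ∧ ∀ z ∈ Z, x • z = z := by
    intro x
    rw [hP, Subgroup.mem_inf, Subgroup.mem_iInf]
    constructor
    · rintro ⟨h1, h2⟩
      exact ⟨h1, fun z hz => MulAction.mem_stabilizer_iff.mp (h2 ⟨z, hz⟩)⟩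
    · rintro ⟨h1, h2⟩
      exact ⟨h1, fun z => MulAction.mem_stabilizer_iff.mpr (h2 z z.2)⟩
  have hPM : P ≤ M := inf_le_left
  have hPc : IsClosed (P : Set G) := by
    rw [hP, Subgroup.coe_inf]
    refine hML.closedA.inter ?_
    rw [Subgroup.coe_iInf]
    exact isClosed_iInter (fun z => stab_closed O hOc _)
  have hPnorm : ∀ m ∈ M, ∀ x ∈ P, m * x * m⁻¹ ∈ P := by
    intro m hm x hx
    rw [hPmem] at hx ⊢
    refine ⟨M.mul_mem (M.mul_mem hm hx.1) (M.inv_mem hm), ?_⟩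
    intro z hz
    have h1 : m⁻¹ • z ∈ Z := hZinv m⁻¹ (M.inv_mem hm) z hz
    have h2 : x • (m⁻¹ • z) = m⁻¹ • z := hx.2 _ h1
    calc (m * x * m⁻¹) • z = m • x • m⁻¹ • z := by rw [mul_smul, mul_smul]
    _ = m • m⁻¹ • z := by rw [h2]
    _ = z := smul_inv_smul m z
  have hPne : P ≠ M := by
    intro hPeq
    have hm₀P : m₀ ∈ P := by rw [hPeq]; exact hm₀M
    rw [hPmem] at hm₀P
    have hgZ : (QuotientGroup.mk g : G ⧸ O) ∈ Z := by
      refine ⟨g, ⟨(1 : G) * t * 1, ?_, ?_⟩, rfl⟩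
      · exact Set.mul_mem_mul (Set.mul_mem_mul O.one_mem htF) O.one_mem
      · show p * ((1 : G) * t * 1) = g
        rw [← hgpt]; group
    have hfix := hm₀P.2 _ hgZ
    apply hm₀esc
    have h1 : (QuotientGroup.mk (m₀ * g) : G ⧸ O) = QuotientGroup.mk g := hfix
    rw [QuotientGroup.eq] at h1
    have h2 : (m₀ * g)⁻¹ * g = g⁻¹ * m₀⁻¹ * g := by group
    rw [h2] at h1
    have h3 := O.inv_mem h1
    have h4 : (g⁻¹ * m₀⁻¹ * g)⁻¹ = g⁻¹ * m₀ * g := by group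
    rwa [h4] at h3
  -- the injection into self-maps of Z
  have hair : ∀ m : ↥M, ∀ z : ↥Z, ((m : G) • (z : G ⧸ O)) ∈ Z :=
    fun m z => hZinv (m : G) m.2 (z : G ⧸ O) z.2
  set Φ : ↥M → (↥Z → ↥Z) := fun m z => ⟨(m : G) • (z : G ⧸ O), hair m z⟩ with hΦ
  have hΦiff : ∀ a b : ↥M, Φ a = Φ b ↔ ((a⁻¹ * b : ↥M) : G) ∈ P := by
    intro a b
    have hcoe : ((a⁻¹ * b : ↥M) : G) = (a : G)⁻¹ * (b : G) := by simp
    constructor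
    · intro he
      rw [hcoe, hPmem]
      refine ⟨M.mul_mem (M.inv_mem a.2) b.2, ?_⟩
      intro z hz
      have := congrFun he ⟨z, hz⟩
      have hval : (a : G) • z = (b : G) • z := congrArg Subtype.val this
      calc ((a : G)⁻¹ * (b : G)) • z = (a : G)⁻¹ • (b : G) • z := mul_smul _ _ _
      _ = (a : G)⁻¹ • (a : G) • z := by rw [hval]
      _ = z := inv_smul_smul _ _
    · intro hmem
      rw [hcoe, hPmem] at hmem
      funext z
      apply Subtype.ext
      show (a : G) • (z : G ⧸ O) = (b : G) • (z : G ⧸ O)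
      have hfix := hmem.2 (z : G ⧸ O) z.2
      calc (a : G) • (z : G ⧸ O) = (a : G) • ((a : G)⁻¹ * (b : G)) • (z : G ⧸ O) := by
            rw [hfix]
      _ = ((a : G) * ((a : G)⁻¹ * (b : G))) • (z : G ⧸ O) := (mul_smul _ _ _).symm
      _ = (b : G) • (z : G ⧸ O) := by rw [show (a : G) * ((a : G)⁻¹ * (b : G)) = (b : G) by group]
  have hcompat : ∀ a b : ↥M, (QuotientGroup.leftRel (P.subgroupOf M)) a b → Φ a = Φ b := by
    intro a b hab
    rw [QuotientGroup.leftRel_apply, Subgroup.mem_subgroupOf] at hab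
    exact (hΦiff a b).mpr hab
  have hinj : Function.Injective (Quotient.lift Φ hcompat :
      (↥M ⧸ P.subgroupOf M) → (↥Z → ↥Z)) := by
    intro q₁ q₂
    induction q₁ using Quotient.inductionOn with
    | h a =>
      induction q₂ using Quotient.inductionOn with
      | h b =>
        intro he
        have he' : Φ a = Φ b := he
        show QuotientGroup.mk a = QuotientGroup.mk b
        rw [QuotientGroup.eq, Subgroup.mem_subgroupOf]
        exact (hΦiff a b).mp he'
  haveI hGfin : Finite (↥M ⧸ P.subgroupOf M) := Finite.of_injective _ hinj
  refine ⟨P, hPM, hPc, hPnorm, hPne, hGfin, ?_⟩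
  have hcard1 : Nat.card (↥M ⧸ P.subgroupOf M) ≤ Nat.card (↥Z → ↥Z) :=
    Nat.card_le_card_of_injective _ hinj
  have hcard2 : Nat.card (↥Z → ↥Z) = Nat.card ↥Z ^ Nat.card ↥Z := Nat.card_fun
  have ha : Nat.card ↥Z ≤ R.card + 1 := le_trans hZcard (Nat.le_succ _)
  calc Nat.card (↥M ⧸ P.subgroupOf M) ≤ Nat.card ↥Z ^ Nat.card ↥Z := by
        rw [← hcard2]; exact hcard1
  _ ≤ (R.card + 1) ^ Nat.card ↥Z := Nat.pow_le_pow_left ha _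
  _ ≤ (R.card + 1) ^ (R.card + 1) := Nat.pow_le_pow_right (Nat.succ_le_succ (Nat.zero_le _)) ha

end DFE


/-- Lemma 2.5: a nontrivial compactly generated t.d.l.c. group that is locally of finite
quotient type, with trivial quasi-centre and some compact open subgroup with trivial
normal core, has only finitely many direct factors of each compact open subgroup. -/
theorem finitely_many_direct_factors {G : Type*} [Group G] [TopologicalSpace G]
    [IsTopologicalGroup G] [LocallyCompactSpace G] [TotallyDisconnectedSpace G] [T2Space G]
    [Nontrivial G]
    (hcg : CompactlyGeneratedGrp G)
    (hfqt : LocallyFiniteQuotientType G)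
    (hQZ : ∀ g : G, InQuasiCentre g → g = 1)
    (O : Subgroup G) (hOc : IsCompact (O : Set G)) (hOo : IsOpen (O : Set G))
    (hcore : ∀ x : G, (∀ g : G, g⁻¹ * x * g ∈ O) → x = 1)
    (U : Subgroup G) (hUc : IsCompact (U : Set G)) (hUo : IsOpen (U : Set G)) :
    {K : Subgroup G | IsClosed (K : Set G) ∧ K ≤ U ∧ ∃ L : Subgroup G,
      IsClosed (L : Set G) ∧ L ≤ U ∧ K ⊓ L = ⊥ ∧
      (∀ k ∈ K, ∀ l ∈ L, k * l = l * k) ∧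
      (K : Set G) * (L : Set G) = (U : Set G)}.Finite := by
  classical
  by_contra hfin
  -- step 0 : the centre of U is trivial, by triviality of the quasi-centre
  have hZ1 : ∀ z ∈ U, (∀ u ∈ U, z * u = u * z) → z = 1 := by
    intro z hzU hcomm
    apply hQZ z
    have hle : U ≤ Subgroup.centralizer {z} := by
      intro u hu
      rw [Subgroup.mem_centralizer_iff]
      intro h hh
      rw [Set.mem_singleton_iff] at hh
      subst hh
      exact hcomm u hu
    exact Subgroup.isOpen_mono hle hUo
  -- step 1 : infinitely many factors, hence an infinite separated family of factors
  have hinfU : (DFA.Fac U).Infinite := by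
    intro hFacFin
    apply hfin
    apply hFacFin.subset
    rintro K ⟨hKc, hKU, L, hLc, hLU, hKL, hcm, hprod⟩
    exact ⟨L, hKc, hLc, hKL, hcm, hprod⟩
  obtain ⟨Mf, Lf, hFP, hMne, hpair⟩ := DFA.exists_seq hZ1 hUc hinfU
  have hMle : ∀ j, Mf j ≤ U := fun j => (hFP j).leA
  -- step 2 : the open U-normal subgroup W of U inside O
  obtain ⟨W, hWo, hWc, hWO, hWU, hWnorm⟩ := DFD.exists_W O U hUc hUo hOc hOo
  have hWrel := DFB.relindex_ne_zero_of_open hUc hWo hWU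
  haveI hWfin : Finite (↥U ⧸ W.subgroupOf U) := by
    have hcne : Nat.card (↥U ⧸ W.subgroupOf U) ≠ 0 := by
      rw [← Subgroup.index_eq_card]
      exact hWrel
    exact (Nat.card_ne_zero.mp hcne).2
  set B₁ := W.relIndex U with hB₁
  have hB₁card : Nat.card (↥U ⧸ W.subgroupOf U) = B₁ := (Subgroup.index_eq_card _).symm
  -- the finite collections of open U-normal subgroups of bounded index
  have hNfin : ∀ B : ℕ, {N : Subgroup G | N ≤ U ∧ IsOpen (N : Set G) ∧
      (∀ u ∈ U, ∀ x ∈ N, u * x * u⁻¹ ∈ N) ∧ N.relIndex U ≠ 0 ∧ N.relIndex U ≤ B}.Finite := by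
    intro B
    have hsub : {N : Subgroup G | N ≤ U ∧ IsOpen (N : Set G) ∧
        (∀ u ∈ U, ∀ x ∈ N, u * x * u⁻¹ ∈ N) ∧ N.relIndex U ≠ 0 ∧ N.relIndex U ≤ B} ⊆
        ⋃ n ∈ (Finset.Icc 1 B : Finset ℕ), {N : Subgroup G | N ≤ U ∧ IsOpen (N : Set G) ∧
          (∀ u ∈ U, ∀ x ∈ N, u * x * u⁻¹ ∈ N) ∧ N.relIndex U = n} := by
      rintro N ⟨h1, h2, h3, h4, h5⟩
      have hmem : N.relIndex U ∈ (Finset.Icc 1 B : Finset ℕ) :=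
        Finset.mem_Icc.mpr ⟨Nat.one_le_iff_ne_zero.mpr h4, h5⟩
      exact Set.mem_biUnion hmem ⟨h1, h2, h3, rfl⟩
    refine Set.Finite.subset (Set.Finite.biUnion (Finset.Icc 1 B).finite_toSet ?_) hsub
    intro n hn
    exact hfqt U hUc hUo n (lt_of_lt_of_le Nat.zero_lt_one (Finset.mem_Icc.mp hn).1)
  -- step 3 (round 1) : only finitely many j with Mf j ⊄ W
  have hround1 : {j : ℕ | ¬ Mf j ≤ W}.Finite := by
    have hDex : ∀ j : ℕ, ∃ D : Subgroup G, IsClosed (D : Set G) ∧ D ≤ U ∧ Lf j ≤ D ∧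
        (∀ u ∈ U, ∀ x ∈ D, u * x * u⁻¹ ∈ D) ∧ D ⊓ Mf j = W ⊓ Mf j ∧
        D.relIndex U ≠ 0 ∧ D.relIndex U ≤ B₁ := by
      intro j
      have hPc : IsClosed ((W ⊓ Mf j : Subgroup G) : Set G) := by
        rw [Subgroup.coe_inf]; exact hWc.inter (hFP j).closedA
      have hPnorm : ∀ m ∈ Mf j, ∀ x ∈ W ⊓ Mf j, m * x * m⁻¹ ∈ W ⊓ Mf j := by
        intro m hm x hx
        exact ⟨hWnorm m (hMle j hm) x hx.1, (hFP j).conj_mem (hMle j hm) hx.2⟩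
      obtain ⟨D, hD1, hD2, hD3, hD4, hD5, f, hfinj⟩ :=
        DFC.exists_D hUc (hFP j) inf_le_right hPc hPnorm
      obtain ⟨f₂, hf₂⟩ := DFB.quot_inj_of_le (hMle j) W
      have hrel := DFD.relindex_facts (f₂ ∘ f) (hf₂.comp hfinj)
      refine ⟨D, hD1, hD2, hD3, hD4, hD5, hrel.1, ?_⟩
      calc D.relIndex U ≤ Nat.card (↥U ⧸ W.subgroupOf U) := hrel.2
      _ = B₁ := hB₁card
    choose Dj hD1 hD2 hD3 hD4 hD5 hD6 hD7 using hDex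
    have hinj : Set.InjOn Dj {j : ℕ | ¬ Mf j ≤ W} := by
      intro j hj k hk he
      by_contra hne
      have h1 : Mf k ≤ Dj j := le_trans (hpair j k hne) (hD3 j)
      rw [he] at h1
      have h2 : Mf k ≤ W := by
        intro x hx
        have hmem : x ∈ Dj k ⊓ Mf k := ⟨h1 hx, hx⟩
        rw [hD5 k] at hmem
        exact hmem.1
      exact hk h2
    refine Set.Finite.of_finite_image ?_ hinj
    refine (hNfin B₁).subset ?_
    rintro N ⟨j, hj, rfl⟩
    exact ⟨hD2 j, DFB.isOpen_of_closed_of_relindex hUo (hD1 j) (hD2 j) (hD6 j),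
      hD4 j, hD6 j, hD7 j⟩
  -- step 4 : compact generation, the word machinery
  obtain ⟨S, hSc, hStop⟩ := hcg
  have hcovS : S ⊆ ⋃ g : G, g • (O : Set G) := by
    intro x _
    exact Set.mem_iUnion.mpr ⟨x, ⟨1, O.one_mem, mul_one x⟩⟩
  obtain ⟨t₀, ht₀⟩ := hSc.elim_finite_subcover (fun g : G => g • (O : Set G))
    (fun g => hOo.smul g) hcovS
  set F' : Set G := (↑t₀ : Set G) ∪ ((↑t₀ : Set G))⁻¹ with hF'
  set T : Set G := (O : Set G) ∪ F' with hT
  have hTinv : T⁻¹ = T := by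
    rw [hT, hF']
    have h1 : ((O : Set G) ∪ ((↑t₀ : Set G) ∪ (↑t₀ : Set G)⁻¹))⁻¹
        = (O : Set G)⁻¹ ∪ ((↑t₀ : Set G)⁻¹ ∪ ((↑t₀ : Set G)⁻¹)⁻¹) := rfl
    rw [h1, inv_coe_set, inv_inv]
    congr 1
    exact Set.union_comm _ _
  have hTninv : ∀ n : ℕ, (T ^ n)⁻¹ = T ^ n := by
    intro n
    induction n with
    | zero => rw [pow_zero]; exact inv_one
    | succ n ih =>
      rw [pow_succ, mul_inv_rev, ih, hTinv, ← pow_succ']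
      exact pow_succ T n
  have hH : ∃ H : Subgroup G, (H : Set G) = ⋃ n : ℕ, T ^ n := by
    refine ⟨⟨⟨⟨⋃ n : ℕ, T ^ n, ?_⟩, ?_⟩, ?_⟩, rfl⟩
    · rintro x y hx hy
      obtain ⟨sx, ⟨m, rfl⟩, hxm⟩ := hx
      obtain ⟨sy, ⟨n, rfl⟩, hyn⟩ := hy
      refine Set.mem_iUnion.mpr ⟨m + n, ?_⟩
      rw [pow_add]
      exact Set.mul_mem_mul hxm hyn
    · refine Set.mem_iUnion.mpr ⟨0, ?_⟩
      rw [pow_zero]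
      exact Set.mem_one.mpr rfl
    · rintro x hx
      obtain ⟨sx, ⟨n, rfl⟩, hxn⟩ := hx
      refine Set.mem_iUnion.mpr ⟨n, ?_⟩
      rw [← hTninv n]
      rw [Set.mem_inv, inv_inv]
      exact hxn
  obtain ⟨H, hHeq⟩ := hH
  have hHtop : (⊤ : Subgroup G) ≤ H := by
    rw [← hStop]
    rw [Subgroup.closure_le]
    intro s hs
    have hsc := ht₀ hs
    rw [Set.mem_iUnion₂] at hsc
    obtain ⟨g, hg, hmem⟩ := hsc
    obtain ⟨a, ha, he⟩ := hmem
    have he' : g * a = s := he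
    show s ∈ (H : Set G)
    rw [hHeq]
    refine Set.mem_iUnion.mpr ⟨2, ?_⟩
    rw [pow_two, ← he']
    refine Set.mul_mem_mul ?_ ?_
    · rw [hT, hF']
      exact Or.inr (Or.inl hg)
    · rw [hT]
      exact Or.inl ha
  have hTexh : ∀ g : G, ∃ n : ℕ, g ∈ T ^ n := by
    intro g
    have hmem : g ∈ (H : Set G) := hHtop (Subgroup.mem_top g)
    rw [hHeq] at hmem
    obtain ⟨s, ⟨n, rfl⟩, hn⟩ := hmem
    exact ⟨n, hn⟩
  -- the uniform coset cover
  have hcovf : ∀ f : G, ∃ Rf : Finset G,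
      (O : Set G) * {f} * (O : Set G) ⊆ ⋃ r ∈ Rf, r • (O : Set G) := by
    intro f
    have hcomp : IsCompact ((O : Set G) * {f} * (O : Set G)) :=
      (hOc.mul isCompact_singleton).mul hOc
    apply hcomp.elim_finite_subcover (fun g : G => g • (O : Set G)) (fun g => hOo.smul g)
    intro x _
    exact Set.mem_iUnion.mpr ⟨x, ⟨1, O.one_mem, mul_one x⟩⟩
  choose Rf hRf using hcovf
  set R : Finset G := (t₀ ∪ t₀.image (fun x => x⁻¹)).biUnion Rf with hRdef
  have hR : ∀ f ∈ F', (O : Set G) * {f} * (O : Set G) ⊆ ⋃ r ∈ R, r • (O : Set G) := by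
    intro f hf
    have hfF : f ∈ t₀ ∪ t₀.image (fun x => x⁻¹) := by
      rw [hF'] at hf
      rcases hf with h | h
      · exact Finset.mem_union_left _ h
      · refine Finset.mem_union_right _ ?_
        rw [Finset.mem_image]
        rw [Set.mem_inv] at h
        exact ⟨f⁻¹, h, inv_inv f⟩
    intro x hx
    obtain ⟨r, hr, hrx⟩ := Set.mem_iUnion₂.mp (hRf f hx)
    exact Set.mem_biUnion (Finset.mem_biUnion.mpr ⟨f, hfF, hr⟩) hrx
  set B₂ := (R.card + 1) ^ (R.card + 1) with hB₂
  -- step 5 (round 2) : only finitely many j with Mf j ≤ W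
  have hround2 : {j : ℕ | Mf j ≤ W}.Finite := by
    have hDex : ∀ j : ℕ, Mf j ≤ W → ∃ D : Subgroup G, IsClosed (D : Set G) ∧ D ≤ U ∧
        Lf j ≤ D ∧ (∀ u ∈ U, ∀ x ∈ D, u * x * u⁻¹ ∈ D) ∧ D ⊓ Mf j ≠ Mf j ∧
        D.relIndex U ≠ 0 ∧ D.relIndex U ≤ B₂ := by
      intro j hjW
      obtain ⟨P, hPM, hPc, hPnorm, hPne, hPfin, hPcard⟩ :=
        DFE.key hUc hOc (hFP j) (le_trans hjW hWO) (hMne j) hcore hT hTexh hR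
      obtain ⟨D, hD1, hD2, hD3, hD4, hD5, f, hfinj⟩ :=
        DFC.exists_D hUc (hFP j) hPM hPc hPnorm
      haveI := hPfin
      have hrel := DFD.relindex_facts f hfinj
      refine ⟨D, hD1, hD2, hD3, hD4, ?_, hrel.1, le_trans hrel.2 hPcard⟩
      rw [hD5]
      exact fun h => hPne h
    set Dj2 : ℕ → Subgroup G := fun j =>
      if h : Mf j ≤ W then (hDex j h).choose else ⊥ with hDj2
    have hprops : ∀ j, (h : Mf j ≤ W) → IsClosed ((Dj2 j : Subgroup G) : Set G) ∧
        Dj2 j ≤ U ∧ Lf j ≤ Dj2 j ∧ (∀ u ∈ U, ∀ x ∈ Dj2 j, u * x * u⁻¹ ∈ Dj2 j) ∧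
        Dj2 j ⊓ Mf j ≠ Mf j ∧ (Dj2 j).relIndex U ≠ 0 ∧ (Dj2 j).relIndex U ≤ B₂ := by
      intro j h
      have : Dj2 j = (hDex j h).choose := by rw [hDj2]; simp only [dif_pos h]
      rw [this]
      exact (hDex j h).choose_spec
    have hinj : Set.InjOn Dj2 {j : ℕ | Mf j ≤ W} := by
      intro j hj k hk he
      by_contra hne
      have h1 : Mf k ≤ Dj2 j := le_trans (hpair j k hne) (hprops j hj).2.2.1
      rw [he] at h1
      have h2 : Dj2 k ⊓ Mf k = Mf k :=
        le_antisymm inf_le_right (fun x hx => ⟨h1 hx, hx⟩)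
      exact (hprops k hk).2.2.2.2.1 h2
    refine Set.Finite.of_finite_image ?_ hinj
    refine (hNfin B₂).subset ?_
    rintro N ⟨j, hj, rfl⟩
    have hp := hprops j hj
    exact ⟨hp.2.1, DFB.isOpen_of_closed_of_relindex hUo hp.1 hp.2.1 hp.2.2.2.2.2.1,
      hp.2.2.2.1, hp.2.2.2.2.2.1, hp.2.2.2.2.2.2⟩
  -- step 6 : contradiction
  have huniv : (Set.univ : Set ℕ).Finite := by
    have hsub : (Set.univ : Set ℕ) ⊆ {j | ¬ Mf j ≤ W} ∪ {j | Mf j ≤ W} := by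
      intro j _
      by_cases h : Mf j ≤ W
      · exact Or.inr h
      · exact Or.inl h
    exact (hround1.union hround2).subset hsub
  exact Set.infinite_univ huniv
end

section
/- Let G be a t.d.l.c. group and let (K,U) be a TMS pair of G. Then: (i) K is infinite and has compact closure (in particular K is nondiscrete), and (g K̄ g^{-1}, U) is a TMS pair of G for every g ∈ G, where K̄ denotes the closure of K; (ii) for every compact normal subgroup M of G, the pair (KM/M, UM/M) is a TMS pair of the quotient group G/M. -/
open scoped Pointwise

section Helpers

open Function

variable {G : Type*} [Group G] [TopologicalSpace G] [IsTopologicalGroup G]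

private lemma forall_mem_closure_iff {K S : Set G} (hS : IsClosed S) (x : G) :
    (∀ k ∈ closure K, x * k * x⁻¹ ∈ S) ↔ ∀ k ∈ K, x * k * x⁻¹ ∈ S := by
  constructor
  · exact fun h k hk => h k (subset_closure hk)
  · intro h k hk
    have hsub : closure K ⊆ (fun k => x * k * x⁻¹) ⁻¹' S :=
      closure_minimal h (hS.preimage (by fun_prop))
    exact hsub hk

private lemma conj_forall_iff {K : Subgroup G} {S : Set G} (hS : IsClosed S) (x g : G) :
    (∀ k ∈ (K.topologicalClosure).map (MulAut.conj g).toMonoidHom, x * k * x⁻¹ ∈ S) ↔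
      ∀ k ∈ K, (x * g) * k * (x * g)⁻¹ ∈ S := by
  constructor
  · intro H k hk
    have hmem : g * k * g⁻¹ ∈ (K.topologicalClosure).map (MulAut.conj g).toMonoidHom :=
      ⟨k, K.le_topologicalClosure hk, rfl⟩
    have h2 := H _ hmem
    have e : x * (g * k * g⁻¹) * x⁻¹ = (x * g) * k * (x * g)⁻¹ := by group
    rwa [e] at h2
  · intro H k hk
    obtain ⟨k₀, hk₀, rfl⟩ := Subgroup.mem_map.mp hk
    have hk₀' : k₀ ∈ closure (K : Set G) := by
      rwa [← SetLike.mem_coe, Subgroup.topologicalClosure_coe] at hk₀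
    have h2 := (forall_mem_closure_iff hS (x * g)).2 H k₀ hk₀'
    show x * ((MulAut.conj g) k₀) * x⁻¹ ∈ S
    have e : x * ((MulAut.conj g) k₀) * x⁻¹ = (x * g) * k₀ * (x * g)⁻¹ := by
      rw [MulAut.conj_apply]; group
    rwa [e]

private lemma exists_compact_cover [LocallyCompactSpace G] (M : Subgroup G) [M.Normal]
    {C : Set (G ⧸ M)} (hC : IsCompact C) :
    ∃ D : Set G, IsCompact D ∧ C ⊆ (QuotientGroup.mk' M) '' D := by
  have hsurj : Surjective (QuotientGroup.mk' M) := QuotientGroup.mk'_surjective M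
  set s : G ⧸ M → G := surjInv hsurj with hs
  have hVe : ∀ c : G ⧸ M, ∃ V : Set G, IsCompact V ∧ V ∈ nhds (s c) := by
    intro c; obtain ⟨V, h1, h2⟩ := exists_compact_mem_nhds (s c); exact ⟨V, h1, h2⟩
  choose V hVc hVn using hVe
  have hUn : ∀ c ∈ C, (QuotientGroup.mk' M) '' V c ∈ nhds c := by
    intro c _
    have h1 := (QuotientGroup.isOpenMap_coe (N := M)).image_mem_nhds (hVn c)
    have h2 : ((s c : G) : G ⧸ M) = c := surjInv_eq hsurj c
    rw [h2] at h1
    rwa [QuotientGroup.coe_mk']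
  obtain ⟨t, _, hcov⟩ := hC.elim_nhds_subcover (fun c => (QuotientGroup.mk' M) '' V c) hUn
  refine ⟨⋃ c ∈ t, V c, t.finite_toSet.isCompact_biUnion (fun c _ => hVc c), ?_⟩
  rw [Set.image_iUnion₂]
  exact hcov

private lemma isCompact_preimage_mk [LocallyCompactSpace G] [T2Space G] (M : Subgroup G) [M.Normal]
    (hMc : IsCompact (M : Set G)) {C : Set (G ⧸ M)} (hC : IsCompact C) (hCcl : IsClosed C) :
    IsCompact ((QuotientGroup.mk' M) ⁻¹' C) := by
  obtain ⟨D, hDc, hCD⟩ := exists_compact_cover M hC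
  have hcont : Continuous (QuotientGroup.mk' M) := by
    rw [QuotientGroup.coe_mk']; exact QuotientGroup.continuous_mk
  refine IsCompact.of_isClosed_subset (hDc.mul hMc) (hCcl.preimage hcont) ?_
  intro x hx
  obtain ⟨d, hd, hdx⟩ := hCD hx
  have hm : d⁻¹ * x ∈ M := by
    rw [QuotientGroup.mk'_apply, QuotientGroup.mk'_apply] at hdx
    exact QuotientGroup.eq.mp hdx
  exact ⟨d, hd, d⁻¹ * x, hm, by simp⟩

end Helpers

section Helpers2

variable {G : Type*} [Group G] [TopologicalSpace G] [IsTopologicalGroup G]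

private lemma conj_set_eq' (K : Subgroup G) (g : G) {S : Set G} (hS : IsClosed S) :
    {x : G | ∀ k ∈ (K.topologicalClosure).map (MulAut.conj g).toMonoidHom, x * k * x⁻¹ ∈ S}
      = (fun x => x * g) ⁻¹' {x : G | ∀ k ∈ K, x * k * x⁻¹ ∈ S} := by
  ext x
  simp only [Set.mem_setOf_eq, Set.mem_preimage]
  exact conj_forall_iff hS x g

private lemma conj_set_eq (K : Subgroup G) (g : G) {S₁ S₂ : Set G} (h₁ : IsClosed S₁)
    (h₂ : IsClosed S₂) :
    {x : G | (∀ k ∈ (K.topologicalClosure).map (MulAut.conj g).toMonoidHom, x * k * x⁻¹ ∈ S₁) ∧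
        ¬ ∀ k ∈ (K.topologicalClosure).map (MulAut.conj g).toMonoidHom, x * k * x⁻¹ ∈ S₂}
      = (fun x => x * g) ⁻¹'
        {x : G | (∀ k ∈ K, x * k * x⁻¹ ∈ S₁) ∧ ¬ ∀ k ∈ K, x * k * x⁻¹ ∈ S₂} := by
  ext x
  simp only [Set.mem_setOf_eq, Set.mem_preimage]
  rw [conj_forall_iff h₁ x g, conj_forall_iff h₂ x g]

end Helpers2

/-- Lemma 4.3(i),(ii): basic properties of TMS pairs: the subgroup is infinite with
compact closure (hence nondiscrete), conjugates of its closure again form TMS pairs, and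
TMS pairs pass to quotients by compact normal subgroups. -/
theorem tms_pair_basic {G : Type*} [Group G] [TopologicalSpace G] [IsTopologicalGroup G]
    [LocallyCompactSpace G] [TotallyDisconnectedSpace G] [T2Space G]
    (K U : Subgroup G) (hKU : IsTMSPair K U)
    (M : Subgroup G) [M.Normal] (hMc : IsCompact (M : Set G)) :
    ((K : Set G).Infinite ∧ IsCompact (closure (K : Set G)) ∧ ¬ DiscreteTopology K ∧
      (∀ g : G, IsTMSPair ((K.topologicalClosure).map (MulAut.conj g).toMonoidHom) U)) ∧
    IsTMSPair (K.map (QuotientGroup.mk' M)) (U.map (QuotientGroup.mk' M)) := by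
  obtain ⟨hUc, hUo, h3, h4, h5⟩ := hKU
  -- K is infinite
  have hKinf : (K : Set G).Infinite := by
    have h0 := h5 ⊥ (by infer_instance)
      (by rw [Subgroup.coe_bot]; exact isCompact_singleton)
    rw [Subgroup.relIndex_bot_left] at h0
    rw [← Set.infinite_coe_iff]
    have hne : Nonempty K := ⟨1, K.one_mem⟩
    rcases Nat.card_eq_zero.mp h0 with h | h
    · exact absurd hne (not_nonempty_iff.mpr h)
    · exact h
  -- closure of K is compact
  have hAne : {g : G | ∀ k ∈ K, g * k * g⁻¹ ∈ (U : Set G)}.Nonempty := by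
    by_contra hne
    rw [Set.not_nonempty_iff_eq_empty] at hne
    exact h4 (by rw [hne, closure_empty]; exact isCompact_empty)
  obtain ⟨a, ha⟩ := hAne
  have hclK : IsCompact (closure (K : Set G)) := by
    have hsub : (K : Set G) ⊆ (fun k => a * k * a⁻¹) ⁻¹' (U : Set G) := fun k hk => ha k hk
    have hcl : closure (K : Set G) ⊆ (fun k => a * k * a⁻¹) ⁻¹' (U : Set G) :=
      closure_minimal hsub (hUc.isClosed.preimage (by fun_prop))
    have hcpt : IsCompact ((fun k : G => a * k * a⁻¹) ⁻¹' (U : Set G)) := by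
      rw [show (fun k : G => a * k * a⁻¹)
          = ⇑((Homeomorph.mulLeft a).trans (Homeomorph.mulRight a⁻¹)) from rfl,
        Homeomorph.isCompact_preimage]
      exact hUc
    exact hcpt.of_isClosed_subset isClosed_closure hcl
  -- K is not discrete
  have hnd : ¬ DiscreteTopology K := by
    intro hd
    have h1 : IsOpen ({(1 : K)} : Set K) := isOpen_discrete _
    rw [isOpen_induced_iff] at h1
    obtain ⟨V, hVo, hV⟩ := h1
    have hKV : ∀ y : G, y ∈ K → y ∈ V → y = 1 := by
      intro y hy hyV
      have hmem : (⟨y, hy⟩ : K) ∈ (Subtype.val ⁻¹' V : Set K) := hyV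
      rw [hV] at hmem
      exact congrArg Subtype.val hmem
    have hV1 : V ∈ nhds (1 : G) := hVo.mem_nhds (by
      have h1m : (1 : K) ∈ ({(1 : K)} : Set K) := rfl
      rw [← hV] at h1m; exact h1m)
    obtain ⟨W, hW1, hWV⟩ := exists_nhds_one_split hV1
    set W' : Set G := W ∩ W⁻¹ with hW'def
    have hW'1 : W' ∈ nhds (1 : G) := Filter.inter_mem hW1 (inv_mem_nhds_one G hW1)
    obtain ⟨x, hxC, hacc⟩ := hKinf.exists_accPt_of_subset_isCompact hclK subset_closure
    rw [accPt_iff_nhds] at hacc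
    have hcontx : ContinuousAt (fun y : G => x⁻¹ * y) x := by fun_prop
    have hfx : x⁻¹ * x = 1 := inv_mul_cancel x
    have hU1 : (fun y : G => x⁻¹ * y) ⁻¹' W' ∈ nhds x := by
      have ht : Filter.Tendsto (fun y : G => x⁻¹ * y) (nhds x) (nhds (x⁻¹ * x)) := hcontx
      rw [hfx] at ht
      exact ht hW'1
    obtain ⟨k₁, ⟨hk₁U, hk₁K⟩, hk₁x⟩ := hacc _ hU1
    have hU2 : ((fun y : G => x⁻¹ * y) ⁻¹' W') ∩ {k₁}ᶜ ∈ nhds x :=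
      Filter.inter_mem hU1 (isOpen_compl_singleton.mem_nhds (Ne.symm hk₁x))
    obtain ⟨k₂, ⟨⟨hk₂U, hk₂ne⟩, hk₂K⟩, hk₂x⟩ := hacc _ hU2
    have ha1 : x⁻¹ * k₁ ∈ W' := hk₁U
    have hb1 : x⁻¹ * k₂ ∈ W' := hk₂U
    have hainv : (x⁻¹ * k₁)⁻¹ ∈ W := Set.mem_inv.mp ha1.2
    have hkV : (x⁻¹ * k₁)⁻¹ * (x⁻¹ * k₂) ∈ V := hWV _ hainv _ hb1.1
    have heq : (x⁻¹ * k₁)⁻¹ * (x⁻¹ * k₂) = k₁⁻¹ * k₂ := by group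
    rw [heq] at hkV
    have hkK : k₁⁻¹ * k₂ ∈ K := K.mul_mem (K.inv_mem hk₁K) hk₂K
    have := hKV _ hkK hkV
    have : k₂ = k₁ := by
      have h' : k₁ * (k₁⁻¹ * k₂) = k₁ * 1 := by rw [this]
      rwa [mul_inv_cancel_left, mul_one] at h'
    exact hk₂ne this
  -- conjugates of the closure
  have hconj : ∀ g : G, IsTMSPair ((K.topologicalClosure).map (MulAut.conj g).toMonoidHom) U := by
    intro g
    refine ⟨hUc, hUo, ?_, ?_, ?_⟩
    · intro N hN hNc h
      have hUN : IsClosed ((U : Set G) * (N : Set G)) := (hUc.mul hNc).isClosed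
      have hhU : IsClosed ((fun x => h * x * h⁻¹) '' (U : Set G)) :=
        (hUc.image (by fun_prop)).isClosed
      rw [conj_set_eq K g hUN hhU,
        show (fun x : G => x * g) = ⇑(Homeomorph.mulRight g) from rfl,
        ← Homeomorph.preimage_closure]
      exact (Homeomorph.mulRight g).isCompact_preimage.mpr (h3 N hN hNc h)
    · intro hcpt
      apply h4
      rw [conj_set_eq' K g hUc.isClosed,
        show (fun x : G => x * g) = ⇑(Homeomorph.mulRight g) from rfl,
        ← Homeomorph.preimage_closure] at hcpt
      exact (Homeomorph.mulRight g).isCompact_preimage.mp hcpt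
    · intro N hN hNc
      have hcomap : N.comap (MulAut.conj g).toMonoidHom = N := by
        ext x
        simp only [Subgroup.mem_comap, MulEquiv.coe_toMonoidHom, MulAut.conj_apply]
        constructor
        · intro hx
          have h' := hN.conj_mem _ hx g⁻¹
          have e : g⁻¹ * (g * x * g⁻¹) * g⁻¹⁻¹ = x := by group
          rwa [e] at h'
        · intro hx
          exact hN.conj_mem x hx g
      rw [← Subgroup.relIndex_comap, hcomap]
      exact Subgroup.relIndex_eq_zero_of_le_right K.le_topologicalClosure (h5 N hN hNc)
  refine ⟨⟨hKinf, hclK, hnd, hconj⟩, ?_⟩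
  -- quotient part
  haveI : IsClosed (M : Set G) := hMc.isClosed
  have hπc : Continuous ⇑(QuotientGroup.mk' M) := by
    rw [QuotientGroup.coe_mk']; exact QuotientGroup.continuous_mk
  have hπs : Function.Surjective ⇑(QuotientGroup.mk' M) := QuotientGroup.mk'_surjective M
  have hπo : IsOpenMap ⇑(QuotientGroup.mk' M) := by
    rw [QuotientGroup.coe_mk']; exact QuotientGroup.isOpenMap_coe
  refine ⟨?_, ?_, ?_, ?_, ?_⟩
  · rw [Subgroup.coe_map]; exact hUc.image hπc
  · rw [Subgroup.coe_map]; exact hπo _ hUo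
  · intro Nb hNb hNbc hb
    obtain ⟨h, rfl⟩ := hπs hb
    haveI hNn : (Nb.comap (QuotientGroup.mk' M)).Normal := hNb.comap _
    have hNcl : IsCompact ((Nb.comap (QuotientGroup.mk' M)) : Set G) := by
      rw [Subgroup.coe_comap]
      exact isCompact_preimage_mk M hMc hNbc hNbc.isClosed
    have hMN : M ≤ Nb.comap (QuotientGroup.mk' M) := by
      intro m hm
      rw [Subgroup.mem_comap]
      have : QuotientGroup.mk' M m = 1 := by
        rw [QuotientGroup.mk'_apply]
        exact (QuotientGroup.eq_one_iff m).mpr hm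
      rw [this]; exact Nb.one_mem
    have hT := h3 _ hNn hNcl h
    refine IsCompact.of_isClosed_subset (hT.image hπc) isClosed_closure
      (closure_minimal ?_ ((hT.image hπc).isClosed))
    intro xb hxb
    obtain ⟨x, rfl⟩ := hπs xb
    obtain ⟨hx1, hx2⟩ := hxb
    refine ⟨x, subset_closure ⟨?_, ?_⟩, rfl⟩
    · intro k hk
      have hmem := hx1 (QuotientGroup.mk' M k) (Subgroup.mem_map.mpr ⟨k, hk, rfl⟩)
      rw [← map_inv, ← map_mul, ← map_mul, Subgroup.coe_map,
        show (Nb : Set (G ⧸ M)) = ⇑(QuotientGroup.mk' M) '' ((Nb.comap (QuotientGroup.mk' M)) : Set G) by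
          rw [← Subgroup.coe_map]
          rw [Subgroup.map_comap_eq_self_of_surjective hπs],
        ← Set.image_mul] at hmem
      obtain ⟨w, hw, hwx⟩ := hmem
      have hm : w⁻¹ * (x * k * x⁻¹) ∈ M := by
        rw [QuotientGroup.mk'_apply, QuotientGroup.mk'_apply] at hwx
        exact QuotientGroup.eq.mp hwx
      obtain ⟨u, hu, n, hn, rfl⟩ := Set.mem_mul.mp hw
      refine Set.mem_mul.mpr ⟨u, hu, n * ((u * n)⁻¹ * (x * k * x⁻¹)),
        (Nb.comap (QuotientGroup.mk' M)).mul_mem hn (hMN hm), ?_⟩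
      group
    · intro hcon
      apply hx2
      intro kb hkb
      obtain ⟨k, hk, rfl⟩ := Subgroup.mem_map.mp hkb
      obtain ⟨u, hu, hux⟩ := hcon k hk
      refine ⟨QuotientGroup.mk' M u, ?_, ?_⟩
      · rw [Subgroup.coe_map]; exact ⟨u, hu, rfl⟩
      · show QuotientGroup.mk' M h * QuotientGroup.mk' M u * (QuotientGroup.mk' M h)⁻¹ = _
        rw [← map_inv, ← map_mul, ← map_mul, ← map_inv, ← map_mul, ← map_mul]
        exact congrArg _ hux
  · intro hcpt
    apply h4
    have hpre := isCompact_preimage_mk M hMc hcpt isClosed_closure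
    refine IsCompact.of_isClosed_subset hpre isClosed_closure
      (closure_minimal ?_ hpre.isClosed)
    intro x hx
    refine Set.mem_preimage.mpr (subset_closure ?_)
    intro kb hkb
    obtain ⟨k, hk, rfl⟩ := Subgroup.mem_map.mp hkb
    rw [Subgroup.coe_map]
    exact ⟨x * k * x⁻¹, hx k hk, by rw [map_mul, map_mul, map_inv]⟩
  · intro Nb hNb hNbc
    haveI hNn : (Nb.comap (QuotientGroup.mk' M)).Normal := hNb.comap _
    have hNcl : IsCompact ((Nb.comap (QuotientGroup.mk' M)) : Set G) := by
      rw [Subgroup.coe_comap]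
      exact isCompact_preimage_mk M hMc hNbc hNbc.isClosed
    rw [← Subgroup.relIndex_comap]
    exact h5 _ hNn hNcl
end

section
/- Let G be a t.d.l.c. group, let (K,U) be a TMS pair of G, and let V and W be compact open subgroups of G such that V is contained in some G-conjugate of UN for some compact normal subgroup N of G, and W contains ⋂_{g ∈ G} gUg^{-1}. Then the set of g ∈ G such that gKg^{-1} ≤ V but gKg^{-1} is not contained in W is compact and open in G, while the set of g ∈ G such that gKg^{-1} ≤ W does not have compact closure. -/
open scoped Pointwise

section Helpers
variable {G : Type*} [Group G] [TopologicalSpace G] [IsTopologicalGroup G] [T2Space G]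

omit [T2Space G] in
lemma conjSet_closed (K : Subgroup G) (V : Subgroup G) (hV : IsClosed (V : Set G)) :
    IsClosed {g : G | ∀ k ∈ K, g * k * g⁻¹ ∈ V} := by
  have : {g : G | ∀ k ∈ K, g * k * g⁻¹ ∈ V} =
      ⋂ k ∈ (K : Set G), (fun g => g * k * g⁻¹) ⁻¹' (V : Set G) := by
    ext g; simp [Set.mem_iInter]
  rw [this]
  exact isClosed_biInter fun k _ => hV.preimage (by fun_prop)

omit [T2Space G] in
lemma conjSet_open (K : Subgroup G) (V : Subgroup G) (hV : IsOpen (V : Set G)) :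
    IsOpen {g : G | ∀ k ∈ K, g * k * g⁻¹ ∈ V} := by
  rw [isOpen_iff_forall_mem_open]
  intro g hg
  refine ⟨(fun v => v * g) '' (V : Set G), ?_, isOpenMap_mul_right g _ hV,
    ⟨1, V.one_mem, one_mul g⟩⟩
  rintro _ ⟨v, hv, rfl⟩ k hk
  have h1 : (v * g) * k * (v * g)⁻¹ = v * (g * k * g⁻¹) * v⁻¹ := by group
  rw [h1]
  exact V.mul_mem (V.mul_mem hv (hg k hk)) (V.inv_mem hv)

/-- If W contains the intersection of all conjugates of the compact subgroup U,
then W contains a finite intersection of conjugates of U. -/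
lemma finite_conj_inter (U W : Subgroup G) (hUc : IsCompact (U : Set G))
    (hWo : IsOpen (W : Set G))
    (hW : ∀ x : G, (∀ g : G, g⁻¹ * x * g ∈ U) → x ∈ W) :
    ∃ t : Finset G, ∀ x : G, x ∉ W →
      ∃ a ∈ t, x ∉ (fun y => a * y * a⁻¹) '' (U : Set G) := by
  classical
  have hUcl : IsClosed (U : Set G) := hUc.isClosed
  have hC : IsCompact ((U : Set G) ∩ (W : Set G)ᶜ) :=
    hUc.inter_right hWo.isClosed_compl
  have hZcl : ∀ a : G, IsClosed ((fun x => a⁻¹ * x * a) ⁻¹' (U : Set G)) :=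
    fun a => hUcl.preimage (by fun_prop)
  have hempty : ((U : Set G) ∩ (W : Set G)ᶜ) ∩
      ⋂ a : G, (fun x => a⁻¹ * x * a) ⁻¹' (U : Set G) = ∅ := by
    ext x
    simp only [Set.mem_inter_iff, Set.mem_iInter, Set.mem_compl_iff, Set.mem_preimage,
      Set.mem_empty_iff_false, iff_false]
    rintro ⟨⟨-, hxw⟩, hall⟩
    exact hxw (hW x hall)
  obtain ⟨t, ht⟩ := hC.elim_finite_subfamily_closed _ hZcl hempty
  refine ⟨insert (1 : G) t, fun x hxw => ?_⟩
  by_contra hcon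
  push_neg at hcon
  have hxU : x ∈ (U : Set G) := by
    obtain ⟨y, hy, hxy⟩ := hcon 1 (Finset.mem_insert_self 1 t)
    have hyx : y = x := by simpa using hxy
    exact hyx ▸ hy
  have hmem : x ∈ ((U : Set G) ∩ (W : Set G)ᶜ) ∩
      ⋂ a ∈ t, (fun x => a⁻¹ * x * a) ⁻¹' (U : Set G) := by
    refine ⟨⟨hxU, hxw⟩, ?_⟩
    simp only [Set.mem_iInter, Set.mem_preimage]
    intro a ha
    obtain ⟨y, hy, hxy⟩ := hcon a (Finset.mem_insert_of_mem ha)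
    have hyx : a⁻¹ * x * a = y := by rw [← hxy]; group
    rw [hyx]; exact hy
  rw [ht] at hmem
  exact hmem

end Helpers

/-- Lemma 4.3(iii): given a TMS pair (K,U), a compact open subgroup V contained in a
conjugate of UN (N compact normal) and a compact open subgroup W containing
⋂_{g ∈ G} gUg⁻¹, the set of g with gKg⁻¹ ≤ V but gKg⁻¹ ⊄ W is compact open, while the
set of g with gKg⁻¹ ≤ W does not have compact closure. -/
theorem tms_pair_transfer {G : Type*} [Group G] [TopologicalSpace G] [IsTopologicalGroup G]
    [LocallyCompactSpace G] [TotallyDisconnectedSpace G] [T2Space G]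
    (K U V W : Subgroup G) (hKU : IsTMSPair K U)
    (hVc : IsCompact (V : Set G)) (hVo : IsOpen (V : Set G))
    (hWc : IsCompact (W : Set G)) (hWo : IsOpen (W : Set G))
    (hV : ∃ N : Subgroup G, N.Normal ∧ IsCompact (N : Set G) ∧
      ∃ h : G, (V : Set G) ⊆ (fun x => h * x * h⁻¹) '' ((U : Set G) * (N : Set G)))
    (hW : ∀ x : G, (∀ g : G, g⁻¹ * x * g ∈ U) → x ∈ W) :
    IsCompact {g : G | (∀ k ∈ K, g * k * g⁻¹ ∈ V) ∧ ¬ ∀ k ∈ K, g * k * g⁻¹ ∈ W} ∧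
    IsOpen {g : G | (∀ k ∈ K, g * k * g⁻¹ ∈ V) ∧ ¬ ∀ k ∈ K, g * k * g⁻¹ ∈ W} ∧
    ¬ IsCompact (closure {g : G | ∀ k ∈ K, g * k * g⁻¹ ∈ W}) := by
  obtain ⟨hUc, hUo, h3, h4, -⟩ := hKU
  obtain ⟨N, hNn, hNc, h, hVsub⟩ := hV
  obtain ⟨t, hkey⟩ := finite_conj_inter U W hUc hWo hW
  set A := {g : G | ∀ k ∈ K, g * k * g⁻¹ ∈ V} with hA
  set B := {g : G | ∀ k ∈ K, g * k * g⁻¹ ∈ W} with hB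
  have hAcl : IsClosed A := conjSet_closed K V hVc.isClosed
  have hAop : IsOpen A := conjSet_open K V hVo
  have hBcl : IsClosed B := conjSet_closed K W hWc.isClosed
  have hBop : IsOpen B := conjSet_open K W hWo
  have hSeq : {g : G | (∀ k ∈ K, g * k * g⁻¹ ∈ V) ∧ ¬ ∀ k ∈ K, g * k * g⁻¹ ∈ W}
      = A ∩ Bᶜ := rfl
  have hScl : IsClosed (A ∩ Bᶜ) := hAcl.inter hBop.isClosed_compl
  refine ⟨?_, ?_, ?_⟩
  · -- compactness
    rw [hSeq]
    set Xs : G → Set G := fun h' => {g : G |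
      (∀ k ∈ K, g * k * g⁻¹ ∈ (U : Set G) * (N : Set G)) ∧
      ¬ ∀ k ∈ K, g * k * g⁻¹ ∈ (fun x => h' * x * h'⁻¹) '' (U : Set G)} with hXs
    have hXc : ∀ h' : G, IsCompact (closure (Xs h')) := h3 N hNn hNc
    have hcover : A ∩ Bᶜ ⊆
        ⋃ a ∈ t, (fun x => h * x) '' closure (Xs (h⁻¹ * a)) := by
      rintro g ⟨hgA, hgB⟩
      have hgB' : ∃ k ∈ K, g * k * g⁻¹ ∉ W := by
        by_contra hcon; push_neg at hcon; exact hgB hcon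
      obtain ⟨k0, hk0, hk0W⟩ := hgB'
      obtain ⟨a, ha, hnot⟩ := hkey _ hk0W
      refine Set.mem_biUnion ha ⟨h⁻¹ * g, subset_closure ⟨?_, ?_⟩, by group⟩
      · intro k hk
        obtain ⟨y, hy, hyy⟩ := hVsub (hgA k hk)
        have h1 : (h⁻¹ * g) * k * (h⁻¹ * g)⁻¹ = h⁻¹ * (g * k * g⁻¹) * h := by group
        rw [h1, ← hyy]
        have h2 : h⁻¹ * (h * y * h⁻¹) * h = y := by group
        rw [h2]; exact hy
      · intro hall
        obtain ⟨u, hu, huu⟩ := hall k0 hk0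
        refine hnot ⟨u, hu, ?_⟩
        have h1 : (h⁻¹ * g) * k0 * (h⁻¹ * g)⁻¹ = h⁻¹ * (g * k0 * g⁻¹) * h := by group
        have h2 : (h⁻¹ * a) * u * (h⁻¹ * a)⁻¹ = h⁻¹ * (a * u * a⁻¹) * h := by group
        rw [h1] at huu
        have huu2 : h⁻¹ * (a * u * a⁻¹) * h = h⁻¹ * (g * k0 * g⁻¹) * h := by
          rw [← h2]; exact huu
        show a * u * a⁻¹ = g * k0 * g⁻¹
        exact mul_left_cancel (mul_right_cancel huu2)
    have hbig : IsCompact (⋃ a ∈ t,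
        (fun x => h * x) '' closure (Xs (h⁻¹ * a))) :=
      t.isCompact_biUnion
        (fun a _ => (hXc (h⁻¹ * a)).image (continuous_mul_left h))
    exact hbig.of_isClosed_subset hScl hcover
  · rw [hSeq]; exact hAop.inter hBcl.isOpen_compl
  · intro hc
    have hbotc : IsCompact (((⊥ : Subgroup G) : Set G)) := by
      rw [Subgroup.coe_bot]; exact isCompact_singleton
    set Ys : G → Set G := fun h' => {g : G |
      (∀ k ∈ K, g * k * g⁻¹ ∈ (U : Set G) * ((⊥ : Subgroup G) : Set G)) ∧
      ¬ ∀ k ∈ K, g * k * g⁻¹ ∈ (fun x => h' * x * h'⁻¹) '' (U : Set G)} with hYs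
    have hYc : ∀ h' : G, IsCompact (closure (Ys h')) :=
      h3 ⊥ inferInstance hbotc
    set R := closure B ∪ ⋃ a ∈ t, closure (Ys a) with hR
    have hRcl : IsClosed R :=
      isClosed_closure.union (t.finite_toSet.isClosed_biUnion (fun a _ => isClosed_closure))
    have hRc : IsCompact R :=
      hc.union (t.isCompact_biUnion (fun a _ => hYc a))
    have hsub : {g : G | ∀ k ∈ K, g * k * g⁻¹ ∈ U} ⊆ R := by
      intro g hg
      by_cases hgB : ∀ k ∈ K, g * k * g⁻¹ ∈ W
      · exact Or.inl (subset_closure hgB)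
      · push_neg at hgB
        obtain ⟨k0, hk0, hk0W⟩ := hgB
        obtain ⟨a, ha, hnot⟩ := hkey _ hk0W
        refine Or.inr (Set.mem_biUnion ha (subset_closure ⟨?_, ?_⟩))
        · intro k hk
          rw [Subgroup.coe_bot]
          exact ⟨g * k * g⁻¹, hg k hk, 1, rfl, mul_one _⟩
        · intro hall
          exact hnot (hall k0 hk0)
    exact h4 (hRc.of_isClosed_subset isClosed_closure (closure_minimal hsub hRcl))
end
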